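/- arXiv:2010.04102 — 8 statements merged into one kernel-verified Lean document; each statement's English description precedes it below -/
import Mathlib

section
/- Consider the linear delay system x_i'(t) = −d_i(t)x_i(t) + Σ_{j=1}^n L_ij(t)(x_j)_t, i = 1,…,n, t > 0, under the stated continuity assumptions on the d_i and L_ij. If hypothesis (H2) holds and each a_ij(t) = ‖L_ij(t)‖ is bounded on [0,∞), then the system is exponentially asymptotically stable: there exist k > 0 and γ > 0 such that for every t₀ ≥ 0, every solution x of the system on [t₀−τ,∞) satisfies |x(t)| ≤ k·e^{−γ(t−t₀)}·‖x_{t₀}‖ for all t ≥ t₀. -/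
open scoped Topology

/-- The segment `x_t ∈ C([-τ,0];E)` of a continuous function `x : ℝ → E`,
given by `x_t(θ) = x(t+θ)`. -/
noncomputable def seg (τ : ℝ) {E : Type*} [TopologicalSpace E] (x : C(ℝ, E)) (t : ℝ) :
    C(Set.Icc (-τ) (0 : ℝ), E) :=
  x.comp ⟨fun θ => t + θ.1, continuous_const.add continuous_subtype_val⟩

/-- The `j`-th component of a continuous `ℝⁿ`-valued function, as a continuous map. -/
noncomputable def proj {n : ℕ} (x : C(ℝ, Fin n → ℝ)) (j : Fin n) : C(ℝ, ℝ) :=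
  ⟨fun s => x s j, (continuous_apply j).comp x.continuous⟩

set_option maxHeartbeats 1000000 in
/-- Core comparison lemma: first-crossing argument. -/
lemma core_lemma
    (n : ℕ) (τ : ℝ) (hτ : 0 ≤ τ)
    (d : Fin n → ℝ → ℝ)
    (L : Fin n → Fin n → ℝ → (C(Set.Icc (-τ) (0 : ℝ), ℝ) →L[ℝ] ℝ))
    (t₀ : ℝ) (x : C(ℝ, Fin n → ℝ))
    (hx : ∀ i, ∀ t > t₀, HasDerivAt (fun s => x s i)
          (-(d i t) * x t i + ∑ j, L i j t (seg τ (proj x j) t)) t)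
    (t₁ : ℝ) (ht₁ : t₀ ≤ t₁)
    (c : Fin n → ℝ) (hc : ∀ i, 0 < c i)
    (ρ E : ℝ)
    (hEρ : ∀ u ∈ Set.Icc (0:ℝ) τ, Real.exp (-ρ*u) ≤ E)
    (ha : ∀ i, ∀ s ∈ Set.Icc (t₁ - τ) t₁, |x s i| < c i)
    (hb : ∀ t ≥ t₁, ∀ i, -(d i t) * c i + E * ∑ j, ‖L i j t‖ * c j < ρ * c i) :
    ∀ t ≥ t₁, ∀ i, |x t i| < c i * Real.exp (ρ * (t - t₁)) := by
  by_contra hcon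
  push_neg at hcon
  obtain ⟨t₂, ht₂, i₂, hi₂⟩ := hcon
  set B : Fin n → ℝ → ℝ := fun i t => c i * Real.exp (ρ * (t - t₁)) with hB
  have hBcont : ∀ i, Continuous (B i) := fun i => by
    exact continuous_const.mul (Real.continuous_exp.comp (by continuity))
  have hxcont : ∀ i, Continuous (fun s => |x s i|) := fun i =>
    ((continuous_apply i).comp x.continuous).abs
  set S : Set ℝ := {t | t₁ ≤ t ∧ ∃ i, B i t ≤ |x t i|} with hS
  have hSne : S.Nonempty := ⟨t₂, ht₂, i₂, hi₂⟩
  have hSbdd : BddBelow S := ⟨t₁, fun t ht => ht.1⟩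
  have hSclosed : IsClosed S := by
    have : S = Set.Ici t₁ ∩ ⋃ i, {t | B i t ≤ |x t i|} := by
      ext t; simp [hS, Set.mem_setOf_eq, Set.mem_iUnion]
    rw [this]
    exact isClosed_Ici.inter (isClosed_iUnion_of_finite fun i =>
      isClosed_le (hBcont i) (hxcont i))
  set ts := sInf S with hts
  have htsS : ts ∈ S := hSclosed.csInf_mem hSne hSbdd
  obtain ⟨hts1, i, hi⟩ := htsS
  -- t₁ < ts
  have htslt : t₁ < ts := by
    rcases lt_or_eq_of_le hts1 with h | h
    · exact h
    · exfalso
      have := ha i t₁ ⟨by linarith, le_refl _⟩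
      rw [← h] at hi
      simp only [hB, sub_self, mul_zero, Real.exp_zero, mul_one] at hi
      linarith
  -- before ts, strict
  have hbefore : ∀ s, t₁ ≤ s → s < ts → ∀ j, |x s j| < B j s := by
    intro s hs1 hs2 j
    by_contra h
    push_neg at h
    have : s ∈ S := ⟨hs1, j, h⟩
    exact absurd (csInf_le hSbdd this) (not_le.mpr hs2)
  -- at ts, ≤ for all j
  have hat : ∀ j, |x ts j| ≤ B j ts := by
    intro j
    have hne : (𝓝[<] ts).NeBot := inferInstance
    have hev : ∀ᶠ s in 𝓝[<] ts, |x s j| ≤ B j s := by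
      filter_upwards [Ioo_mem_nhdsLT_of_mem (Set.mem_Ioc.mpr ⟨htslt, le_refl _⟩)] with s hs
      exact le_of_lt (hbefore s (le_of_lt hs.1) hs.2 j)
    have h1 : Filter.Tendsto (fun s => |x s j|) (𝓝[<] ts) (𝓝 (|x ts j|)) :=
      ((hxcont j).tendsto ts).mono_left nhdsWithin_le_nhds
    have h2 : Filter.Tendsto (B j) (𝓝[<] ts) (𝓝 (B j ts)) :=
      ((hBcont j).tendsto ts).mono_left nhdsWithin_le_nhds
    exact le_of_tendsto_of_tendsto h1 h2 hev
  have heq : |x ts i| = B i ts := le_antisymm (hat i) hi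
  -- bound the segment norms
  have hBpos : ∀ j t, 0 < B j t := fun j t => mul_pos (hc j) (Real.exp_pos _)
  have hE1 : (1:ℝ) ≤ E := by
    have := hEρ 0 ⟨le_refl _, hτ⟩
    simpa using this
  have hsegle : ∀ j, ‖seg τ (proj x j) ts‖ ≤ c j * E * Real.exp (ρ * (ts - t₁)) := by
    intro j
    apply (ContinuousMap.norm_le _ ?_).mpr
    · rintro ⟨θ, hθ⟩
      have hθ1 : -τ ≤ θ := hθ.1
      have hθ2 : θ ≤ 0 := hθ.2
      have hval : (seg τ (proj x j) ts) ⟨θ, hθ⟩ = x (ts + θ) j := rfl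
      rw [hval, Real.norm_eq_abs]
      set s := ts + θ with hsdef
      have hsle : s ≤ ts := by simp [hsdef]; linarith
      have hsge : ts - τ ≤ s := by simp [hsdef]; linarith
      rcases le_or_gt t₁ s with hcase | hcase
      · have h1 : |x s j| ≤ B j s := by
          rcases lt_or_eq_of_le hsle with h | h
          · exact le_of_lt (hbefore s hcase h j)
          · rw [h]; exact hat j
        have h2 : B j s ≤ c j * E * Real.exp (ρ * (ts - t₁)) := by
          have hexp : Real.exp (ρ * (s - t₁)) = Real.exp (ρ * (ts - t₁)) * Real.exp (-ρ * (ts - s)) := by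
            rw [← Real.exp_add]; ring_nf
          have hu : Real.exp (-ρ * (ts - s)) ≤ E := hEρ (ts - s) ⟨by linarith, by linarith⟩
          calc B j s = c j * (Real.exp (ρ * (ts - t₁)) * Real.exp (-ρ * (ts - s))) := by
                rw [hB]; simp only []; rw [hexp]
            _ ≤ c j * (Real.exp (ρ * (ts - t₁)) * E) := by
                apply mul_le_mul_of_nonneg_left _ (le_of_lt (hc j))
                exact mul_le_mul_of_nonneg_left hu (le_of_lt (Real.exp_pos _))
            _ = c j * E * Real.exp (ρ * (ts - t₁)) := by ring
        linarith
      · -- s < t₁, initial segment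
        have h1 : |x s j| < c j := ha j s ⟨by linarith, le_of_lt hcase⟩
        have h2 : (1:ℝ) ≤ E * Real.exp (ρ * (ts - t₁)) := by
          have hu : Real.exp (-ρ * (ts - t₁)) ≤ E := hEρ (ts - t₁) ⟨by linarith, by linarith⟩
          have hp : 0 < Real.exp (ρ * (ts - t₁)) := Real.exp_pos _
          have := mul_le_mul_of_nonneg_right hu (le_of_lt hp)
          rwa [← Real.exp_add, neg_mul, neg_add_cancel, Real.exp_zero] at this
        calc |x s j| ≤ c j := le_of_lt h1
          _ = c j * 1 := by ring
          _ ≤ c j * (E * Real.exp (ρ * (ts - t₁))) :=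
              mul_le_mul_of_nonneg_left h2 (le_of_lt (hc j))
          _ = c j * E * Real.exp (ρ * (ts - t₁)) := by ring
    · exact mul_nonneg (mul_nonneg (hc j).le (by linarith)) (Real.exp_pos _).le
  -- sign
  set σ : ℝ := if 0 ≤ x ts i then 1 else -1 with hσ
  have hσx : σ * x ts i = |x ts i| := by
    rcases le_or_gt 0 (x ts i) with h | h
    · rw [hσ, if_pos h, one_mul, abs_of_nonneg h]
    · rw [hσ, if_neg (not_le.mpr h), neg_one_mul, abs_of_neg h]
  have hσabs : |σ| = 1 := by rcases le_or_gt 0 (x ts i) with h | h <;> simp [hσ, h, not_le.mpr]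
  -- derivative of h := σ * x · i at ts
  have htsgt : t₀ < ts := lt_of_le_of_lt ht₁ htslt
  have hder : HasDerivAt (fun s => σ * x s i)
      (σ * (-(d i ts) * x ts i + ∑ j, L i j ts (seg τ (proj x j) ts))) ts :=
    (hx i ts htsgt).const_mul σ
  -- bound the derivative value
  set m := σ * (-(d i ts) * x ts i + ∑ j, L i j ts (seg τ (proj x j) ts)) with hm
  have hmlt : m < ρ * B i ts := by
    have h1 : σ * (-(d i ts) * x ts i) = -(d i ts) * B i ts := by
      rw [show σ * (-(d i ts) * x ts i) = -(d i ts) * (σ * x ts i) by ring, hσx, heq]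
    have h2 : σ * (∑ j, L i j ts (seg τ (proj x j) ts))
        ≤ ∑ j, ‖L i j ts‖ * (c j * E * Real.exp (ρ * (ts - t₁))) := by
      calc σ * (∑ j, L i j ts (seg τ (proj x j) ts))
          ≤ |σ * (∑ j, L i j ts (seg τ (proj x j) ts))| := le_abs_self _
        _ = |∑ j, L i j ts (seg τ (proj x j) ts)| := by rw [abs_mul, hσabs, one_mul]
        _ ≤ ∑ j, |L i j ts (seg τ (proj x j) ts)| := Finset.abs_sum_le_sum_abs _ _
        _ ≤ ∑ j, ‖L i j ts‖ * (c j * E * Real.exp (ρ * (ts - t₁))) := by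
            apply Finset.sum_le_sum
            intro j _
            calc |L i j ts (seg τ (proj x j) ts)|
                ≤ ‖L i j ts‖ * ‖seg τ (proj x j) ts‖ := (L i j ts).le_opNorm _
              _ ≤ ‖L i j ts‖ * (c j * E * Real.exp (ρ * (ts - t₁))) :=
                  mul_le_mul_of_nonneg_left (hsegle j) (L i j ts).opNorm_nonneg
    have h3 := hb ts (le_of_lt htslt) i
    have hepos : (0:ℝ) < Real.exp (ρ * (ts - t₁)) := Real.exp_pos _
    have key : ∑ j, ‖L i j ts‖ * (c j * E * Real.exp (ρ * (ts - t₁)))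
        = (E * ∑ j, ‖L i j ts‖ * c j) * Real.exp (ρ * (ts - t₁)) := by
      rw [Finset.mul_sum, Finset.sum_mul]
      exact Finset.sum_congr rfl (fun j _ => by ring)
    have hBval : B i ts = c i * Real.exp (ρ * (ts - t₁)) := rfl
    calc m = σ * (-(d i ts) * x ts i) + σ * (∑ j, L i j ts (seg τ (proj x j) ts)) := by
          rw [hm]; ring
      _ ≤ -(d i ts) * B i ts + (E * ∑ j, ‖L i j ts‖ * c j) * Real.exp (ρ * (ts - t₁)) := by
          rw [h1, ← key]; linarith
      _ = (-(d i ts) * c i + E * ∑ j, ‖L i j ts‖ * c j) * Real.exp (ρ * (ts - t₁)) := by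
          rw [hBval]; ring
      _ < (ρ * c i) * Real.exp (ρ * (ts - t₁)) := by
          exact mul_lt_mul_of_pos_right h3 hepos
      _ = ρ * B i ts := by rw [hBval]; ring
  -- derivative of B i at ts
  have hBder : HasDerivAt (B i) (ρ * B i ts) ts := by
    have h : HasDerivAt (fun s : ℝ => ρ * (s - t₁)) ρ ts := by
      simpa using ((hasDerivAt_id ts).sub_const t₁).const_mul ρ
    have := (h.exp).const_mul (c i)
    rw [show ρ * B i ts = c i * (Real.exp (ρ * (ts - t₁)) * ρ) by simp only [hB]; ring]
    exact this
  -- Δ := h - B, derivative negative, contradiction via slope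
  set Δ : ℝ → ℝ := fun s => σ * x s i - B i s with hΔdef
  have hΔder : HasDerivAt Δ (m - ρ * B i ts) ts := hder.sub hBder
  have hΔts : Δ ts = 0 := by rw [hΔdef]; simp only []; rw [hσx, heq]; ring
  have hΔneg : ∀ s, t₁ < s → s < ts → Δ s ≤ 0 := by
    intro s h1 h2
    have : σ * x s i ≤ |x s i| := by
      calc σ * x s i ≤ |σ * x s i| := le_abs_self _
        _ = |x s i| := by rw [abs_mul, hσabs, one_mul]
    have h3 := hbefore s (le_of_lt h1) h2 i
    simp only [hΔdef]
    linarith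
  -- slope argument
  have hW : HasDerivWithinAt Δ (m - ρ * B i ts) (Set.Iio ts) ts := hΔder.hasDerivWithinAt
  rw [hasDerivWithinAt_iff_tendsto_slope] at hW
  have hdiffeq : Set.Iio ts \ {ts} = Set.Iio ts := Set.diff_singleton_eq_self (by simp)
  rw [hdiffeq] at hW
  have hmneg : m - ρ * B i ts < 0 := by linarith
  have hev1 : ∀ᶠ y in 𝓝[<] ts, slope Δ ts y < 0 := hW.eventually_lt_const hmneg
  have hev2 : ∀ᶠ y in 𝓝[<] ts, y ∈ Set.Ioo t₁ ts :=
    Ioo_mem_nhdsLT_of_mem (Set.mem_Ioc.mpr ⟨htslt, le_refl _⟩)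
  obtain ⟨y, hy1, hy2⟩ := (hev1.and hev2).exists
  have hyslope : slope Δ ts y = Δ y / (y - ts) := by
    rw [slope_def_field, hΔts, sub_zero]
  rw [hyslope] at hy1
  have hyneg : y - ts < 0 := by linarith [hy2.2]
  have : Δ y > 0 := by
    by_contra h
    push_neg at h
    have : 0 ≤ Δ y / (y - ts) := div_nonneg_iff.mpr (Or.inr ⟨h, hyneg.le⟩)
    linarith
  linarith [hΔneg y hy2.1 hy2.2]

set_option maxHeartbeats 1000000 in
/-- Under (H1) and (H2), if all `a_ij(t) = ‖L_ij(t)‖` are bounded on `[0,∞)`, the linear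
delay system `x_i'(t) = -d_i(t) x_i(t) + ∑_j L_ij(t) (x_j)_t` is exponentially
asymptotically stable. -/
theorem linear_exp_stable_H2_bounded
    (n : ℕ) (hn : 1 ≤ n) (τ : ℝ) (hτ : 0 ≤ τ)
    (d : Fin n → ℝ → ℝ)
    (L : Fin n → Fin n → ℝ → (C(Set.Icc (-τ) (0 : ℝ), ℝ) →L[ℝ] ℝ))
    -- (H1): continuity of the data
    (hd_pos : ∀ i, ∀ t ≥ (0 : ℝ), 0 < d i t)
    (hd_cont : ∀ i, ContinuousOn (d i) (Set.Ici 0))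
    (hL_cont : ∀ i j, ContinuousOn (L i j) (Set.Ici (0 : ℝ)))
    -- (H2): ∃ v > 0, δ > 0 with (D(t) - A(t) - δ I) v ≥ 0 componentwise for t ≥ T
    (v : Fin n → ℝ) (hv : ∀ i, 0 < v i) (δ : ℝ) (hδ : 0 < δ) (T : ℝ) (hT : 0 ≤ T)
    (hH2 : ∀ t ≥ T, ∀ i, δ * v i ≤ d i t * v i - ∑ j, ‖L i j t‖ * v j)
    -- each a_ij(t) = ‖L_ij(t)‖ is bounded on [0,∞)
    (hbdd : ∀ i j, ∃ K, ∀ t ≥ (0 : ℝ), ‖L i j t‖ ≤ K) :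
    ∃ k > 0, ∃ γ > 0, ∀ t₀ ≥ (0 : ℝ), ∀ x : C(ℝ, Fin n → ℝ),
      (∀ i, ∀ t > t₀, HasDerivAt (fun s => x s i)
          (-(d i t) * x t i + ∑ j, L i j t (seg τ (proj x j) t)) t) →
      ∀ t ≥ t₀, ‖x t‖ ≤ k * Real.exp (-γ * (t - t₀)) * ‖seg τ x t₀‖ := by
  have hne : Nonempty (Fin n) := Fin.pos_iff_nonempty.mp hn
  choose K hK using hbdd
  have hK0 : ∀ i j, 0 ≤ K i j := fun i j => le_trans (L i j 0).opNorm_nonneg (hK i j 0 le_rfl)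
  -- constants
  set S : ℝ := ∑ i, ∑ j, K i j * v j with hSdef
  have hS0 : 0 ≤ S := Finset.sum_nonneg fun i _ => Finset.sum_nonneg fun j _ =>
    mul_nonneg (hK0 i j) (hv j).le
  have hrowS : ∀ i, ∑ j, K i j * v j ≤ S := by
    intro i
    exact Finset.single_le_sum (f := fun i => ∑ j, K i j * v j)
      (fun i _ => Finset.sum_nonneg fun j _ => mul_nonneg (hK0 i j) (hv j).le)
      (Finset.mem_univ i)
  set vmin : ℝ := Finset.univ.inf' Finset.univ_nonempty v with hvmindef
  set vmax : ℝ := Finset.univ.sup' Finset.univ_nonempty v with hvmaxdef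
  have hvminle : ∀ i, vmin ≤ v i := fun i => Finset.inf'_le v (Finset.mem_univ i)
  have hvmaxge : ∀ i, v i ≤ vmax := fun i => Finset.le_sup' v (Finset.mem_univ i)
  have hvminpos : 0 < vmin := by
    obtain ⟨i, _, hi⟩ := Finset.exists_mem_eq_inf' (Finset.univ_nonempty) v
    rw [hvmindef, hi]; exact hv i
  have hvmaxpos : 0 < vmax := lt_of_lt_of_le hvminpos (le_trans (hvminle (Classical.arbitrary _)) (hvmaxge _))
  -- choose γ
  obtain ⟨γ, hγpos, hγf⟩ : ∃ γ > 0, (Real.exp (γ*τ) - 1) * S + γ * vmin < δ * vmin := by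
    have hcf : Continuous (fun γ : ℝ => (Real.exp (γ*τ) - 1) * S + γ * vmin) := by continuity
    have h0 : (fun γ : ℝ => (Real.exp (γ*τ) - 1) * S + γ * vmin) 0 = 0 := by simp
    have htend : Filter.Tendsto (fun γ : ℝ => (Real.exp (γ*τ) - 1) * S + γ * vmin)
        (𝓝[>] (0:ℝ)) (𝓝 ((fun γ : ℝ => (Real.exp (γ*τ) - 1) * S + γ * vmin) 0)) :=
      (hcf.tendsto 0).mono_left nhdsWithin_le_nhds
    rw [h0] at htend
    have hev := htend.eventually_lt_const (mul_pos hδ hvminpos)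
    have hev2 : ∀ᶠ γ in 𝓝[>] (0:ℝ), 0 < γ := eventually_mem_nhdsWithin
    obtain ⟨γ, h1, h2⟩ := (hev.and hev2).exists
    exact ⟨γ, h2, h1⟩
  have hγδ : γ < δ := by
    have h1 : 0 ≤ (Real.exp (γ*τ) - 1) * S :=
      mul_nonneg (by have := Real.one_le_exp (mul_nonneg hγpos.le hτ); linarith) hS0
    nlinarith
  -- growth constant
  set Cg : ℝ := 1 + ∑ i, ∑ j, K i j with hCgdef
  have hCg1 : 1 ≤ Cg := by
    have : 0 ≤ ∑ i, ∑ j, K i j := Finset.sum_nonneg fun i _ => Finset.sum_nonneg fun j _ => hK0 i j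
    linarith
  have hCgrow : ∀ i, ∑ j, K i j ≤ Cg - 1 := by
    intro i
    rw [hCgdef]
    have := Finset.single_le_sum (f := fun i => ∑ j, K i j)
      (fun i _ => Finset.sum_nonneg fun j _ => hK0 i j) (Finset.mem_univ i)
    linarith
  -- final constant
  refine ⟨Real.exp (Cg*T) * Real.exp (γ*T) * (vmax / vmin), by positivity, γ, hγpos, ?_⟩
  intro t₀ ht₀ x hx
  -- reduce to: for every ε > 0 bound with M = ‖seg τ x t₀‖ + ε
  suffices h : ∀ ε > 0, ∀ t ≥ t₀, ‖x t‖ ≤ Real.exp (Cg*T) * Real.exp (γ*T) * (vmax / vmin) *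
      Real.exp (-γ * (t - t₀)) * (‖seg τ x t₀‖ + ε) by
    intro t ht
    set B := Real.exp (Cg*T) * Real.exp (γ*T) * (vmax / vmin) * Real.exp (-γ * (t - t₀)) with hBdef
    have hBpos : 0 < B := by positivity
    apply le_of_forall_pos_le_add
    intro ε' hε'
    have := h (ε'/B) (by positivity) t ht
    calc ‖x t‖ ≤ B * (‖seg τ x t₀‖ + ε'/B) := this
      _ = B * ‖seg τ x t₀‖ + ε' := by rw [mul_add, mul_div_cancel₀ _ (ne_of_gt hBpos)]
  intro ε hε
  set M : ℝ := ‖seg τ x t₀‖ + ε with hMdef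
  have hMpos : 0 < M := by positivity
  have hsegbound : ∀ s, t₀ - τ ≤ s → s ≤ t₀ → ∀ i, |x s i| ≤ ‖seg τ x t₀‖ := by
    intro s h1 h2 i
    have hθ : s - t₀ ∈ Set.Icc (-τ) (0:ℝ) := ⟨by linarith, by linarith⟩
    have : (seg τ x t₀) ⟨s - t₀, hθ⟩ = x s := by
      show x (t₀ + (s - t₀)) = x s
      congr 1; ring
    calc |x s i| ≤ ‖x s‖ := by rw [← Real.norm_eq_abs]; exact norm_le_pi_norm (x s) i
      _ = ‖(seg τ x t₀) ⟨s - t₀, hθ⟩‖ := by rw [this]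
      _ ≤ ‖seg τ x t₀‖ := ContinuousMap.norm_coe_le_norm _ _
  -- Phase 1: growth on [t₀, ∞)
  have hgrow : ∀ t ≥ t₀, ∀ i, |x t i| < M * Real.exp (Cg * (t - t₀)) := by
    have := core_lemma n τ hτ d L t₀ x hx t₀ le_rfl (fun _ => M) (fun _ => hMpos) Cg 1
      (fun u hu => by
        have : -Cg * u ≤ 0 := by
          have : 0 ≤ Cg * u := mul_nonneg (by linarith) hu.1
          linarith
        calc Real.exp (-Cg*u) ≤ Real.exp 0 := Real.exp_le_exp.mpr this
          _ = 1 := Real.exp_zero)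
      (fun i s hs => lt_of_le_of_lt (hsegbound s hs.1 hs.2 i) (by rw [hMdef]; linarith))
      (fun t ht i => by
        show -(d i t) * M + 1 * ∑ j, ‖L i j t‖ * M < Cg * M
        have hd := hd_pos i t (le_trans ht₀ ht)
        have hLle : ∑ j, ‖L i j t‖ * M ≤ (Cg - 1) * M := by
          have h1 : ∑ j, ‖L i j t‖ * M ≤ ∑ j, K i j * M :=
            Finset.sum_le_sum fun j _ => mul_le_mul_of_nonneg_right (hK i j t (le_trans ht₀ ht)) hMpos.le
          have h2 : ∑ j, K i j * M = (∑ j, K i j) * M := by rw [Finset.sum_mul]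
          have h3 : (∑ j, K i j) * M ≤ (Cg - 1) * M :=
            mul_le_mul_of_nonneg_right (hCgrow i) hMpos.le
          linarith
        nlinarith [mul_pos hd hMpos])
    exact this
  -- Phase 2: decay from t₁ := max t₀ T
  set t₁ : ℝ := max t₀ T with ht₁def
  have ht₀t₁ : t₀ ≤ t₁ := le_max_left _ _
  have hTt₁ : T ≤ t₁ := le_max_right _ _
  have ht₁T : t₁ - t₀ ≤ T := by
    rcases max_cases t₀ T with ⟨h1, h2⟩ | ⟨h1, h2⟩ <;> rw [ht₁def, h1] <;> linarith
  set M1 : ℝ := M * Real.exp (Cg*T) / vmin with hM1def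
  have hM1pos : 0 < M1 := by positivity
  have hM1v : ∀ i, M * Real.exp (Cg*T) ≤ M1 * v i := by
    intro i
    rw [hM1def]
    rw [div_mul_eq_mul_div, le_div_iff₀ hvminpos]
    exact mul_le_mul_of_nonneg_left (hvminle i) (by positivity)
  have hdecay : ∀ t ≥ t₁, ∀ i, |x t i| < M1 * v i * Real.exp (-γ * (t - t₁)) := by
    have := core_lemma n τ hτ d L t₀ x hx t₁ ht₀t₁ (fun i => M1 * v i)
      (fun i => mul_pos hM1pos (hv i)) (-γ) (Real.exp (γ*τ))
      (fun u hu => by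
        rw [neg_neg]
        exact Real.exp_le_exp.mpr (mul_le_mul_of_nonneg_left hu.2 hγpos.le))
      (fun i s hs => by
        rcases le_or_gt t₀ s with hcase | hcase
        · have h1 := hgrow s hcase i
          have h2 : Real.exp (Cg * (s - t₀)) ≤ Real.exp (Cg*T) :=
            Real.exp_le_exp.mpr (mul_le_mul_of_nonneg_left (by linarith [hs.2]) (by linarith))
          calc |x s i| < M * Real.exp (Cg * (s - t₀)) := h1
            _ ≤ M * Real.exp (Cg*T) := mul_le_mul_of_nonneg_left h2 hMpos.le
            _ ≤ M1 * v i := hM1v i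
        · have h1 := hsegbound s (by linarith [hs.1]) hcase.le i
          have h2 : (1:ℝ) ≤ Real.exp (Cg*T) := Real.one_le_exp (by positivity)
          calc |x s i| ≤ ‖seg τ x t₀‖ := h1
            _ < M := by rw [hMdef]; linarith
            _ ≤ M * Real.exp (Cg*T) := le_mul_of_one_le_right hMpos.le h2
            _ ≤ M1 * v i := hM1v i)
      (fun t ht i => by
        show -(d i t) * (M1 * v i) + Real.exp (γ*τ) * ∑ j, ‖L i j t‖ * (M1 * v j)
            < -γ * (M1 * v i)
        -- key H2 estimate
        have ht0 : (0:ℝ) ≤ t := le_trans ht₀ (le_trans ht₀t₁ ht)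
        have hH := hH2 t (le_trans hTt₁ ht) i
        have hrow : ∑ j, ‖L i j t‖ * v j ≤ S := by
          refine le_trans (Finset.sum_le_sum fun j _ =>
            mul_le_mul_of_nonneg_right (hK i j t ht0) (hv j).le) (hrowS i)
        have hrow0 : 0 ≤ ∑ j, ‖L i j t‖ * v j :=
          Finset.sum_nonneg fun j _ => mul_nonneg (L i j t).opNorm_nonneg (hv j).le
        have hexp1 : 1 ≤ Real.exp (γ*τ) := Real.one_le_exp (by positivity)
        -- e^{γτ} Σ a v ≤ (d v - δ v) + (e^{γτ}-1) S
        have key : Real.exp (γ*τ) * ∑ j, ‖L i j t‖ * v j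
            ≤ (d i t * v i - δ * v i) + (Real.exp (γ*τ) - 1) * S := by
          have h1 : Real.exp (γ*τ) * ∑ j, ‖L i j t‖ * v j
              = ∑ j, ‖L i j t‖ * v j + (Real.exp (γ*τ) - 1) * ∑ j, ‖L i j t‖ * v j := by ring
          have h2 : (Real.exp (γ*τ) - 1) * ∑ j, ‖L i j t‖ * v j ≤ (Real.exp (γ*τ) - 1) * S :=
            mul_le_mul_of_nonneg_left hrow (by linarith)
          linarith
        have hkey2 : (Real.exp (γ*τ) - 1) * S < (δ - γ) * vmin := by nlinarith
        have hfinal : -(d i t) * v i + Real.exp (γ*τ) * ∑ j, ‖L i j t‖ * v j < -γ * v i := by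
          have h3 : (δ - γ) * vmin ≤ (δ - γ) * v i :=
            mul_le_mul_of_nonneg_left (hvminle i) (by linarith)
          nlinarith
        -- scale by M1
        have hScale : ∑ j, ‖L i j t‖ * (M1 * v j) = M1 * ∑ j, ‖L i j t‖ * v j := by
          rw [Finset.mul_sum]; exact Finset.sum_congr rfl fun j _ => by ring
        rw [hScale]
        have hmul := mul_lt_mul_of_pos_left hfinal hM1pos
        have heq1 : M1 * (-(d i t) * v i + Real.exp (γ*τ) * ∑ j, ‖L i j t‖ * v j)
            = -(d i t) * (M1 * v i) + Real.exp (γ*τ) * (M1 * ∑ j, ‖L i j t‖ * v j) := by ring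
        have heq2 : M1 * (-γ * v i) = -γ * (M1 * v i) := by ring
        rw [heq1, heq2] at hmul
        exact hmul)
    exact this
  -- Final assembly
  intro t ht
  have hvrat : (1:ℝ) ≤ vmax / vmin :=
    (one_le_div hvminpos).mpr (le_trans (hvminle (Classical.arbitrary _)) (hvmaxge _))
  have hRHS0 : 0 ≤ Real.exp (Cg*T) * Real.exp (γ*T) * (vmax/vmin) * Real.exp (-γ*(t-t₀)) * M :=
    (mul_pos (mul_pos (mul_pos (mul_pos (Real.exp_pos _) (Real.exp_pos _))
      (div_pos hvmaxpos hvminpos)) (Real.exp_pos _)) hMpos).le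
  apply (pi_norm_le_iff_of_nonneg hRHS0).mpr
  intro i
  rw [Real.norm_eq_abs]
  rcases le_or_gt t₁ t with hc | hc
  · -- decay regime
    have h1 := (hdecay t hc i).le
    have h2 : M1 * v i ≤ M * Real.exp (Cg*T) / vmin * vmax := by
      rw [hM1def]
      exact mul_le_mul_of_nonneg_left (hvmaxge i) (by positivity)
    have h3 : Real.exp (-γ*(t-t₁)) ≤ Real.exp (γ*T) * Real.exp (-γ*(t-t₀)) := by
      rw [← Real.exp_add]
      apply Real.exp_le_exp.mpr
      have := mul_le_mul_of_nonneg_left ht₁T hγpos.le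
      linarith
    calc |x t i| ≤ M1 * v i * Real.exp (-γ*(t-t₁)) := h1
      _ ≤ (M * Real.exp (Cg*T) / vmin * vmax) * (Real.exp (γ*T) * Real.exp (-γ*(t-t₀))) :=
          mul_le_mul h2 h3 (Real.exp_pos _).le
            (le_trans (mul_pos hM1pos (hv i)).le h2)
      _ = Real.exp (Cg*T) * Real.exp (γ*T) * (vmax/vmin) * Real.exp (-γ*(t-t₀)) * M := by
          field_simp
  · -- growth regime
    have h1 := (hgrow t ht i).le
    have h2 : Real.exp (Cg*(t-t₀)) ≤ Real.exp (Cg*T) :=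
      Real.exp_le_exp.mpr (mul_le_mul_of_nonneg_left (by linarith) (by linarith))
    have h4 : (1:ℝ) ≤ Real.exp (γ*T) * Real.exp (-γ*(t-t₀)) := by
      rw [← Real.exp_add]
      apply Real.one_le_exp
      have h5 : t - t₀ ≤ T := by linarith
      have := mul_le_mul_of_nonneg_left h5 hγpos.le
      linarith
    calc |x t i| ≤ M * Real.exp (Cg*(t-t₀)) := h1
      _ ≤ M * Real.exp (Cg*T) := mul_le_mul_of_nonneg_left h2 hMpos.le
      _ = Real.exp (Cg*T) * M := by ring
      _ ≤ Real.exp (Cg*T) * M * (vmax/vmin) :=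
          le_mul_of_one_le_right (mul_pos (Real.exp_pos _) hMpos).le hvrat
      _ ≤ Real.exp (Cg*T) * M * (vmax/vmin) * (Real.exp (γ*T) * Real.exp (-γ*(t-t₀))) :=
          le_mul_of_one_le_right
            (mul_pos (mul_pos (Real.exp_pos _) hMpos) (div_pos hvmaxpos hvminpos)).le h4
      _ = Real.exp (Cg*T) * Real.exp (γ*T) * (vmax/vmin) * Real.exp (-γ*(t-t₀)) * M := by ring
end

section
/- Consider the linear delay system x_i'(t) = −d_i(t)x_i(t) + Σ_{j=1}^n L_ij(t)(x_j)_t, i = 1,…,n, t > 0, under the stated continuity assumptions on the d_i and L_ij. If hypothesis (H2*) holds and liminf_{t→∞} d_i(t) > 0 for every i = 1,…,n, then the system is exponentially asymptotically stable: there exist k > 0 and γ > 0 such that for every t₀ ≥ 0, every solution x of the system on [t₀−τ,∞) satisfies |x(t)| ≤ k·e^{−γ(t−t₀)}·‖x_{t₀}‖ for all t ≥ t₀. -/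
open scoped Topology

lemma deriv_nonneg_left (g : ℝ → ℝ) (g' p t : ℝ) (hpt : p < t)
    (hd : HasDerivAt g g' t) (hle : ∀ s ∈ Set.Ioo p t, g s ≤ g t) : 0 ≤ g' := by
  have htend : Filter.Tendsto (slope g t) (𝓝[<] t) (𝓝 g') :=
    (hasDerivAt_iff_tendsto_slope.mp hd).mono_left
      (nhdsWithin_mono _ fun s hs => ne_of_lt hs)
  have hev : ∀ᶠ s in 𝓝[<] t, 0 ≤ slope g t s := by
    filter_upwards [Ioo_mem_nhdsLT_of_mem (Set.mem_Ioc.mpr ⟨hpt, le_refl t⟩)] with s hs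
    rw [slope_def_field]
    exact div_nonneg_of_nonpos (sub_nonpos.mpr (hle s hs)) (sub_neg.mpr hs.2).le
  exact ge_of_tendsto htend hev

/-- First-crossing comparison lemma: if each component stays strictly below a positive
comparison function `u` on the initial window, and at any potential crossing time the
derivative pushes strictly inward, then all components stay strictly below `u`. -/
lemma crossing {n : ℕ} (τ : ℝ) (hτ : 0 ≤ τ) (y : Fin n → ℝ → ℝ)
    (hy : ∀ i, Continuous (y i))
    (u u' : ℝ → ℝ) (hu : ∀ t, HasDerivAt u (u' t) t)
    (p q : ℝ)
    (hinit : ∀ i, ∀ s ∈ Set.Icc (p - τ) p, |y i s| < u s)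
    (hstep : ∀ t ∈ Set.Ioc p q, ∀ i,
       (∀ j, ∀ s ∈ Set.Icc (t - τ) t, |y j s| ≤ u s) →
       ∃ y', HasDerivAt (y i) y' t ∧
         (y i t = u t → y' < u' t) ∧ (y i t = -(u t) → -(u' t) < y')) :
    ∀ t ∈ Set.Icc p q, ∀ i, |y i t| < u t := by
  have hucont : Continuous u := by
    rw [continuous_iff_continuousAt]; exact fun t => (hu t).continuousAt
  by_contra hcon
  push_neg at hcon
  obtain ⟨t1, ht1, i1, hi1⟩ := hcon
  set S : Set ℝ := {s | s ∈ Set.Icc p q ∧ ∃ i, u s ≤ |y i s|} with hS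
  have hSne : S.Nonempty := ⟨t1, ht1, i1, hi1⟩
  have hSclosed : IsClosed S := by
    have hrw : S = Set.Icc p q ∩ ⋃ i, {s | u s ≤ |y i s|} := by
      ext s; simp only [hS, Set.mem_setOf_eq, Set.mem_inter_iff, Set.mem_iUnion]
    rw [hrw]
    exact isClosed_Icc.inter (isClosed_iUnion_of_finite fun i =>
      isClosed_le hucont (continuous_abs.comp (hy i)))
  have hSbdd : BddBelow S := ⟨p, fun s hs => hs.1.1⟩
  set t₁ := sInf S with ht₁def
  have ht₁S : t₁ ∈ S := hSclosed.csInf_mem hSne hSbdd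
  obtain ⟨⟨hpt₁, ht₁q⟩, i, hi⟩ := ht₁S
  have hppt : p < t₁ := by
    rcases lt_or_eq_of_le hpt₁ with h | h
    · exact h
    · exfalso; rw [← h] at hi
      exact absurd hi (not_le.mpr (hinit i p ⟨by linarith, le_refl p⟩))
  have hbelow : ∀ j, ∀ s, p ≤ s → s < t₁ → |y j s| < u s := by
    intro j s hps hst
    by_contra hcs
    have hmem : s ∈ S := ⟨⟨hps, le_trans hst.le ht₁q⟩, j, not_lt.mp hcs⟩
    exact absurd (csInf_le hSbdd hmem) (not_le.mpr hst)
  have hAtle : ∀ j, |y j t₁| ≤ u t₁ := by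
    intro j
    by_contra hcs
    push_neg at hcs
    have h1 : {s | u s < |y j s|} ∈ 𝓝[<] t₁ :=
      nhdsWithin_le_nhds ((isOpen_lt hucont (continuous_abs.comp (hy j))).mem_nhds hcs)
    have h2 : Set.Ioo p t₁ ∈ 𝓝[<] t₁ := Ioo_mem_nhdsLT_of_mem ⟨hppt, le_refl _⟩
    obtain ⟨s, hs1, hs2⟩ := Filter.nonempty_of_mem (Filter.inter_mem h1 h2)
    exact absurd hs1 (not_lt.mpr (hbelow j s hs2.1.le hs2.2).le)
  have hwin : ∀ j, ∀ s ∈ Set.Icc (t₁ - τ) t₁, |y j s| ≤ u s := by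
    intro j s hs
    rcases lt_or_ge s p with h | h
    · exact (hinit j s ⟨by linarith [hs.1], h.le⟩).le
    · rcases eq_or_lt_of_le hs.2 with h2 | h2
      · rw [h2]; exact hAtle j
      · exact (hbelow j s h h2).le
  obtain ⟨y', hder, hpos, hneg⟩ := hstep t₁ ⟨hppt, ht₁q⟩ i hwin
  have heq : |y i t₁| = u t₁ := le_antisymm (hAtle i) hi
  rcases eq_or_eq_neg_of_abs_eq heq with hcase | hcase
  · have hlt : y' < u' t₁ := hpos hcase
    have h0 : 0 ≤ y' - u' t₁ := by
      apply deriv_nonneg_left (fun s => y i s - u s) _ p t₁ hppt (hder.sub (hu t₁))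
      intro s hs
      have h1 := hbelow i s hs.1.le hs.2
      have h2 := le_abs_self (y i s)
      linarith [hcase]
    linarith
  · have hlt : -(u' t₁) < y' := hneg hcase
    have h0 : 0 ≤ -y' - u' t₁ := by
      apply deriv_nonneg_left (fun s => -(y i s) - u s) _ p t₁ hppt (hder.neg.sub (hu t₁))
      intro s hs
      have h1 := hbelow i s hs.1.le hs.2
      have h2 := neg_abs_le (y i s)
      linarith [hcase]
    linarith

lemma seg_norm_le {n : ℕ} (τ : ℝ) (x : C(ℝ, Fin n → ℝ)) (j : Fin n)
    (t W : ℝ) (hW : 0 ≤ W) (h : ∀ s ∈ Set.Icc (t - τ) t, |x s j| ≤ W) :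
    ‖seg τ (proj x j) t‖ ≤ W := by
  rw [ContinuousMap.norm_le _ hW]
  intro θ
  have h1 := θ.2.1
  have h2 := θ.2.2
  simp only [seg, proj, ContinuousMap.comp_apply, ContinuousMap.coe_mk, Real.norm_eq_abs]
  exact h (t + θ.1) ⟨by linarith, by linarith⟩

lemma comp_le_seg {n : ℕ} (τ : ℝ) (x : C(ℝ, Fin n → ℝ)) (j : Fin n) (t₀ s : ℝ)
    (hs : s ∈ Set.Icc (t₀ - τ) t₀) : |x s j| ≤ ‖seg τ x t₀‖ := by
  have h1 : |x s j| ≤ ‖x s‖ := by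
    rw [← Real.norm_eq_abs]; exact norm_le_pi_norm (x s) j
  have h2 : x s = (seg τ x t₀) ⟨s - t₀, ⟨by linarith [hs.1], by linarith [hs.2]⟩⟩ := by
    simp only [seg, ContinuousMap.comp_apply, ContinuousMap.coe_mk]
    congr 1; ring
  calc |x s j| ≤ ‖x s‖ := h1
    _ = ‖(seg τ x t₀) ⟨s - t₀, ⟨by linarith [hs.1], by linarith [hs.2]⟩⟩‖ := by rw [← h2]
    _ ≤ ‖seg τ x t₀‖ := ContinuousMap.norm_coe_le_norm _ _

lemma sum_est {n : ℕ} (τ : ℝ)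
    (L : Fin n → Fin n → ℝ → (C(Set.Icc (-τ) (0 : ℝ), ℝ) →L[ℝ] ℝ))
    (x : C(ℝ, Fin n → ℝ)) (v : Fin n → ℝ) (hv : ∀ i, 0 < v i) (i : Fin n) (t W : ℝ)
    (hW : 0 ≤ W) (h : ∀ j, ∀ s ∈ Set.Icc (t - τ) t, |x s j| ≤ v j * W) :
    |∑ j, L i j t (seg τ (proj x j) t)| ≤ (∑ j, ‖L i j t‖ * v j) * W := by
  calc |∑ j, L i j t (seg τ (proj x j) t)| ≤ ∑ j, |L i j t (seg τ (proj x j) t)| :=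
        Finset.abs_sum_le_sum_abs _ _
    _ ≤ ∑ j, ‖L i j t‖ * (v j * W) := by
        apply Finset.sum_le_sum
        intro j _
        have h1 : ‖L i j t (seg τ (proj x j) t)‖ ≤ ‖L i j t‖ * ‖seg τ (proj x j) t‖ :=
          (L i j t).le_opNorm _
        rw [Real.norm_eq_abs] at h1
        have h2 : ‖seg τ (proj x j) t‖ ≤ v j * W :=
          seg_norm_le τ x j t _ (mul_nonneg (hv j).le hW) (h j)
        calc |L i j t (seg τ (proj x j) t)| ≤ ‖L i j t‖ * ‖seg τ (proj x j) t‖ := h1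
          _ ≤ ‖L i j t‖ * (v j * W) := mul_le_mul_of_nonneg_left h2 (norm_nonneg (L i j t))
    _ = (∑ j, ‖L i j t‖ * v j) * W := by
        rw [Finset.sum_mul]
        exact Finset.sum_congr rfl fun j _ => (mul_assoc _ _ _).symm

set_option maxHeartbeats 3200000 in
/-- Under (H1) and (H2*), if `liminf_{t→∞} d_i(t) > 0` for every `i`, the linear delay
system `x_i'(t) = -d_i(t) x_i(t) + ∑_j L_ij(t) (x_j)_t` is exponentially asymptotically
stable. -/
theorem linear_exp_stable_H2star
    (n : ℕ) (hn : 1 ≤ n) (τ : ℝ) (hτ : 0 ≤ τ)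
    (d : Fin n → ℝ → ℝ)
    (L : Fin n → Fin n → ℝ → (C(Set.Icc (-τ) (0 : ℝ), ℝ) →L[ℝ] ℝ))
    -- (H1): continuity of the data
    (hd_pos : ∀ i, ∀ t ≥ (0 : ℝ), 0 < d i t)
    (hd_cont : ∀ i, ContinuousOn (d i) (Set.Ici 0))
    (hL_cont : ∀ i j, ContinuousOn (L i j) (Set.Ici (0 : ℝ)))
    -- (H2*): ∃ v > 0, α > 1 with D(t) v ≥ α A(t) v componentwise for t ≥ T
    (v : Fin n → ℝ) (hv : ∀ i, 0 < v i) (α : ℝ) (hα : 1 < α) (T : ℝ) (hT : 0 ≤ T)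
    (hH2star : ∀ t ≥ T, ∀ i, α * ∑ j, ‖L i j t‖ * v j ≤ d i t * v i)
    -- liminf_{t→∞} d_i(t) > 0 for every i
    (hd_liminf : ∀ i, ∃ c > 0, ∀ᶠ t in Filter.atTop, c ≤ d i t) :
    ∃ k > 0, ∃ γ > 0, ∀ t₀ ≥ (0 : ℝ), ∀ x : C(ℝ, Fin n → ℝ),
      (∀ i, ∀ t > t₀, HasDerivAt (fun s => x s i)
          (-(d i t) * x t i + ∑ j, L i j t (seg τ (proj x j) t)) t) →
      ∀ t ≥ t₀, ‖x t‖ ≤ k * Real.exp (-γ * (t - t₀)) * ‖seg τ x t₀‖ := by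
  haveI : Nonempty (Fin n) := ⟨⟨0, hn⟩⟩
  have hα0 : (0:ℝ) < α := lt_trans one_pos hα
  -- min/max of v
  obtain ⟨vmin, hvmindef⟩ : ∃ z, z = Finset.univ.inf' Finset.univ_nonempty v := ⟨_, rfl⟩
  obtain ⟨vmax, hvmaxdef⟩ : ∃ z, z = Finset.univ.sup' Finset.univ_nonempty v := ⟨_, rfl⟩
  have hvmin_pos : 0 < vmin := by
    rw [hvmindef, Finset.lt_inf'_iff]
    exact fun i _ => hv i
  have hvmin_le : ∀ i, vmin ≤ v i := by
    intro i; rw [hvmindef]; exact Finset.inf'_le _ (Finset.mem_univ i)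
  have hle_vmax : ∀ i, v i ≤ vmax := by
    intro i; rw [hvmaxdef]; exact Finset.le_sup' _ (Finset.mem_univ i)
  have hvmax_pos : 0 < vmax :=
    lt_of_lt_of_le hvmin_pos (le_trans (hvmin_le _) (hle_vmax (Classical.arbitrary _)))
  -- liminf constants
  obtain ⟨c, hc, hcev⟩ : ∃ c : Fin n → ℝ, (∀ i, 0 < c i) ∧
      ∀ i, ∀ᶠ t in Filter.atTop, c i ≤ d i t := by
    choose c h1 h2 using hd_liminf
    exact ⟨c, h1, h2⟩
  obtain ⟨T₂, hT₂⟩ : ∃ T₂, ∀ t ≥ T₂, ∀ i, c i ≤ d i t :=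
    Filter.eventually_atTop.mp (Filter.eventually_all.mpr hcev)
  obtain ⟨cmin, hcmindef⟩ : ∃ z, z = Finset.univ.inf' Finset.univ_nonempty c := ⟨_, rfl⟩
  have hcmin_pos : 0 < cmin := by
    rw [hcmindef, Finset.lt_inf'_iff]
    exact fun i _ => hc i
  have hcmin_le : ∀ i, cmin ≤ c i := by
    intro i; rw [hcmindef]; exact Finset.inf'_le _ (Finset.mem_univ i)
  obtain ⟨T₁, hT₁def⟩ : ∃ z : ℝ, z = max T T₂ := ⟨_, rfl⟩
  have hT₁0 : (0:ℝ) ≤ T₁ := by rw [hT₁def]; exact le_trans hT (le_max_left _ _)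
  have hTT₁ : T ≤ T₁ := by rw [hT₁def]; exact le_max_left _ _
  have hT₂T₁ : T₂ ≤ T₁ := by rw [hT₁def]; exact le_max_right _ _
  -- operator bounds on [0, T₁]
  obtain ⟨Λ, hΛpos, hΛbound⟩ : ∃ Λ : ℝ, 0 < Λ ∧ ∀ i, ∀ t' : ℝ, 0 ≤ t' → t' ≤ T₁ →
      (∑ j, ‖L i j t'‖ * v j) ≤ (Λ - 1) * v i := by
    obtain ⟨B, hB⟩ : ∃ B : Fin n → Fin n → ℝ,
        ∀ i j, ∀ t ∈ Set.Icc (0:ℝ) T₁, ‖L i j t‖ ≤ B i j := by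
      have hex : ∀ i j, ∃ b, ∀ t ∈ Set.Icc (0:ℝ) T₁, ‖L i j t‖ ≤ b := by
        intro i j
        obtain ⟨b, hb⟩ := (isCompact_Icc (a := (0:ℝ)) (b := T₁)).exists_bound_of_continuousOn
          (f := L i j) ((hL_cont i j).mono Set.Icc_subset_Ici_self)
        exact ⟨b, hb⟩
      choose B hB using hex
      exact ⟨B, hB⟩
    have hB0 : ∀ i j, 0 ≤ B i j := fun i j =>
      le_trans (norm_nonneg (L i j 0)) (hB i j 0 ⟨le_refl _, hT₁0⟩)
    refine ⟨1 + Finset.univ.sup' Finset.univ_nonempty (fun i => (∑ j, B i j * v j) / v i),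
      ?_, ?_⟩
    · have h1 : 0 ≤ (∑ j, B (Classical.arbitrary (Fin n)) j * v j) /
          v (Classical.arbitrary (Fin n)) :=
        div_nonneg (Finset.sum_nonneg fun j _ => mul_nonneg (hB0 _ j) (hv j).le) (hv _).le
      have h2 : (∑ j, B (Classical.arbitrary (Fin n)) j * v j) /
          v (Classical.arbitrary (Fin n)) ≤
          Finset.univ.sup' Finset.univ_nonempty (fun i => (∑ j, B i j * v j) / v i) :=
        Finset.le_sup' (fun i => (∑ j, B i j * v j) / v i) (Finset.mem_univ _)
      linarith
    · intro i t' h0 h1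
      have h2 : (∑ j, ‖L i j t'‖ * v j) ≤ ∑ j, B i j * v j :=
        Finset.sum_le_sum fun j _ =>
          mul_le_mul_of_nonneg_right (hB i j t' ⟨h0, h1⟩) (hv j).le
      have h3 : (∑ j, B i j * v j) / v i ≤
          Finset.univ.sup' Finset.univ_nonempty (fun i => (∑ j, B i j * v j) / v i) :=
        Finset.le_sup' (fun i => (∑ j, B i j * v j) / v i) (Finset.mem_univ i)
      have h4 := (div_le_iff₀ (hv i)).mp h3
      nlinarith
  -- decay rate
  have hlogpos : 0 < Real.log ((1+α)/2) := Real.log_pos (by linarith)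
  obtain ⟨γ, hγdef⟩ : ∃ z : ℝ, z = min (cmin*(α-1)/(4*α)) (Real.log ((1+α)/2)/(τ+1)) :=
    ⟨_, rfl⟩
  have hγpos : 0 < γ := by
    rw [hγdef, lt_min_iff]
    constructor
    · apply div_pos (mul_pos hcmin_pos (by linarith)) (by linarith)
    · exact div_pos hlogpos (by linarith)
  have hexpγτ : Real.exp (γ*τ) ≤ (1+α)/2 := by
    have h1 : γ ≤ Real.log ((1+α)/2)/(τ+1) := by rw [hγdef]; exact min_le_right _ _
    have h2 : γ * τ ≤ (Real.log ((1+α)/2)/(τ+1)) * τ :=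
      mul_le_mul_of_nonneg_right h1 hτ
    have h3 : (Real.log ((1+α)/2)/(τ+1)) * τ ≤ Real.log ((1+α)/2) := by
      rw [div_mul_eq_mul_div, div_le_iff₀ (by linarith : (0:ℝ) < τ+1)]
      nlinarith
    calc Real.exp (γ*τ) ≤ Real.exp (Real.log ((1+α)/2)) := Real.exp_le_exp.mpr (by linarith)
      _ = (1+α)/2 := Real.exp_log (by linarith)
  have hγ2 : 2*γ ≤ cmin*(α-1)/(2*α) := by
    have h1 : γ ≤ cmin*(α-1)/(4*α) := by rw [hγdef]; exact min_le_left _ _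
    have h2 : cmin*(α-1)/(2*α) = 2*(cmin*(α-1)/(4*α)) := by ring
    linarith
  -- the constants
  refine ⟨vmax/vmin * Real.exp (Λ*(T₁+τ) + γ*T₁),
    mul_pos (div_pos hvmax_pos hvmin_pos) (Real.exp_pos _), γ, hγpos, ?_⟩
  intro t₀ ht₀ x hx t ht
  obtain ⟨N, hNdef⟩ : ∃ z, ‖seg τ x t₀‖ = z := ⟨_, rfl⟩
  rw [hNdef]
  have hN0 : (0:ℝ) ≤ N := hNdef ▸ norm_nonneg _
  obtain ⟨M, hMdef⟩ : ∃ z : ℝ, z = N / vmin := ⟨_, rfl⟩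
  have hM0 : (0:ℝ) ≤ M := by rw [hMdef]; exact div_nonneg hN0 hvmin_pos.le
  obtain ⟨P, hPdef⟩ : ∃ z : ℝ, z = max t₀ T₁ := ⟨_, rfl⟩
  have hPt₀ : t₀ ≤ P := by rw [hPdef]; exact le_max_left _ _
  have hT₁P : T₁ ≤ P := by rw [hPdef]; exact le_max_right _ _
  have hQ : ∀ s, s ≤ P → s - t₀ ≤ T₁ := by
    intro s hs
    rw [hPdef] at hs
    rcases le_max_iff.mp hs with h | h
    · linarith
    · linarith
  have hPT₁ : P - t₀ ≤ T₁ := hQ P (le_refl _)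
  have hycont : ∀ i, Continuous (fun s => x s i / v i) :=
    fun i => ((continuous_apply i).comp x.continuous).div_const _
  have hhist : ∀ j, ∀ s ∈ Set.Icc (t₀ - τ) t₀, |x s j| ≤ N :=
    fun j s hs => hNdef ▸ comp_le_seg τ x j t₀ s hs
  have hhistM : ∀ j, ∀ s ∈ Set.Icc (t₀ - τ) t₀, |x s j| / v j ≤ M := by
    intro j s hs
    rw [hMdef]
    exact div_le_div₀ hN0 (hhist j s hs) hvmin_pos (hvmin_le j)
  -- the key epsilon-bound
  have key : ∀ ε > (0:ℝ), ∀ i, |x t i| ≤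
      v i * ((M + ε) * (Real.exp (Λ*(T₁+τ)) * (Real.exp (γ*T₁) * Real.exp (-γ*(t-t₀))))) := by
    intro ε hε i₀
    have hMε : (0:ℝ) < M + ε := by linarith
    -- Phase 1 on [t₀, P]
    have hu1 : ∀ s : ℝ, HasDerivAt (fun s => (M+ε)*Real.exp (Λ*(s - t₀ + τ)))
        ((M+ε)*(Real.exp (Λ*(s - t₀ + τ))*Λ)) s := by
      intro s
      have h1 : HasDerivAt (fun s : ℝ => Λ*(s - t₀ + τ)) Λ s := by
        simpa using (((hasDerivAt_id s).sub_const t₀).add_const τ).const_mul Λ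
      exact h1.exp.const_mul _
    have phase1 : ∀ s ∈ Set.Icc t₀ P, ∀ i, |x s i / v i| < (M+ε)*Real.exp (Λ*(s - t₀ + τ)) := by
      apply crossing τ hτ (fun i s => x s i / v i) hycont _ _ hu1 t₀ P
      · -- initial window
        intro i s hs
        have h1 : |x s i / v i| ≤ M := by
          rw [abs_div, abs_of_pos (hv i)]
          exact hhistM i s hs
        have h2 : (1:ℝ) ≤ Real.exp (Λ*(s - t₀ + τ)) :=
          Real.one_le_exp (by nlinarith [hs.1, hΛpos.le])
        nlinarith
      · -- crossing step
        intro t' ht' i hh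
        have ht'0 : (0:ℝ) ≤ t' := le_trans ht₀ ht'.1.le
        have ht'T₁ : t' ≤ T₁ := by
          have h5 := ht'.2
          rw [hPdef] at h5
          rcases le_max_iff.mp h5 with h | h
          · exact absurd ht'.1 (not_lt.mpr h)
          · exact h
        have hu1pos : 0 < (M+ε)*Real.exp (Λ*(t' - t₀ + τ)) := mul_pos hMε (Real.exp_pos _)
        have hwin : ∀ j, ∀ s ∈ Set.Icc (t' - τ) t',
            |x s j| ≤ v j * ((M+ε)*Real.exp (Λ*(t' - t₀ + τ))) := by
          intro j s hs
          have h1 := hh j s hs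
          rw [abs_div, abs_of_pos (hv j)] at h1
          have h2 : (M+ε)*Real.exp (Λ*(s - t₀ + τ)) ≤ (M+ε)*Real.exp (Λ*(t' - t₀ + τ)) := by
            apply mul_le_mul_of_nonneg_left _ hMε.le
            exact Real.exp_le_exp.mpr (by nlinarith [hs.2, hΛpos.le])
          have h3 := (div_le_iff₀ (hv j)).mp (le_trans h1 h2)
          linarith
        have hS := sum_est τ L x v hv i t' ((M+ε)*Real.exp (Λ*(t' - t₀ + τ))) hu1pos.le hwin
        have hcoef : (∑ j, ‖L i j t'‖ * v j) ≤ (Λ - 1) * v i :=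
          hΛbound i t' ht'0 ht'T₁
        have hSle : (∑ j, L i j t' (seg τ (proj x j) t')) ≤
            (Λ - 1) * v i * ((M+ε)*Real.exp (Λ*(t' - t₀ + τ))) := by
          have h5 := le_trans (le_abs_self _) hS
          nlinarith [mul_le_mul_of_nonneg_right hcoef hu1pos.le]
        have hSge : -((Λ - 1) * v i * ((M+ε)*Real.exp (Λ*(t' - t₀ + τ)))) ≤
            (∑ j, L i j t' (seg τ (proj x j) t')) := by
          have h5 := le_trans (neg_abs_le _) (neg_le_neg hS)
          nlinarith [neg_abs_le (∑ j, L i j t' (seg τ (proj x j) t')), hS,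
            mul_le_mul_of_nonneg_right hcoef hu1pos.le]
        have hd1 : 0 < d i t' := hd_pos i t' ht'0
        refine ⟨_, (hx i t' ht'.1).div_const (v i), ?_, ?_⟩
        · intro hcase
          have hxv : x t' i = (M+ε)*Real.exp (Λ*(t' - t₀ + τ)) * v i :=
            (div_eq_iff (ne_of_gt (hv i))).mp hcase
          rw [div_lt_iff₀ (hv i), hxv]
          nlinarith [mul_pos hd1 (mul_pos hu1pos (hv i)), mul_pos hu1pos (hv i)]
        · intro hcase
          have hxv : x t' i = -((M+ε)*Real.exp (Λ*(t' - t₀ + τ))) * v i := by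
            rw [div_eq_iff (ne_of_gt (hv i))] at hcase
            linarith [hcase]
          rw [lt_div_iff₀ (hv i), hxv]
          nlinarith [mul_pos hd1 (mul_pos hu1pos (hv i)), mul_pos hu1pos (hv i)]
    -- now the two cases
    rcases le_or_gt t P with hcaseP | hcaseP
    · -- still in phase 1
      have h := phase1 t ⟨ht, hcaseP⟩ i₀
      rw [abs_div, abs_of_pos (hv i₀)] at h
      have hle : (M+ε)*Real.exp (Λ*(t - t₀ + τ)) ≤
          (M+ε)*(Real.exp (Λ*(T₁+τ)) * (Real.exp (γ*T₁) * Real.exp (-γ*(t-t₀)))) := by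
        rw [← Real.exp_add, ← Real.exp_add]
        apply mul_le_mul_of_nonneg_left _ hMε.le
        apply Real.exp_le_exp.mpr
        have q1 := hQ t hcaseP
        nlinarith [mul_le_mul_of_nonneg_left q1 hΛpos.le,
          mul_le_mul_of_nonneg_left q1 hγpos.le]
      have h2 := (div_lt_iff₀ (hv i₀)).mp (lt_of_lt_of_le h hle)
      linarith
    · -- phase 2 on (P, t]
      have hu2 : ∀ s : ℝ, HasDerivAt
          (fun s => (M+ε)*Real.exp (Λ*(T₁+τ)) * Real.exp (-γ*(s-P)))
          ((M+ε)*Real.exp (Λ*(T₁+τ)) * (Real.exp (-γ*(s-P)) * (-γ))) s := by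
        intro s
        have h1 : HasDerivAt (fun s : ℝ => -γ*(s-P)) (-γ) s := by
          simpa using ((hasDerivAt_id s).sub_const P).const_mul (-γ)
        exact h1.exp.const_mul _
      have hC₂pos : (0:ℝ) < (M+ε)*Real.exp (Λ*(T₁+τ)) := mul_pos hMε (Real.exp_pos _)
      have phase2 : ∀ s ∈ Set.Icc P t, ∀ i,
          |x s i / v i| < (M+ε)*Real.exp (Λ*(T₁+τ)) * Real.exp (-γ*(s-P)) := by
        apply crossing τ hτ (fun i s => x s i / v i) hycont _ _ hu2 P t
        · -- initial window for phase 2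
          intro i s hs
          have hone : (1:ℝ) ≤ Real.exp (-γ*(s-P)) :=
            Real.one_le_exp (by nlinarith [hγpos.le, hs.2])
          have hmain : |x s i / v i| < (M+ε)*Real.exp (Λ*(T₁+τ)) := by
            rcases le_or_gt t₀ s with h1 | h1
            · have h2 := phase1 s ⟨h1, hs.2⟩ i
              refine lt_of_lt_of_le h2 (mul_le_mul_of_nonneg_left ?_ hMε.le)
              apply Real.exp_le_exp.mpr
              have q1 : s - t₀ ≤ T₁ := hQ s hs.2
              nlinarith [hΛpos.le]
            · have h2 : |x s i / v i| ≤ M := by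
                rw [abs_div, abs_of_pos (hv i)]
                exact hhistM i s ⟨by linarith [hs.1], h1.le⟩
              have h3 : (1:ℝ) ≤ Real.exp (Λ*(T₁+τ)) :=
                Real.one_le_exp (by nlinarith [hΛpos.le])
              nlinarith
          nlinarith
        · -- crossing step for phase 2
          intro t' ht' i hh
          have ht't₀ : t₀ < t' := lt_of_le_of_lt hPt₀ ht'.1
          have ht'T : T ≤ t' := by linarith [ht'.1, hT₁P, hTT₁]
          have hdc : cmin ≤ d i t' :=
            le_trans (hcmin_le i) (hT₂ t' (by linarith [ht'.1, hT₁P, hT₂T₁]) i)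
          have hH2 := hH2star t' ht'T i
          have hu2pos : 0 < (M+ε)*Real.exp (Λ*(T₁+τ)) * Real.exp (-γ*(t'-P)) :=
            mul_pos hC₂pos (Real.exp_pos _)
          obtain ⟨u, hudef⟩ : ∃ z, z = (M+ε)*Real.exp (Λ*(T₁+τ)) * Real.exp (-γ*(t'-P)) :=
            ⟨_, rfl⟩
          rw [← hudef] at hu2pos
          have hwin : ∀ j, ∀ s ∈ Set.Icc (t' - τ) t',
              |x s j| ≤ v j * (u * Real.exp (γ*τ)) := by
            intro j s hs
            have h1 := hh j s hs
            rw [abs_div, abs_of_pos (hv j)] at h1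
            have h2 : (M+ε)*Real.exp (Λ*(T₁+τ)) * Real.exp (-γ*(s-P)) ≤
                u * Real.exp (γ*τ) := by
              rw [hudef]
              have hexple : Real.exp (-γ*(s-P)) ≤ Real.exp (-γ*(t'-P)) * Real.exp (γ*τ) := by
                rw [← Real.exp_add]
                apply Real.exp_le_exp.mpr
                nlinarith [mul_le_mul_of_nonneg_left
                  (show t' - s ≤ τ by linarith [hs.1]) hγpos.le]
              calc (M+ε)*Real.exp (Λ*(T₁+τ)) * Real.exp (-γ*(s-P))
                  ≤ (M+ε)*Real.exp (Λ*(T₁+τ)) * (Real.exp (-γ*(t'-P)) * Real.exp (γ*τ)) :=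
                    mul_le_mul_of_nonneg_left hexple hC₂pos.le
                _ = (M+ε)*Real.exp (Λ*(T₁+τ)) * Real.exp (-γ*(t'-P)) * Real.exp (γ*τ) := by
                    ring
            have h3 := (div_le_iff₀ (hv j)).mp (le_trans h1 h2)
            linarith
          have hS := sum_est τ L x v hv i t' (u * Real.exp (γ*τ))
            (mul_nonneg hu2pos.le (Real.exp_pos _).le) hwin
          obtain ⟨Ssum, hSsumdef⟩ : ∃ z, z = ∑ j, L i j t' (seg τ (proj x j) t') := ⟨_, rfl⟩
          rw [← hSsumdef] at hS
          -- α * |Ssum| ≤ d v (u e^{γτ})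
          have hαS : α * |Ssum| ≤ (d i t' * v i) * (u * Real.exp (γ*τ)) := by
            calc α * |Ssum| ≤ α * ((∑ j, ‖L i j t'‖ * v j) * (u * Real.exp (γ*τ))) :=
                  mul_le_mul_of_nonneg_left hS hα0.le
              _ = (α * ∑ j, ‖L i j t'‖ * v j) * (u * Real.exp (γ*τ)) := (mul_assoc _ _ _).symm
              _ ≤ (d i t' * v i) * (u * Real.exp (γ*τ)) :=
                  mul_le_mul_of_nonneg_right hH2 (mul_nonneg hu2pos.le (Real.exp_pos _).le)
          have hd0 : (0:ℝ) < d i t' := lt_of_lt_of_le hcmin_pos hdc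
          have hαS2 : α * |Ssum| ≤ (d i t' * v i) * u * ((1+α)/2) := by
            have h1 : u * Real.exp (γ*τ) ≤ u * ((1+α)/2) :=
              mul_le_mul_of_nonneg_left hexpγτ hu2pos.le
            calc α * |Ssum| ≤ (d i t' * v i) * (u * Real.exp (γ*τ)) := hαS
              _ ≤ (d i t' * v i) * (u * ((1+α)/2)) :=
                  mul_le_mul_of_nonneg_left h1 (mul_nonneg hd0.le (hv i).le)
              _ = (d i t' * v i) * u * ((1+α)/2) := (mul_assoc _ _ _).symm
          have hSdiv : |Ssum| ≤ ((d i t' * v i) * u * ((1+α)/2))/α := by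
            rw [le_div_iff₀ hα0]
            linarith
          obtain ⟨W, hWdef⟩ : ∃ z : ℝ, z = (α-1)/(2*α) := ⟨_, rfl⟩
          have hWpos : 0 < W := by
            rw [hWdef]; exact div_pos (by linarith) (by linarith)
          have hγW : 2*γ ≤ cmin*W := by
            have : cmin*(α-1)/(2*α) = cmin*W := by rw [hWdef]; ring
            linarith [hγ2]
          have hgap : ((d i t' * v i) * u * ((1+α)/2))/α
              = d i t' * (v i * u) - d i t' * W * (v i * u) := by
            rw [hWdef]
            field_simp
            ring
          have hchain : γ * (v i * u) < d i t' * W * (v i * u) := by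
            have p1 : 0 < v i * u := mul_pos (hv i) hu2pos
            have p3 : cmin * W ≤ d i t' * W :=
              mul_le_mul_of_nonneg_right hdc hWpos.le
            linarith [mul_pos hγpos p1, mul_le_mul_of_nonneg_right hγW p1.le,
              mul_le_mul_of_nonneg_right p3 p1.le]
          have hSub : Ssum ≤ |Ssum| := le_abs_self _
          have hSlb : -|Ssum| ≤ Ssum := neg_abs_le _
          refine ⟨_, (hx i t' ht't₀).div_const (v i), ?_⟩
          have hrw : (M+ε)*Real.exp (Λ*(T₁+τ)) * (Real.exp (-γ*(t'-P)) * (-γ)) = u * (-γ) := by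
            rw [hudef]; ring
          refine ⟨?_, ?_⟩
          · intro hcase
            have hxv : x t' i = u * v i := by
              rw [div_eq_iff (ne_of_gt (hv i))] at hcase
              rw [hcase, hudef]
            rw [div_lt_iff₀ (hv i), ← hSsumdef, hxv, hrw]
            linarith [hSdiv, hgap.le, hgap.ge, hchain, hSub]
          · intro hcase
            have hxv : x t' i = -u * v i := by
              rw [div_eq_iff (ne_of_gt (hv i))] at hcase
              rw [hudef]
              linarith [hcase]
            rw [lt_div_iff₀ (hv i), ← hSsumdef, hxv, hrw]
            linarith [hSdiv, hgap.le, hgap.ge, hchain, hSlb]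
      -- conclude from phase 2 at time t
      have h := phase2 t ⟨hcaseP.le, le_refl t⟩ i₀
      rw [abs_div, abs_of_pos (hv i₀)] at h
      have hle : (M+ε)*Real.exp (Λ*(T₁+τ)) * Real.exp (-γ*(t-P)) ≤
          (M+ε)*(Real.exp (Λ*(T₁+τ)) * (Real.exp (γ*T₁) * Real.exp (-γ*(t-t₀)))) := by
        rw [mul_assoc, ← Real.exp_add, ← Real.exp_add, ← Real.exp_add]
        apply mul_le_mul_of_nonneg_left _ hMε.le
        apply Real.exp_le_exp.mpr
        nlinarith [mul_le_mul_of_nonneg_left hPT₁ hγpos.le]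
      have h2 := (div_lt_iff₀ (hv i₀)).mp (lt_of_lt_of_le h hle)
      linarith
  -- remove ε
  have key2 : ∀ i, |x t i| ≤
      v i * (M * (Real.exp (Λ*(T₁+τ)) * (Real.exp (γ*T₁) * Real.exp (-γ*(t-t₀))))) := by
    intro i
    apply le_of_forall_pos_le_add
    intro δ hδ
    have hEpos : 0 < Real.exp (Λ*(T₁+τ)) * (Real.exp (γ*T₁) * Real.exp (-γ*(t-t₀))) := by
      positivity
    have hden : 0 < v i * (Real.exp (Λ*(T₁+τ)) * (Real.exp (γ*T₁) * Real.exp (-γ*(t-t₀)))) :=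
      mul_pos (hv i) hEpos
    have hkey := key (δ / (v i * (Real.exp (Λ*(T₁+τ)) *
      (Real.exp (γ*T₁) * Real.exp (-γ*(t-t₀)))))) (div_pos hδ hden) i
    have heq : v i * ((M + δ / (v i * (Real.exp (Λ*(T₁+τ)) *
        (Real.exp (γ*T₁) * Real.exp (-γ*(t-t₀)))))) *
        (Real.exp (Λ*(T₁+τ)) * (Real.exp (γ*T₁) * Real.exp (-γ*(t-t₀)))))
        = v i * (M * (Real.exp (Λ*(T₁+τ)) * (Real.exp (γ*T₁) * Real.exp (-γ*(t-t₀))))) + δ := by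
      have h9 : v i * (Real.exp (Λ*(T₁+τ)) * (Real.exp (γ*T₁) * Real.exp (-γ*(t-t₀)))) *
          (δ / (v i * (Real.exp (Λ*(T₁+τ)) * (Real.exp (γ*T₁) * Real.exp (-γ*(t-t₀)))))) = δ := by
        rw [mul_comm]
        exact div_mul_cancel₀ δ hden.ne'
      calc v i * ((M + δ / (v i * (Real.exp (Λ*(T₁+τ)) *
            (Real.exp (γ*T₁) * Real.exp (-γ*(t-t₀)))))) *
            (Real.exp (Λ*(T₁+τ)) * (Real.exp (γ*T₁) * Real.exp (-γ*(t-t₀)))))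
          = v i * (M * (Real.exp (Λ*(T₁+τ)) * (Real.exp (γ*T₁) * Real.exp (-γ*(t-t₀))))) +
            v i * (Real.exp (Λ*(T₁+τ)) * (Real.exp (γ*T₁) * Real.exp (-γ*(t-t₀)))) *
            (δ / (v i * (Real.exp (Λ*(T₁+τ)) * (Real.exp (γ*T₁) * Real.exp (-γ*(t-t₀)))))) := by
            ring
        _ = v i * (M * (Real.exp (Λ*(T₁+τ)) * (Real.exp (γ*T₁) * Real.exp (-γ*(t-t₀))))) + δ := by
            rw [h9]
    linarith [hkey, heq.le]
  -- assemble the final bound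
  have hR0 : (0:ℝ) ≤ M * (Real.exp (Λ*(T₁+τ)) * (Real.exp (γ*T₁) * Real.exp (-γ*(t-t₀)))) :=
    mul_nonneg hM0 (by positivity)
  have hfin : ∀ i, ‖x t i‖ ≤
      vmax * (M * (Real.exp (Λ*(T₁+τ)) * (Real.exp (γ*T₁) * Real.exp (-γ*(t-t₀))))) := by
    intro i
    rw [Real.norm_eq_abs]
    calc |x t i| ≤ v i * (M * (Real.exp (Λ*(T₁+τ)) * (Real.exp (γ*T₁) * Real.exp (-γ*(t-t₀))))) :=
          key2 i
      _ ≤ vmax * (M * (Real.exp (Λ*(T₁+τ)) * (Real.exp (γ*T₁) * Real.exp (-γ*(t-t₀))))) :=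
          mul_le_mul_of_nonneg_right (hle_vmax i) hR0
  have hnorm : ‖x t‖ ≤
      vmax * (M * (Real.exp (Λ*(T₁+τ)) * (Real.exp (γ*T₁) * Real.exp (-γ*(t-t₀))))) :=
    (pi_norm_le_iff_of_nonneg (mul_nonneg hvmax_pos.le hR0)).mpr hfin
  calc ‖x t‖ ≤ vmax * (M * (Real.exp (Λ*(T₁+τ)) * (Real.exp (γ*T₁) * Real.exp (-γ*(t-t₀))))) :=
        hnorm
    _ = vmax/vmin * Real.exp (Λ*(T₁+τ) + γ*T₁) * Real.exp (-γ * (t - t₀)) * N := by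
        rw [hMdef, Real.exp_add]
        field_simp
end

section
/- Consider the linear ODE system x_i'(t) = −d_i(t)x_i(t) + Σ_{j≠i} d_ij(t)x_j(t), i = 1,…,n, t > 0, where d_i : [0,∞) → (0,∞) and d_ij : [0,∞) → ℝ (j ≠ i) are continuous. Set a_ij(t) := |d_ij(t)| for j ≠ i and a_ii(t) := 0, D(t) := diag(d_1(t),…,d_n(t)), A(t) := [a_ij(t)]. If there exist a componentwise positive vector v ∈ ℝⁿ, δ > 0 and T ≥ 0 such that (D(t) − A(t) − δI)v ≥ 0 componentwise for all t ≥ T (hypothesis (H2)), then the system is exponentially asymptotically stable: there exist k > 0 and γ > 0 such that for every t₀ ≥ 0, every solution x : [t₀,∞) → ℝⁿ of the system satisfies |x(t)| ≤ k·e^{−γ(t−t₀)}·|x(t₀)| for all t ≥ t₀. No boundedness of the coefficients d_ij(t) is required. -/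
open scoped Topology

open Set Filter

private lemma abs_hasDerivAt_zero' {f : ℝ → ℝ} {x : ℝ} (hf : HasDerivAt f 0 x) (h0 : f x = 0) :
    HasDerivAt (fun z => |f z|) 0 x := by
  rw [hasDerivAt_iff_isLittleO] at hf ⊢
  simp only [smul_zero, sub_zero] at hf ⊢
  refine (Asymptotics.isBigO_of_le _ fun z => ?_).trans_isLittleO hf
  simp [h0, Real.norm_eq_abs, abs_abs]

private lemma sign_mul_self_abs (a : ℝ) : (SignType.sign a : ℝ) * a = |a| := by
  rcases lt_trichotomy a 0 with h | h | h <;>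
    simp [h, abs_of_neg, abs_of_pos]

private lemma eventually_slope_lt {n : ℕ} (hn : 0 < n) (y : ℝ → Fin n → ℝ) (u c : ℝ)
    (hy : ∀ j, ContinuousAt (fun z => y z j) u)
    (hmax : ∀ j, |y u j| = ‖y u‖ → ∃ L, L ≤ c ∧ HasDerivAt (fun z => |y z j|) L u)
    {r : ℝ} (hr : c < r) :
    ∀ᶠ z in 𝓝[>] u, (z - u)⁻¹ * (‖y z‖ - ‖y u‖) < r := by
  have key : ∀ j, ∀ᶠ z in 𝓝[>] u, (z - u)⁻¹ * (|y z j| - ‖y u‖) < r := by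
    intro j
    have hle : |y u j| ≤ ‖y u‖ := by
      simpa [Real.norm_eq_abs] using norm_le_pi_norm (y u) j
    rcases eq_or_lt_of_le hle with h | h
    · obtain ⟨L, hLc, hL⟩ := hmax j h
      have hts : Filter.Tendsto (slope (fun z => |y z j|) u) (𝓝[>] u) (𝓝 L) :=
        (hasDerivAt_iff_tendsto_slope.1 hL).mono_left
          (nhdsWithin_mono _ fun z hz => ne_of_gt hz)
      have := hts.eventually_lt_const (lt_of_le_of_lt hLc hr)
      filter_upwards [this] with z hz
      rwa [slope_def_field, h, div_eq_inv_mul] at hz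
    · have hcont : Filter.Tendsto (fun z => |y z j|) (𝓝[>] u) (𝓝 |y u j|) :=
        ((hy j).abs.tendsto).mono_left nhdsWithin_le_nhds
      set q : ℝ := (|y u j| + ‖y u‖) / 2 with hq
      have hq1 : |y u j| < q := by rw [hq]; linarith
      have hq2 : q < ‖y u‖ := by rw [hq]; linarith
      have hev1 : ∀ᶠ z in 𝓝[>] u, |y z j| < q := hcont.eventually_lt_const hq1
      have hev2 : ∀ᶠ z in 𝓝[>] u, z ∈ Ioo u (u + (‖y u‖ - q) / (|r| + 1)) :=
        Ioo_mem_nhdsGT_of_mem ⟨le_rfl, by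
          have : (0:ℝ) < (‖y u‖ - q) / (|r| + 1) := div_pos (by linarith) (by positivity)
          linarith⟩
      filter_upwards [hev1, hev2] with z hz1 hz23
      obtain ⟨hz2, hz3⟩ := hz23
      have hzu : (0:ℝ) < z - u := by linarith
      rw [inv_mul_eq_div, div_lt_iff₀ hzu]
      have h2 : -(‖y u‖ - q) ≤ r * (z - u) := by
        have hb : |r| * (z - u) < ‖y u‖ - q := by
          have h5 : |r| * (z - u) < (|r| + 1) * ((‖y u‖ - q) / (|r| + 1)) := by
            apply mul_lt_mul' (by linarith) (by linarith) hzu.le (by positivity)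
          rwa [mul_div_cancel₀ _ (by positivity)] at h5
        have := neg_abs_le r
        nlinarith [abs_nonneg r, hzu]
      linarith
  have hall : ∀ᶠ z in 𝓝[>] u, ∀ j, (z - u)⁻¹ * (|y z j| - ‖y u‖) < r :=
    eventually_all.2 key
  filter_upwards [hall] with z hz
  haveI : Nonempty (Fin n) := Fin.pos_iff_nonempty.1 hn
  obtain ⟨j₀, -, hj₀⟩ := Finset.exists_mem_eq_sup (Finset.univ)
    (Finset.univ_nonempty (α := Fin n)) (fun j => ‖y z j‖₊)
  have hnorm : ‖y z‖ = |y z j₀| := by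
    rw [Pi.norm_def, hj₀]; simp [Real.norm_eq_abs]
  rw [hnorm]
  exact hz j₀

/-- The linear ODE system `x_i'(t) = -d_i(t) x_i(t) + ∑_{j≠i} d_ij(t) x_j(t)` is
exponentially asymptotically stable under (H2) with `a_ij(t) = |d_ij(t)|` (`j ≠ i`),
with no boundedness assumption on the coefficients. Here `‖·‖` on `Fin n → ℝ`
is the maximum norm. -/
theorem linear_ODE_exp_stable_H2
    (n : ℕ) (hn : 1 ≤ n)
    (d : Fin n → ℝ → ℝ) (doff : Fin n → Fin n → ℝ → ℝ)
    (hd_pos : ∀ i, ∀ t ≥ (0 : ℝ), 0 < d i t)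
    (hd_cont : ∀ i, ContinuousOn (d i) (Set.Ici 0))
    (hdoff_cont : ∀ i j, i ≠ j → ContinuousOn (doff i j) (Set.Ici 0))
    -- (H2) with a_ii = 0, a_ij(t) = |d_ij(t)| for j ≠ i
    (v : Fin n → ℝ) (hv : ∀ i, 0 < v i) (δ : ℝ) (hδ : 0 < δ) (T : ℝ) (hT : 0 ≤ T)
    (hH2 : ∀ t ≥ T, ∀ i,
      δ * v i ≤ d i t * v i - ∑ j ∈ Finset.univ.erase i, |doff i j t| * v j) :
    ∃ k > 0, ∃ γ > 0, ∀ t₀ ≥ (0 : ℝ), ∀ x : ℝ → Fin n → ℝ,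
      ContinuousOn x (Set.Ici t₀) →
      (∀ i, ∀ t > t₀, HasDerivAt (fun s => x s i)
          (-(d i t) * x t i + ∑ j ∈ Finset.univ.erase i, doff i j t * x t j) t) →
      ∀ t ≥ t₀, ‖x t‖ ≤ k * Real.exp (-γ * (t - t₀)) * ‖x t₀‖ := by
  haveI : Nonempty (Fin n) := Fin.pos_iff_nonempty.1 hn
  -- the (scaled) off-diagonal coefficient sum, and its bound on [0, T]
  set S : Fin n → ℝ → ℝ :=
    fun i u => (∑ j ∈ Finset.univ.erase i, |doff i j u| * v j) / v i with hS
  have hS_nonneg : ∀ i u, 0 ≤ S i u := by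
    intro i u
    exact div_nonneg (Finset.sum_nonneg fun k _ => mul_nonneg (abs_nonneg _) (hv k).le) (hv i).le
  set g : ℝ → ℝ := fun u => ∑ i, S i u with hgdef
  have hg_cont : ContinuousOn g (Icc 0 T) := by
    apply continuousOn_finset_sum
    intro i _
    apply ContinuousOn.div_const
    apply continuousOn_finset_sum
    intro j hj
    exact (((hdoff_cont i j (Finset.ne_of_mem_erase hj).symm).mono
      Icc_subset_Ici_self).abs).mul continuousOn_const
  obtain ⟨u₀, hu₀, hL₀⟩ := isCompact_Icc.exists_isMaxOn (nonempty_Icc.2 hT) hg_cont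
  set L : ℝ := max (g u₀) 0 with hLdef
  have hL0 : (0:ℝ) ≤ L := le_max_right _ _
  have hSL : ∀ i, ∀ u ∈ Icc (0:ℝ) T, S i u ≤ L := by
    intro i u hu
    calc S i u ≤ g u := Finset.single_le_sum (fun k _ => hS_nonneg k u) (Finset.mem_univ i)
      _ ≤ g u₀ := hL₀ hu
      _ ≤ L := le_max_left _ _
  set B : ℝ := ∑ i, v i with hBdef
  set W : ℝ := ∑ i, (v i)⁻¹ with hWdef
  have hB : (0:ℝ) < B := Finset.sum_pos (fun i _ => hv i) Finset.univ_nonempty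
  have hW : (0:ℝ) < W := Finset.sum_pos (fun i _ => inv_pos.2 (hv i)) Finset.univ_nonempty
  refine ⟨B * W * Real.exp ((L + δ) * T), by positivity, δ, hδ, ?_⟩
  intro t₀ ht₀ x hx hode
  set y : ℝ → Fin n → ℝ := fun t i => x t i / v i with hy
  set m : ℝ → ℝ := fun t => ‖y t‖ with hm
  have hm0 : ∀ t, 0 ≤ m t := fun t => norm_nonneg _
  have hxy : ∀ t i, x t i = v i * y t i := by
    intro t i
    rw [hy, mul_comm (v i) _, div_mul_cancel₀ _ (hv i).ne']
  have hym : ∀ t i, |y t i| ≤ m t := by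
    intro t i
    simpa [Real.norm_eq_abs] using norm_le_pi_norm (y t) i
  have hy_cont : ContinuousOn y (Ici t₀) := by
    apply continuousOn_pi.2
    intro i
    exact ((continuous_apply i).comp_continuousOn hx).div_const _
  have hm_cont : ContinuousOn m (Ici t₀) := hy_cont.norm
  -- key pointwise estimate at maximizing indices
  have hkey : ∀ u, t₀ < u → ∀ j, |y u j| = m u →
      ∃ L', L' ≤ (S j u - d j u) * m u ∧ HasDerivAt (fun z => |y z j|) L' u := by
    intro u hu j hj
    have hu0 : (0:ℝ) ≤ u := le_trans ht₀ hu.le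
    have hvj : (0:ℝ) < v j := hv j
    have hyd : HasDerivAt (fun z => y z j)
        ((-(d j u) * x u j + ∑ k ∈ Finset.univ.erase j, doff j k u * x u k) / v j) u :=
      (hode j u hu).div_const (v j)
    by_cases h0 : y u j = 0
    · have hmu : m u = 0 := by rw [← hj, h0, abs_zero]
      have hyz : y u = 0 := norm_eq_zero.1 hmu
      have hx0 : ∀ k, x u k = 0 := by
        intro k
        rw [hxy u k, show y u k = 0 from congrFun hyz k, mul_zero]
      have heq0 : (-(d j u) * x u j + ∑ k ∈ Finset.univ.erase j, doff j k u * x u k) / v j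
          = 0 := by simp [hx0]
      rw [heq0] at hyd
      exact ⟨0, by simp [hmu], abs_hasDerivAt_zero' hyd h0⟩
    · set s : ℝ := (SignType.sign (y u j) : ℝ) with hsdef
      refine ⟨s * ((-(d j u) * x u j + ∑ k ∈ Finset.univ.erase j, doff j k u * x u k) / v j),
        ?_, by have := (hasDerivAt_abs h0).comp u hyd; exact this⟩
      have hsx : s * x u j = v j * m u := by
        rw [hxy u j, show s * (v j * y u j) = v j * (s * y u j) by ring, hsdef,
          sign_mul_self_abs, hj]
      have habs_s : |s| ≤ 1 := by
        rw [hsdef]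
        rcases lt_trichotomy (y u j) 0 with h | h | h <;> simp [h]
      have h1 : s * (∑ k ∈ Finset.univ.erase j, doff j k u * x u k)
          ≤ (∑ k ∈ Finset.univ.erase j, |doff j k u| * v k) * m u := by
        calc s * (∑ k ∈ Finset.univ.erase j, doff j k u * x u k)
            ≤ |s * (∑ k ∈ Finset.univ.erase j, doff j k u * x u k)| := le_abs_self _
          _ = |s| * |∑ k ∈ Finset.univ.erase j, doff j k u * x u k| := abs_mul _ _
          _ ≤ 1 * |∑ k ∈ Finset.univ.erase j, doff j k u * x u k| :=
              mul_le_mul_of_nonneg_right habs_s (abs_nonneg _)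
          _ = |∑ k ∈ Finset.univ.erase j, doff j k u * x u k| := one_mul _
          _ ≤ ∑ k ∈ Finset.univ.erase j, |doff j k u * x u k| :=
              Finset.abs_sum_le_sum_abs _ _
          _ ≤ ∑ k ∈ Finset.univ.erase j, |doff j k u| * v k * m u := by
              apply Finset.sum_le_sum
              intro k _
              rw [abs_mul, hxy u k, abs_mul, abs_of_pos (hv k), mul_assoc]
              exact mul_le_mul_of_nonneg_left
                (mul_le_mul_of_nonneg_left (hym u k) (hv k).le) (abs_nonneg _)
          _ = (∑ k ∈ Finset.univ.erase j, |doff j k u| * v k) * m u := by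
              rw [Finset.sum_mul]
      have hnum : s * (-(d j u) * x u j + ∑ k ∈ Finset.univ.erase j, doff j k u * x u k)
          ≤ -(d j u) * (v j * m u) + (∑ k ∈ Finset.univ.erase j, |doff j k u| * v k) * m u := by
        have e1 : s * (-(d j u) * x u j) = -(d j u) * (v j * m u) := by
          rw [show s * (-(d j u) * x u j) = -(d j u) * (s * x u j) by ring, hsx]
        rw [mul_add, e1]
        linarith [h1]
      calc s * ((-(d j u) * x u j + ∑ k ∈ Finset.univ.erase j, doff j k u * x u k) / v j)
          = (s * (-(d j u) * x u j + ∑ k ∈ Finset.univ.erase j, doff j k u * x u k)) / v j := by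
            ring
        _ ≤ (-(d j u) * (v j * m u)
              + (∑ k ∈ Finset.univ.erase j, |doff j k u| * v k) * m u) / v j := by
            exact (div_le_div_iff_of_pos_right hvj).2 hnum
        _ = (S j u - d j u) * m u := by
            rw [hS]
            field_simp
            ring
  -- Grönwall-type estimate
  have gron : ∀ (K : ℝ) (s t' : ℝ), t₀ < s → s ≤ t' →
      (∀ u ∈ Ico s t', ∀ j, |y u j| = m u → (S j u - d j u) * m u ≤ K * m u) →
      m t' ≤ m s * Real.exp (K * (t' - s)) := by
    intro K s t' hs hst hbound
    have hcont : ContinuousOn m (Icc s t') :=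
      hm_cont.mono fun z hz => le_trans hs.le hz.1
    have hf' : ∀ u ∈ Ico s t', ∀ r, (fun u => K * m u) u < r →
        ∃ᶠ z in 𝓝[>] u, (z - u)⁻¹ * (m z - m u) < r := by
      intro u hu r hr
      have hu' : t₀ < u := lt_of_lt_of_le hs hu.1
      refine (eventually_slope_lt hn y u (K * m u)
        (fun j => ((hode j u hu').div_const (v j)).continuousAt) ?_ hr).frequently
      intro j hj
      obtain ⟨L', hL', hd⟩ := hkey u hu' j hj
      exact ⟨L', hL'.trans (hbound u hu j hj), hd⟩
    have hres := le_gronwallBound_of_liminf_deriv_right_le (f := m)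
      (f' := fun u => K * m u) (δ := m s) (K := K) (ε := 0)
      hcont hf' le_rfl (fun u _ => by simp)
    have := hres t' (right_mem_Icc.2 hst)
    rwa [gronwallBound_ε0] at this
  have claimG : ∀ s t', t₀ < s → s ≤ t' → t' ≤ T →
      m t' ≤ m s * Real.exp (L * (t' - s)) := by
    intro s t' h1 h2 h3
    apply gron L s t' h1 h2
    intro u hu j _
    have hu0 : (0:ℝ) ≤ u := le_trans (le_trans ht₀ h1.le) hu.1
    have hSLu : S j u ≤ L := hSL j u ⟨hu0, le_trans hu.2.le h3⟩
    have hd' : 0 < d j u := hd_pos j u hu0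
    exact mul_le_mul_of_nonneg_right (by linarith) (hm0 u)
  have claimD : ∀ s t', t₀ < s → T ≤ s → s ≤ t' →
      m t' ≤ m s * Real.exp (-δ * (t' - s)) := by
    intro s t' h1 h2 h3
    apply gron (-δ) s t' h1 h3
    intro u hu j _
    have hTu : T ≤ u := le_trans h2 hu.1
    have hH := hH2 u hTu j
    have hvj : (0:ℝ) < v j := hv j
    have hSd : S j u - d j u ≤ -δ := by
      rw [hS, sub_le_iff_le_add, div_le_iff₀ hvj]
      nlinarith [hH]
    exact mul_le_mul_of_nonneg_right hSd (hm0 u)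
  -- pass to the limit s → t₀⁺
  have hlim : ∀ (K t' : ℝ), t₀ < t' →
      (∀ s, t₀ < s → s ≤ t' → m t' ≤ m s * Real.exp (K * (t' - s))) →
      m t' ≤ m t₀ * Real.exp (K * (t' - t₀)) := by
    intro K t' ht' H
    have htend : Filter.Tendsto (fun s => m s * Real.exp (K * (t' - s))) (𝓝[>] t₀)
        (𝓝 (m t₀ * Real.exp (K * (t' - t₀)))) := by
      apply Filter.Tendsto.mul
      · exact (hm_cont t₀ self_mem_Ici).tendsto.mono_left
          (nhdsWithin_mono _ Ioi_subset_Ici_self)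
      · exact ((Real.continuous_exp.comp
          (continuous_const.mul (continuous_const.sub continuous_id))).tendsto t₀).mono_left
          nhdsWithin_le_nhds
    refine ge_of_tendsto htend ?_
    filter_upwards [Ioc_mem_nhdsGT ht'] with s hs
    exact H s hs.1 hs.2
  intro t ht
  set t₁ : ℝ := max t₀ T with ht₁def
  have ht₁t₀ : t₀ ≤ t₁ := le_max_left _ _
  have ht₁T : T ≤ t₁ := le_max_right _ _
  have ht₁sub : t₁ - t₀ ≤ T := by
    rw [sub_le_iff_le_add, ht₁def]
    exact max_le (by linarith) (by linarith)
  have hG0 : ∀ t', t₀ ≤ t' → t' ≤ t₁ → m t' ≤ m t₀ * Real.exp (L * (t' - t₀)) := by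
    intro t' h1 h2
    rcases eq_or_lt_of_le h1 with rfl | h1'
    · simp
    · refine hlim L t' h1' fun s hs hst => ?_
      refine claimG s t' hs hst ?_
      rcases le_or_gt t' T with h | h
      · exact h
      · exact absurd h2 (not_le.2 (max_lt h1' h))
  have hmain : m t ≤ Real.exp ((L + δ) * T) * Real.exp (-δ * (t - t₀)) * m t₀ := by
    rcases le_total t t₁ with hcase | hcase
    · have h1 := hG0 t ht hcase
      have hbT : t - t₀ ≤ T := by
        have : t ≤ t₀ + T := le_trans hcase (by linarith)
        linarith
      have hexp : Real.exp (L * (t - t₀)) ≤ Real.exp ((L + δ) * T + -δ * (t - t₀)) := by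
        apply Real.exp_le_exp.2
        nlinarith [mul_le_mul_of_nonneg_left hbT (add_nonneg hL0 hδ.le), hδ.le, ht]
      calc m t ≤ m t₀ * Real.exp (L * (t - t₀)) := h1
        _ ≤ m t₀ * Real.exp ((L + δ) * T + -δ * (t - t₀)) :=
            mul_le_mul_of_nonneg_left hexp (hm0 t₀)
        _ = Real.exp ((L + δ) * T) * Real.exp (-δ * (t - t₀)) * m t₀ := by
            rw [Real.exp_add]; ring
    · have h2 : m t₁ ≤ m t₀ * Real.exp (L * (t₁ - t₀)) := hG0 t₁ ht₁t₀ le_rfl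
      have h1 : m t ≤ m t₁ * Real.exp (-δ * (t - t₁)) := by
        by_cases hq : t₀ < t₁
        · exact claimD t₁ t hq ht₁T hcase
        · have he : t₁ = t₀ := le_antisymm (not_lt.1 hq) ht₁t₀
          rcases eq_or_lt_of_le hcase with rfl | hlt2
          · simp
          · rw [he]
            rw [he] at hlt2
            exact hlim (-δ) t hlt2 fun s hs hst =>
              claimD s t hs (le_trans (he ▸ ht₁T) hs.le) hst
      have hexp : Real.exp (L * (t₁ - t₀) + -δ * (t - t₁))
          ≤ Real.exp ((L + δ) * T + -δ * (t - t₀)) := by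
        apply Real.exp_le_exp.2
        nlinarith [mul_le_mul_of_nonneg_left ht₁sub (add_nonneg hL0 hδ.le)]
      calc m t ≤ m t₁ * Real.exp (-δ * (t - t₁)) := h1
        _ ≤ (m t₀ * Real.exp (L * (t₁ - t₀))) * Real.exp (-δ * (t - t₁)) :=
            mul_le_mul_of_nonneg_right h2 (Real.exp_nonneg _)
        _ = m t₀ * Real.exp (L * (t₁ - t₀) + -δ * (t - t₁)) := by
            rw [Real.exp_add]; ring
        _ ≤ m t₀ * Real.exp ((L + δ) * T + -δ * (t - t₀)) :=
            mul_le_mul_of_nonneg_left hexp (hm0 t₀)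
        _ = Real.exp ((L + δ) * T) * Real.exp (-δ * (t - t₀)) * m t₀ := by
            rw [Real.exp_add]; ring
  -- convert back to x
  have hxB : ∀ u, ‖x u‖ ≤ B * m u := by
    intro u
    rw [pi_norm_le_iff_of_nonneg (by positivity)]
    intro i
    rw [Real.norm_eq_abs, hxy u i, abs_mul, abs_of_pos (hv i)]
    have hviB : v i ≤ B := Finset.single_le_sum (fun k _ => (hv k).le) (Finset.mem_univ i)
    exact mul_le_mul hviB (hym u i) (abs_nonneg _) hB.le
  have hmW : m t₀ ≤ W * ‖x t₀‖ := by
    rw [hm]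
    rw [pi_norm_le_iff_of_nonneg (by positivity)]
    intro i
    rw [Real.norm_eq_abs, hy]
    have : |x t₀ i / v i| = |x t₀ i| * (v i)⁻¹ := by
      rw [abs_div, abs_of_pos (hv i), div_eq_mul_inv]
    rw [this]
    have h1 : |x t₀ i| ≤ ‖x t₀‖ := by
      simpa [Real.norm_eq_abs] using norm_le_pi_norm (x t₀) i
    have h2 : (v i)⁻¹ ≤ W :=
      Finset.single_le_sum (fun k _ => (inv_pos.2 (hv k)).le) (Finset.mem_univ i)
    calc |x t₀ i| * (v i)⁻¹ ≤ ‖x t₀‖ * W :=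
          mul_le_mul h1 h2 (inv_pos.2 (hv i)).le (norm_nonneg _)
      _ = W * ‖x t₀‖ := mul_comm _ _
  calc ‖x t‖ ≤ B * m t := hxB t
    _ ≤ B * (Real.exp ((L + δ) * T) * Real.exp (-δ * (t - t₀)) * m t₀) :=
        mul_le_mul_of_nonneg_left hmain hB.le
    _ ≤ B * (Real.exp ((L + δ) * T) * Real.exp (-δ * (t - t₀)) * (W * ‖x t₀‖)) := by
        apply mul_le_mul_of_nonneg_left _ hB.le
        exact mul_le_mul_of_nonneg_left hmW (by positivity)
    _ = B * W * Real.exp ((L + δ) * T) * Real.exp (-δ * (t - t₀)) * ‖x t₀‖ := by ring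
end

section
/- Let L(t) : C → ℝⁿ, t ≥ 0, be bounded linear operators depending continuously on t in operator norm, and assume the linear delay system y'(t) = L(t)y_t is exponentially asymptotically stable: there exist k > 0 and γ > 0 such that for every t₀ ≥ 0, every solution y of y'(t) = L(t)y_t on [t₀−τ,∞) satisfies |y(t)| ≤ k·e^{−γ(t−t₀)}·‖y_{t₀}‖ for all t ≥ t₀. Let S ⊆ C and let f : [0,∞) × S → ℝⁿ be continuous and bounded, i.e. there is K ≥ 0 with |f(t,φ)| ≤ K for all (t,φ) ∈ [0,∞) × S. Then there exists M > 0 such that every solution x : [−τ,∞) → ℝⁿ of the perturbed system x'(t) = L(t)x_t + f(t,x_t) whose segments satisfy x_t ∈ S for all t ≥ 0 satisfies limsup_{t→∞} |x(t)| ≤ M. -/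
open scoped Topology

section SegLemmas
variable {τ : ℝ} {E : Type*}

lemma seg_apply [TopologicalSpace E] (x : C(ℝ, E)) (t : ℝ) (θ : Set.Icc (-τ) (0:ℝ)) :
    seg τ x t θ = x (t + θ.1) := rfl

lemma continuous_seg [TopologicalSpace E] (y : C(ℝ, E)) :
    Continuous (fun t => seg τ y t) := by
  have : (fun t => seg τ y t) = fun t => (ContinuousMap.curry (y.comp ⟨fun p : ℝ × Set.Icc (-τ) (0:ℝ) => p.1 + p.2.1,
      (continuous_fst).add (continuous_subtype_val.comp continuous_snd)⟩)) t := by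
    funext t; ext θ; rfl
  rw [this]
  exact (ContinuousMap.curry _).continuous

lemma seg_sub [TopologicalSpace E] [AddGroup E] [IsTopologicalAddGroup E]
    (x y : C(ℝ, E)) (t : ℝ) :
    seg τ (x - y) t = seg τ x t - seg τ y t := by
  ext θ; rfl

variable [NormedAddCommGroup E]

lemma norm_seg_le (y : C(ℝ, E)) (t : ℝ) {C : ℝ} (hC : 0 ≤ C)
    (h : ∀ r ∈ Set.Icc (t - τ) t, ‖y r‖ ≤ C) : ‖seg τ y t‖ ≤ C := by
  rw [ContinuousMap.norm_le _ hC]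
  intro θ
  exact h (t + θ.1) ⟨by linarith [θ.2.1], by linarith [θ.2.2]⟩

lemma seg_eq_of_eqOn {x y : C(ℝ, E)} {t : ℝ}
    (h : ∀ r ≤ t, x r = y r) : seg τ x t = seg τ y t := by
  ext θ; exact h (t + θ.1) (by linarith [θ.2.2])

end SegLemmas

section Existence

variable {E : Type*} [NormedAddCommGroup E] [NormedSpace ℝ E] [CompleteSpace E]

/-- Existence of a global solution of the linear delay system continuing a given
history `g` from time `a` onwards. -/
lemma exists_linear_continuation {τ : ℝ} (hτ : 0 ≤ τ)
    (L : ℝ → (C(Set.Icc (-τ) (0:ℝ), E) →L[ℝ] E))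
    (hL : ContinuousOn L (Set.Ici (0:ℝ)))
    (g : C(ℝ, E)) (a : ℝ) (ha : 0 ≤ a) :
    ∃ y : C(ℝ, E), (∀ t ≤ a, y t = g t) ∧
      ∀ t > a, HasDerivAt (fun s => y s) ((L t) (seg τ y t)) t := by
  classical
  -- the auxiliary weight
  set ℓ : ℝ → ℝ := fun s => ‖L (max s 0)‖ + 1 with hℓdef
  have hℓcont : Continuous ℓ := by
    have hm : Continuous fun s : ℝ => max s 0 := continuous_id.max continuous_const
    have h1 : Continuous (L ∘ fun s : ℝ => max s 0) :=
      hL.comp_continuous hm (fun s => Set.mem_Ici.2 (le_max_right _ _))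
    have h2 := Continuous.norm (E := C(Set.Icc (-τ) (0:ℝ), E) →L[ℝ] E) h1
    exact h2.add continuous_const
  have hℓ1 : ∀ s, 1 ≤ ℓ s := fun s => by
    simp only [hℓdef]; linarith [norm_nonneg (L (max s 0))]
  have hℓ0 : ∀ s, 0 ≤ ℓ s := fun s => le_trans zero_le_one (hℓ1 s)
  have hℓL : ∀ s, 0 ≤ s → ‖L s‖ ≤ ℓ s := by
    intro s hs
    simp only [hℓdef, max_eq_left hs]
    linarith
  set W : ℝ → ℝ := fun t => ∫ s in a..t, 2 * ℓ s with hWdef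
  have hWderiv : ∀ t, HasDerivAt W (2 * ℓ t) t := fun t =>
    ((continuous_const.mul hℓcont).integral_hasStrictDerivAt a t).hasDerivAt
  have hWa : W a = 0 := by simp [hWdef]
  have hWcont : Continuous W :=
    continuous_iff_continuousAt.2 fun t => (hWderiv t).continuousAt
  have hExpW : Continuous fun s => Real.exp (W s) := Real.continuous_exp.comp hWcont
  have hWmono : ∀ ⦃s t : ℝ⦄, s ≤ t → W s ≤ W t := by
    intro s t hst
    have : W t - W s = ∫ r in s..t, 2 * ℓ r := by
      simp only [hWdef]
      exact intervalIntegral.integral_interval_sub_left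
        ((continuous_const.mul hℓcont).intervalIntegrable a t)
        ((continuous_const.mul hℓcont).intervalIntegrable a s)
    have hnn : (0:ℝ) ≤ ∫ r in s..t, 2 * ℓ r :=
      intervalIntegral.integral_nonneg hst (fun u _ => by positivity)
    linarith
  have hWnn : ∀ t, a ≤ t → 0 ≤ W t := fun t ht => hWa ▸ hWmono ht
  -- the key integral identity
  have hkey : ∀ t, (∫ s in a..t, ℓ s * Real.exp (W s)) = (Real.exp (W t) - 1) / 2 := by
    intro t
    have : ∀ s, HasDerivAt (fun r => Real.exp (W r) / 2) (ℓ s * Real.exp (W s)) s := by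
      intro s
      have := ((hWderiv s).exp).div_const 2
      rw [show ℓ s * Real.exp (W s) = Real.exp (W s) * (2 * ℓ s) / 2 by ring]
      exact this
    rw [intervalIntegral.integral_eq_sub_of_hasDerivAt (fun s _ => this s)
      ((hℓcont.mul (Real.continuous_exp.comp (hWcont))).intervalIntegrable a t)]
    rw [hWa]; simp [Real.exp_zero]; ring
  -- bound for the history
  obtain ⟨Cg0, hCg0⟩ := (isCompact_Icc (a := a - τ) (b := a)).exists_bound_of_continuousOn
      (g.continuous.continuousOn)
  set Cg := max Cg0 0 with hCgdef
  have hCg : ∀ r ∈ Set.Icc (a - τ) a, ‖g r‖ ≤ Cg := fun r hr =>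
    (hCg0 r hr).trans (le_max_left _ _)
  have hCgnn : 0 ≤ Cg := le_max_right _ _
  -- the complete space of weighted functions
  set Xs : Set (BoundedContinuousFunction ℝ E) := {u | ∀ s, s ≤ a → u s = 0} with hXs
  have hXcl : IsClosed Xs := by
    have : Xs = ⋂ (s : ℝ) (_ : s ≤ a), {u : BoundedContinuousFunction ℝ E | u s = 0} := by
      ext u; simp [hXs]
    rw [this]
    exact isClosed_iInter fun s => isClosed_iInter fun _ =>
      isClosed_eq (continuous_eval_const s) continuous_const
  haveI : CompleteSpace Xs := hXcl.completeSpace_coe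
  haveI : Nonempty Xs := ⟨⟨0, fun s _ => rfl⟩⟩
  -- reconstruction of a function from its weighted part
  let yf : Xs → C(ℝ, E) := fun u =>
    ⟨fun t => g (min t a) + Real.exp (W (max t a)) • u.1 t,
     (g.continuous.comp (continuous_id.min continuous_const)).add
       ((Real.continuous_exp.comp (hWcont.comp (continuous_id.max continuous_const))).smul
         u.1.continuous)⟩
  have hyf_apply : ∀ u t, yf u t = g (min t a) + Real.exp (W (max t a)) • u.1 t :=
    fun u t => rfl
  have hyf_past : ∀ u, ∀ t ≤ a, yf u t = g t := by
    intro u t ht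
    rw [hyf_apply, min_eq_left ht, max_eq_right ht, u.2 t ht, smul_zero, add_zero]
  have hyf_seg : ∀ u : Xs, ∀ s, a ≤ s → ‖seg τ (yf u) s‖ ≤ Cg + Real.exp (W s) * ‖u.1‖ := by
    intro u s hs
    have hup : (0:ℝ) ≤ Real.exp (W s) * ‖u.1‖ := by positivity
    apply norm_seg_le _ _ (by linarith)
    intro r hr
    rw [hyf_apply]
    have h1 : ‖g (min r a)‖ ≤ Cg := by
      refine hCg _ ⟨le_min (by linarith [hr.1]) (by linarith), min_le_right _ _⟩
    have h2 : W (max r a) ≤ W s := hWmono (max_le hr.2 hs)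
    have h5 := norm_add_le (g (min r a)) (Real.exp (W (max r a)) • u.1 r)
    rw [norm_smul, Real.norm_eq_abs, abs_of_pos (Real.exp_pos _)] at h5
    have h3 : ‖u.1 r‖ ≤ ‖u.1‖ := u.1.norm_coe_le_norm r
    have h4 : Real.exp (W (max r a)) ≤ Real.exp (W s) := Real.exp_le_exp.2 h2
    nlinarith [Real.exp_pos (W (max r a)), norm_nonneg (u.1 r), Real.exp_pos (W s),
      norm_nonneg u.1]
  -- the integrand
  let Gf : Xs → ℝ → E := fun u s => (L (max s a)) (seg τ (yf u) (max s a))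
  have hmaxa : Continuous fun s : ℝ => max s a := continuous_id.max continuous_const
  have hGcont : ∀ u, Continuous (Gf u) := by
    intro u
    have hLc : Continuous (L ∘ fun s : ℝ => max s a) :=
      hL.comp_continuous hmaxa (fun s => le_trans ha (le_max_right _ _))
    have hsg : Continuous fun s : ℝ => seg τ (yf u) (max s a) :=
      (continuous_seg (yf u)).comp hmaxa
    exact hLc.clm_apply hsg
  have hGbound : ∀ u : Xs, ∀ s, a ≤ s →
      ‖Gf u s‖ ≤ ℓ s * Cg + (ℓ s * Real.exp (W s)) * ‖u.1‖ := by
    intro u s hs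
    have h1 : ‖Gf u s‖ ≤ ‖L (max s a)‖ * ‖seg τ (yf u) (max s a)‖ :=
      (L (max s a)).le_opNorm _
    rw [max_eq_left hs] at h1
    have h2 := hyf_seg u s hs
    have h3 := hℓL s (le_trans ha hs)
    nlinarith [norm_nonneg (L s), hℓ0 s, Real.exp_pos (W s), norm_nonneg u.1,
      norm_nonneg (seg τ (yf u) s)]
  have hPderiv : ∀ (u : Xs) (t : ℝ),
      HasDerivAt (fun r => ∫ s in a..r, Gf u s) (Gf u t) t := fun u t =>
    ((hGcont u).integral_hasStrictDerivAt a t).hasDerivAt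
  have hPcont : ∀ u : Xs, Continuous fun r => ∫ s in a..r, Gf u s := fun u =>
    continuous_iff_continuousAt.2 fun r => (hPderiv u r).continuousAt
  have hPbound : ∀ u : Xs, ∀ t, a ≤ t →
      ‖∫ s in a..t, Gf u s‖ ≤ Cg * (W t / 2) + ‖u.1‖ * ((Real.exp (W t) - 1) / 2) := by
    intro u t ht
    have hWhalf : (∫ s in a..t, ℓ s) = W t / 2 := by
      have : W t = ∫ s in a..t, 2 * ℓ s := rfl
      rw [this, intervalIntegral.integral_const_mul]; ring
    have hInt1 : IntervalIntegrable (fun s => ℓ s * Cg + (ℓ s * Real.exp (W s)) * ‖u.1‖)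
        MeasureTheory.volume a t :=
      (((hℓcont.mul continuous_const).add
        ((hℓcont.mul (hExpW)).mul continuous_const))).intervalIntegrable a t
    calc ‖∫ s in a..t, Gf u s‖ ≤ ∫ s in a..t, ‖Gf u s‖ :=
            intervalIntegral.norm_integral_le_integral_norm ht
      _ ≤ ∫ s in a..t, (ℓ s * Cg + (ℓ s * Real.exp (W s)) * ‖u.1‖) :=
            intervalIntegral.integral_mono_on ht ((hGcont u).norm.intervalIntegrable a t) hInt1
              (fun s hs => hGbound u s hs.1)
      _ = Cg * (W t / 2) + ‖u.1‖ * ((Real.exp (W t) - 1) / 2) := by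
            rw [intervalIntegral.integral_add (f := fun s => ℓ s * Cg)
                (g := fun s => ℓ s * Real.exp (W s) * ‖u.1‖)
                ((hℓcont.mul continuous_const).intervalIntegrable a t)
                (((hℓcont.mul (hExpW)).mul
                  continuous_const).intervalIntegrable a t),
              intervalIntegral.integral_mul_const, intervalIntegral.integral_mul_const,
              hWhalf, hkey t]
            ring
  -- two elementary exponential bounds
  have hexp1 : ∀ x : ℝ, 0 ≤ x → x * Real.exp (-x) ≤ 1 := by
    intro x hx
    have h1 : x ≤ Real.exp x := by linarith [Real.add_one_le_exp x]
    have h2 : 0 < Real.exp (-x) := Real.exp_pos _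
    have h3 : Real.exp x * Real.exp (-x) = 1 := by
      rw [← Real.exp_add]; simp
    nlinarith
  have hexp2 : ∀ x : ℝ, Real.exp (-x) * (Real.exp x - 1) ≤ 1 := by
    intro x
    have h3 : Real.exp (-x) * Real.exp x = 1 := by
      rw [← Real.exp_add]; simp
    nlinarith [Real.exp_pos (-x)]
  -- the contraction operator
  let Tf : Xs → Xs := fun u =>
    ⟨BoundedContinuousFunction.ofNormedAddCommGroup
      (fun t => Real.exp (-W (max t a)) • ∫ s in a..(max t a), Gf u s)
      (((Real.continuous_exp.comp (hWcont.comp hmaxa).neg)).smul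
        ((hPcont u).comp hmaxa))
      (Cg + ‖u.1‖)
      (by
        intro t
        have hm : a ≤ max t a := le_max_right _ _
        rw [norm_smul, Real.norm_eq_abs, abs_of_pos (Real.exp_pos _)]
        have h1 := hPbound u (max t a) hm
        have h2 := hexp1 (W (max t a)) (hWnn _ hm)
        have h3 := hexp2 (W (max t a))
        have h4 : 0 < Real.exp (-W (max t a)) := Real.exp_pos _
        nlinarith [norm_nonneg u.1, norm_nonneg (∫ s in a..(max t a), Gf u s),
          hWnn _ hm]),
     by
        intro s hs
        have : max s a = a := max_eq_right hs
        simp [BoundedContinuousFunction.coe_ofNormedAddCommGroup, this]⟩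
  have hTf_apply : ∀ (u : Xs) (t : ℝ),
      (Tf u).1 t = Real.exp (-W (max t a)) • ∫ s in a..(max t a), Gf u s := fun u t => rfl
  -- contraction estimate
  have hdist : ∀ u v : Xs, dist (Tf u) (Tf v) ≤ (1/2 : ℝ) * dist u v := by
    intro u v
    have hduv : dist u v = dist u.1 v.1 := Subtype.dist_eq u v
    rw [hduv] at *
    have hd0 : (0:ℝ) ≤ dist u.1 v.1 := dist_nonneg
    rw [Subtype.dist_eq]
    refine BoundedContinuousFunction.dist_le (by positivity) |>.2 ?_
    intro t
    set m := max t a with hm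
    have hma : a ≤ m := le_max_right _ _
    have hGdiff : ∀ s, a ≤ s →
        ‖Gf u s - Gf v s‖ ≤ (ℓ s * Real.exp (W s)) * dist u.1 v.1 := by
      intro s hs
      have hGsub : Gf u s - Gf v s = (L (max s a)) (seg τ (yf u - yf v) (max s a)) := by
        rw [seg_sub, map_sub]
      rw [hGsub, max_eq_left hs]
      have h1 : ‖(L s) (seg τ (yf u - yf v) s)‖ ≤ ‖L s‖ * ‖seg τ (yf u - yf v) s‖ :=
        (L s).le_opNorm _
      have h2 : ‖seg τ (yf u - yf v) s‖ ≤ Real.exp (W s) * dist u.1 v.1 := by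
        apply norm_seg_le _ _ (by positivity)
        intro r hr
        have hsubr : (yf u - yf v) r = Real.exp (W (max r a)) • (u.1 r - v.1 r) := by
          simp only [ContinuousMap.sub_apply, hyf_apply, smul_sub]
          abel
        rw [hsubr, norm_smul, Real.norm_eq_abs, abs_of_pos (Real.exp_pos _)]
        have h3 : ‖u.1 r - v.1 r‖ ≤ dist u.1 v.1 := by
          rw [← dist_eq_norm]; exact BoundedContinuousFunction.dist_coe_le_dist r
        have h4 : Real.exp (W (max r a)) ≤ Real.exp (W s) :=
          Real.exp_le_exp.2 (hWmono (max_le hr.2 hs))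
        nlinarith [Real.exp_pos (W (max r a)), norm_nonneg (u.1 r - v.1 r),
          Real.exp_pos (W s)]
      have h3 := hℓL s (le_trans ha hs)
      nlinarith [norm_nonneg (L s), norm_nonneg (seg τ (yf u - yf v) s), hℓ0 s,
        Real.exp_pos (W s)]
    rw [dist_eq_norm, hTf_apply, hTf_apply, ← hm, ← smul_sub,
      ← intervalIntegral.integral_sub ((hGcont u).intervalIntegrable a m)
        ((hGcont v).intervalIntegrable a m)]
    rw [norm_smul, Real.norm_eq_abs, abs_of_pos (Real.exp_pos _)]
    have h5 : ‖∫ s in a..m, (Gf u s - Gf v s)‖ ≤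
        ((Real.exp (W m) - 1) / 2) * dist u.1 v.1 := by
      calc ‖∫ s in a..m, (Gf u s - Gf v s)‖ ≤ ∫ s in a..m, ‖Gf u s - Gf v s‖ :=
            intervalIntegral.norm_integral_le_integral_norm hma
        _ ≤ ∫ s in a..m, (ℓ s * Real.exp (W s)) * dist u.1 v.1 :=
            intervalIntegral.integral_mono_on hma
              (((hGcont u).sub (hGcont v)).norm.intervalIntegrable a m)
              (((hℓcont.mul (hExpW)).mul
                continuous_const).intervalIntegrable a m)
              (fun s hs => hGdiff s hs.1)
        _ = ((Real.exp (W m) - 1) / 2) * dist u.1 v.1 := by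
            rw [intervalIntegral.integral_mul_const, hkey m]
    have h6 := hexp2 (W m)
    have h7 : 0 < Real.exp (-W m) := Real.exp_pos _
    nlinarith [norm_nonneg (∫ s in a..m, (Gf u s - Gf v s))]
  have hcontr : ContractingWith (1/2 : NNReal) Tf := by
    constructor
    · rw [← NNReal.coe_lt_coe]; norm_num
    · apply LipschitzWith.of_dist_le_mul
      intro u v
      have h := hdist u v
      have : ((1/2 : NNReal) : ℝ) = 1/2 := by norm_num
      rw [this]
      exact h
  set u0 := hcontr.fixedPoint Tf with hu0def
  have hfix : Tf u0 = u0 := hcontr.fixedPoint_isFixedPt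
  refine ⟨yf u0, fun t ht => hyf_past u0 t ht, ?_⟩
  intro t ht
  have hta : a ≤ t := le_of_lt ht
  have hid : ∀ r, a ≤ r → yf u0 r = g a + ∫ s in a..r, Gf u0 s := by
    intro r hr
    have h1 : (Tf u0).1 r = u0.1 r := by rw [hfix]
    rw [hTf_apply, max_eq_left hr] at h1
    rw [hyf_apply, min_eq_right hr, max_eq_left hr, ← h1, smul_smul, ← Real.exp_add]
    simp
  have heq : (fun s => yf u0 s) =ᶠ[𝓝 t] fun r => g a + ∫ s in a..r, Gf u0 s := by
    filter_upwards [Ioi_mem_nhds ht] with r hr using hid r (le_of_lt hr)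
  have hD : HasDerivAt (fun r => g a + ∫ s in a..r, Gf u0 s) (Gf u0 t) t :=
    (hPderiv u0 t).const_add _
  have hfin := hD.congr_of_eventuallyEq heq
  have : Gf u0 t = (L t) (seg τ (yf u0) t) := by
    show (L (max t a)) (seg τ (yf u0) (max t a)) = _
    rw [max_eq_left hta]
  rwa [this] at hfin

end Existence


set_option maxHeartbeats 1000000 in
/-- If the linear delay system `y'(t) = L(t) y_t` is exponentially asymptotically stable
and `f` is continuous and bounded on `[0,∞) × S`, then the perturbed system
`x'(t) = L(t) x_t + f(t, x_t)` is dissipative: all its solutions with segments in `S`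
satisfy `limsup_{t→∞} |x(t)| ≤ M` for a uniform `M > 0`. -/
theorem perturbed_dissipative
    (n : ℕ) (hn : 1 ≤ n) (τ : ℝ) (hτ : 0 ≤ τ)
    (L : ℝ → (C(Set.Icc (-τ) (0 : ℝ), Fin n → ℝ) →L[ℝ] (Fin n → ℝ)))
    (hL_cont : ContinuousOn L (Set.Ici (0 : ℝ)))
    -- exponential asymptotic stability of the linear system
    (hstab : ∃ k > 0, ∃ γ > 0, ∀ t₀ ≥ (0 : ℝ), ∀ y : C(ℝ, Fin n → ℝ),
      (∀ t > t₀, HasDerivAt (fun s => y s) (L t (seg τ y t)) t) →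
      ∀ t ≥ t₀, ‖y t‖ ≤ k * Real.exp (-γ * (t - t₀)) * ‖seg τ y t₀‖)
    (S : Set C(Set.Icc (-τ) (0 : ℝ), Fin n → ℝ))
    (f : ℝ → C(Set.Icc (-τ) (0 : ℝ), Fin n → ℝ) → (Fin n → ℝ))
    (hf_cont : ContinuousOn (fun p : ℝ × C(Set.Icc (-τ) (0 : ℝ), Fin n → ℝ) => f p.1 p.2)
      (Set.Ici (0 : ℝ) ×ˢ S))
    -- boundedness of f on [0,∞) × S
    (K : ℝ) (hK : 0 ≤ K) (hfK : ∀ t ≥ (0 : ℝ), ∀ φ ∈ S, ‖f t φ‖ ≤ K) :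
    ∃ M > 0, ∀ x : C(ℝ, Fin n → ℝ),
      (∀ t > (0 : ℝ), HasDerivAt (fun s => x s) (L t (seg τ x t) + f t (seg τ x t)) t) →
      (∀ t ≥ (0 : ℝ), seg τ x t ∈ S) →
      -- limsup_{t→∞} ‖x(t)‖ ≤ M
      ∀ ε > 0, ∀ᶠ t in Filter.atTop, ‖x t‖ ≤ M + ε := by
  classical
  obtain ⟨k, hk, γ, hγ, hst⟩ := hstab
  refine ⟨6 * k * K / γ + 1, by positivity, ?_⟩
  intro x hx hxS ε hε
  -- linear continuations of `x` from any time `a ≥ 0`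
  have hw : ∀ a : ℝ, 0 ≤ a → ∃ y : C(ℝ, Fin n → ℝ), (∀ r ≤ a, y r = x r) ∧
      ∀ t' > a, HasDerivAt (fun s => y s) ((L t') (seg τ y t')) t' :=
    fun a haa => exists_linear_continuation hτ L hL_cont x a haa
  choose w hw1 hw2 using hw
  -- continuity of the perturbed vector field along x
  have hseg_cont : Continuous fun r : ℝ => seg τ x r := continuous_seg x
  have hxfield : ContinuousOn (fun r => (L r) (seg τ x r) + f r (seg τ x r))
      (Set.Ici (0:ℝ)) := by
    apply ContinuousOn.add
    · exact hL_cont.clm_apply hseg_cont.continuousOn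
    · have hmap : Set.MapsTo (fun r : ℝ => (r, seg τ x r)) (Set.Ici (0:ℝ))
          (Set.Ici (0:ℝ) ×ˢ S) := fun r hr => ⟨hr, hxS r hr⟩
      exact hf_cont.comp (continuous_id.prodMk hseg_cont).continuousOn hmap
  -- the main pointwise estimate
  have hmain : ∀ t : ℝ, 0 < t →
      ‖x t‖ ≤ k * Real.exp (-γ * t) * ‖seg τ x 0‖ + 6 * k * K / γ := by
    intro t htpos
    -- bound for the operator norms on [0, t]
    obtain ⟨B0, hB0⟩ := IsCompact.exists_bound_of_continuousOn
      (E := C(Set.Icc (-τ) (0:ℝ), Fin n → ℝ) →L[ℝ] (Fin n → ℝ))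
      (isCompact_Icc (a := (0:ℝ)) (b := t))
      (hL_cont.mono (Set.Icc_subset_Ici_self))
    set B := max B0 1 with hBdef
    have hB1 : (1:ℝ) ≤ B := le_max_right _ _
    have hBpos : (0:ℝ) < B := lt_of_lt_of_le one_pos hB1
    have hB : ∀ r ∈ Set.Icc (0:ℝ) t, ‖L r‖ ≤ B := fun r hr =>
      (hB0 r hr).trans (le_max_left _ _)
    -- the partition
    set N := ⌈t * (γ + 2 * B)⌉₊ with hNdef
    have hNpos : 0 < N := Nat.ceil_pos.2 (by positivity)
    have hNR : (0:ℝ) < N := by exact_mod_cast hNpos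
    set δ := t / N with hδdef
    have hδpos : 0 < δ := by positivity
    have hδ1 : δ * (γ + 2 * B) ≤ 1 := by
      have h1 : t * (γ + 2 * B) ≤ N := Nat.le_ceil _
      rw [hδdef, div_mul_eq_mul_div, div_le_one hNR]
      linarith
    have hδB : B * δ ≤ 1 / 2 := by nlinarith
    have hδγ : γ * δ ≤ 1 := by nlinarith
    have hu0 : ∀ j : ℕ, 0 ≤ (j : ℝ) * δ := fun j => by positivity
    have huN : (N : ℝ) * δ = t := by
      rw [hδdef]; field_simp
    have hujle : ∀ j : ℕ, j ≤ N → (j : ℝ) * δ ≤ t := by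
      intro j hj
      rw [← huN]
      have : (j : ℝ) ≤ (N : ℝ) := by exact_mod_cast hj
      nlinarith
    -- key estimate : x stays close to the linear continuation on one step
    have key : ∀ j : ℕ, j < N → ∀ r ≤ ((j+1:ℕ):ℝ) * δ,
        ‖x r - w ((j:ℝ)*δ) (hu0 j) r‖ ≤ 2 * K * δ := by
      intro j hj
      have hcast : ((j+1:ℕ):ℝ) = (j:ℝ)+1 := by push_cast; ring
      rw [hcast]
      set a := (j:ℝ) * δ with hadef
      set b := ((j:ℝ)+1) * δ with hbdef
      have hab : a < b := by nlinarith
      have ha0 : 0 ≤ a := hu0 j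
      have hbt : b ≤ t := by
        have := hujle (j+1) hj
        push_cast at this ⊢
        linarith
      set W := w a (hu0 j) with hWdef
      set d : ℝ → Fin n → ℝ := fun r => x r - W r with hddef
      have hdcont : Continuous d := x.continuous.sub W.continuous
      -- d vanishes up to a
      have hdpast : ∀ r ≤ a, d r = 0 := by
        intro r hr
        rw [hddef]
        simp only
        rw [hw1 a (hu0 j) r hr, sub_self]
      -- maximum of ‖d‖ on [a, b]
      obtain ⟨r0, hr0mem, hr0max⟩ := (isCompact_Icc (a := a) (b := b)).exists_isMaxOn
        (Set.nonempty_Icc.2 hab.le) hdcont.norm.continuousOn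
      set m := ‖d r0‖ with hmdef
      have hm0 : 0 ≤ m := norm_nonneg _
      have hdlem : ∀ r ≤ b, ‖d r‖ ≤ m := by
        intro r hr
        rcases le_or_gt r a with h | h
        · rw [hdpast r h]; simpa using hm0
        · exact hr0max ⟨h.le, hr⟩
      have hsegd : ∀ s, s ≤ b → ‖seg τ (x - W) s‖ ≤ m := by
        intro s hs
        apply norm_seg_le _ _ hm0
        intro r hr
        have : (x - W) r = d r := by simp [hddef]
        rw [this]
        exact hdlem r (le_trans hr.2 hs)
      -- the integral identity on [a, s]
      have hint : ∀ s ∈ Set.Icc a b, ‖d s‖ ≤ (B * m + K) * δ := by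
        intro s hs
        have has : a ≤ s := hs.1
        have hsub1 : Set.Icc a s ⊆ Set.Icc (0:ℝ) t :=
          Set.Icc_subset_Icc ha0 (le_trans hs.2 hbt)
        have hsub2 : Set.Icc a s ⊆ Set.Ici (0:ℝ) := fun r hr => le_trans ha0 hr.1
        -- FTC for x
        have hFx : (∫ r in a..s, ((L r) (seg τ x r) + f r (seg τ x r))) = x s - x a := by
          apply intervalIntegral.integral_eq_sub_of_hasDerivAt_of_le has
            x.continuous.continuousOn
          · intro r hr
            exact hx r (lt_of_le_of_lt ha0 hr.1)
          · exact (hxfield.mono hsub2).intervalIntegrable_of_Icc has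
        -- FTC for W
        have hWfield : ContinuousOn (fun r => (L r) (seg τ W r)) (Set.Ici (0:ℝ)) :=
          hL_cont.clm_apply (continuous_seg W).continuousOn
        have hFW : (∫ r in a..s, (L r) (seg τ W r)) = W s - W a := by
          apply intervalIntegral.integral_eq_sub_of_hasDerivAt_of_le has
            W.continuous.continuousOn
          · intro r hr
            exact hw2 a (hu0 j) r hr.1
          · exact (hWfield.mono hsub2).intervalIntegrable_of_Icc has
        have hxa : x a = W a := (hw1 a (hu0 j) a le_rfl).symm
        have hds : d s = ∫ r in a..s, ((L r) (seg τ (x - W) r) + f r (seg τ x r)) := by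
          have hcongr : ∀ r ∈ Set.uIcc a s,
              (L r) (seg τ (x - W) r) + f r (seg τ x r) =
              ((L r) (seg τ x r) + f r (seg τ x r)) - (L r) (seg τ W r) := by
            intro r _
            rw [seg_sub, map_sub]
            abel
          rw [intervalIntegral.integral_congr hcongr,
            intervalIntegral.integral_sub
              ((hxfield.mono hsub2).intervalIntegrable_of_Icc has)
              ((hWfield.mono hsub2).intervalIntegrable_of_Icc has),
            hFx, hFW, hddef]
          simp only
          rw [hxa]
          abel
        rw [hds]
        have hbnd : ∀ r ∈ Set.uIoc a s,
            ‖(L r) (seg τ (x - W) r) + f r (seg τ x r)‖ ≤ B * m + K := by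
          intro r hr
          rw [Set.uIoc_of_le has] at hr
          have hr1 : a ≤ r := hr.1.le
          have hr2 : r ≤ s := hr.2
          have hr0 : (0:ℝ) ≤ r := le_trans ha0 hr1
          have h1 : ‖(L r) (seg τ (x - W) r)‖ ≤ B * m := by
            have := (L r).le_opNorm (seg τ (x - W) r)
            have h2 := hsegd r (le_trans hr2 hs.2)
            have h3 := hB r ⟨hr0, le_trans hr2 (le_trans hs.2 hbt)⟩
            nlinarith [norm_nonneg (L r), norm_nonneg (seg τ (x - W) r)]
          have h2 : ‖f r (seg τ x r)‖ ≤ K := hfK r hr0 _ (hxS r hr0)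
          calc ‖(L r) (seg τ (x - W) r) + f r (seg τ x r)‖
              ≤ ‖(L r) (seg τ (x - W) r)‖ + ‖f r (seg τ x r)‖ := norm_add_le _ _
            _ ≤ B * m + K := add_le_add h1 h2
        have := intervalIntegral.norm_integral_le_of_norm_le_const hbnd
        have habs : |s - a| ≤ δ := by
          rw [abs_of_nonneg (by linarith)]
          have : b - a = δ := by rw [hbdef, hadef]; ring
          linarith [hs.2]
        have hBmK : 0 ≤ B * m + K := by positivity
        calc ‖∫ r in a..s, ((L r) (seg τ (x - W) r) + f r (seg τ x r))‖
            ≤ (B * m + K) * |s - a| := this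
          _ ≤ (B * m + K) * δ := by nlinarith
      -- solve for m
      have hmbound : m ≤ 2 * K * δ := by
        have h1 := hint r0 hr0mem
        rw [← hmdef] at h1
        nlinarith
      intro r hr
      have : x r - W r = d r := rfl
      rw [this]
      exact le_trans (hdlem r hr) hmbound
    -- telescoping sum
    set q := Real.exp (-(γ * δ)) with hqdef
    have hq0 : 0 < q := Real.exp_pos _
    have hq1 : q < 1 := by
      rw [hqdef]
      apply Real.exp_lt_one_iff.2
      nlinarith
    set F : ℕ → Fin n → ℝ := fun j => w ((j:ℝ)*δ) (hu0 j) t with hFdef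
    have hterm : ∀ j : ℕ, j < N →
        ‖F (j+1) - F j‖ ≤ k * q ^ (N - 1 - j) * (2 * K * δ) := by
      intro j hj
      have hj1N : j + 1 ≤ N := hj
      have ht0le : ((j+1:ℕ):ℝ) * δ ≤ t := hujle (j+1) hj1N
      have ht00 : (0:ℝ) ≤ ((j+1:ℕ):ℝ) * δ := hu0 (j+1)
      set y1 : C(ℝ, Fin n → ℝ) := w (((j+1:ℕ):ℝ) * δ) (hu0 (j+1)) with hy1def
      set y2 : C(ℝ, Fin n → ℝ) := w (((j:ℕ):ℝ) * δ) (hu0 j) with hy2def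
      have hderiv : ∀ t' > ((j+1:ℕ):ℝ) * δ,
          HasDerivAt (fun s => (y1 - y2) s) ((L t') (seg τ (y1 - y2) t')) t' := by
        intro t' ht'
        have hjlt : ((j:ℕ):ℝ) * δ < t' := by
          have : ((j:ℕ):ℝ) * δ ≤ ((j+1:ℕ):ℝ) * δ := by
            have : ((j:ℕ):ℝ) ≤ ((j+1:ℕ):ℝ) := by exact_mod_cast Nat.le_succ j
            nlinarith
          linarith
        have h1 := hw2 _ (hu0 (j+1)) t' ht'
        have h2 := hw2 _ (hu0 j) t' hjlt
        have h3 := h1.sub h2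
        rw [seg_sub, map_sub]
        exact h3
      have hbd := hst (((j+1:ℕ):ℝ) * δ) ht00 (y1 - y2) hderiv t ht0le
      have hsegbd : ‖seg τ (y1 - y2) (((j+1:ℕ):ℝ) * δ)‖ ≤ 2 * K * δ := by
        apply norm_seg_le _ _ (by positivity)
        intro r hr
        have hr2 : r ≤ ((j+1:ℕ):ℝ) * δ := hr.2
        have h1 : (y1 - y2) r = x r - y2 r := by
          simp only [ContinuousMap.sub_apply]
          rw [hy1def, hw1 _ (hu0 (j+1)) r hr2]
        rw [h1]
        exact key j hj r hr2
      have hexp : Real.exp (-γ * (t - ((j+1:ℕ):ℝ) * δ)) = q ^ (N - 1 - j) := by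
        have hcN : ((N - 1 - j:ℕ):ℝ) = (N:ℝ) - ((j:ℝ)+1) := by
          have h1 : N - 1 - j = N - (j+1) := by omega
          rw [h1, Nat.cast_sub hj1N]
          push_cast; ring
        have h2 : -γ * (t - ((j+1:ℕ):ℝ) * δ) = ((N - 1 - j:ℕ):ℝ) * (-(γ * δ)) := by
          rw [hcN, ← huN]
          push_cast; ring
        rw [h2, Real.exp_nat_mul, hqdef]
      have hFy : F (j+1) - F j = (y1 - y2) t := by
        simp [hFdef, hy1def, hy2def, ContinuousMap.sub_apply]
      rw [hFy]
      calc ‖(y1 - y2) t‖ ≤ k * Real.exp (-γ * (t - ((j+1:ℕ):ℝ) * δ)) *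
            ‖seg τ (y1 - y2) (((j+1:ℕ):ℝ) * δ)‖ := hbd
        _ ≤ k * q ^ (N - 1 - j) * (2 * K * δ) := by
            rw [hexp]
            have h9 := mul_le_mul_of_nonneg_left hsegbd
              (by positivity : (0:ℝ) ≤ k * q ^ (N - 1 - j))
            calc k * q ^ (N - 1 - j) * ‖seg τ (y1 - y2) (((j+1:ℕ):ℝ) * δ)‖
                = k * q ^ (N - 1 - j) * ‖seg τ (y1 - y2) (((j+1:ℕ):ℝ) * δ)‖ := rfl
              _ ≤ k * q ^ (N - 1 - j) * (2 * K * δ) := h9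
    have hFN : F N = x t := by
      rw [hFdef]
      exact hw1 _ (hu0 N) t (le_of_eq huN.symm)
    have htel : x t - F 0 = ∑ j ∈ Finset.range N, (F (j+1) - F j) := by
      rw [Finset.sum_range_sub, hFN]
    have hsum : ‖x t - F 0‖ ≤ ∑ j ∈ Finset.range N, (k * q ^ (N - 1 - j) * (2 * K * δ)) := by
      rw [htel]
      exact (norm_sum_le _ _).trans
        (Finset.sum_le_sum fun j hj => hterm j (Finset.mem_range.1 hj))
    -- geometric sum bound
    have hgeo : ∑ j ∈ Finset.range N, q ^ (N - 1 - j) = ∑ j ∈ Finset.range N, q ^ j :=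
      Finset.sum_range_reflect (fun j => q ^ j) N
    have hgs : (∑ j ∈ Finset.range N, q ^ j) * (1 - q) = 1 - q ^ N := by
      have h := geom_sum_mul q N
      linear_combination -h
    have hqexp : 1 + γ * δ ≤ Real.exp (γ * δ) := by linarith [Real.add_one_le_exp (γ * δ)]
    have hqmul : q * Real.exp (γ * δ) = 1 := by
      rw [hqdef, ← Real.exp_add]; simp
    have hq13 : (1:ℝ)/3 ≤ q := by
      have h1 : Real.exp (-(1:ℝ)) ≤ q := by
        rw [hqdef]
        exact Real.exp_le_exp.2 (by nlinarith)
      have h2 : (1:ℝ)/3 ≤ Real.exp (-(1:ℝ)) := by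
        rw [Real.exp_neg]
        have h3 := Real.exp_one_lt_d9
        have h4 : (0:ℝ) < Real.exp 1 := Real.exp_pos _
        rw [div_le_iff₀ (by norm_num : (0:ℝ) < 3)]
        rw [inv_mul_eq_div, le_div_iff₀ h4]
        nlinarith
      linarith
    have h1q : γ * δ / 3 ≤ 1 - q := by nlinarith
    have hSnn : 0 ≤ ∑ j ∈ Finset.range N, q ^ j :=
      Finset.sum_nonneg fun j _ => by positivity
    have hqN : 0 ≤ q ^ N := by positivity
    have hSle : (∑ j ∈ Finset.range N, q ^ j) ≤ 3 / (γ * δ) := by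
      have h2 : 0 < γ * δ := by positivity
      rw [le_div_iff₀ h2]
      nlinarith
    have hx1 : ‖x t - F 0‖ ≤ 6 * k * K / γ := by
      have heq : ∑ j ∈ Finset.range N, (k * q ^ (N - 1 - j) * (2 * K * δ))
          = (k * (2 * K * δ)) * ∑ j ∈ Finset.range N, q ^ (N - 1 - j) := by
        rw [Finset.mul_sum]
        exact Finset.sum_congr rfl fun j _ => by ring
      have h2 : 0 < γ * δ := by positivity
      have h3 : (k * (2 * K * δ)) * (3 / (γ * δ)) = 6 * k * K / γ := by
        field_simp; ring
      calc ‖x t - F 0‖ ≤ ∑ j ∈ Finset.range N, (k * q ^ (N - 1 - j) * (2 * K * δ)) := hsum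
        _ = (k * (2 * K * δ)) * ∑ j ∈ Finset.range N, q ^ j := by rw [heq, hgeo]
        _ ≤ (k * (2 * K * δ)) * (3 / (γ * δ)) := by
            have : (0:ℝ) ≤ k * (2 * K * δ) := by positivity
            nlinarith
        _ = 6 * k * K / γ := h3
    -- the first term
    have hx0 : ‖F 0‖ ≤ k * Real.exp (-γ * t) * ‖seg τ x 0‖ := by
      set y0 : C(ℝ, Fin n → ℝ) := w (((0:ℕ):ℝ) * δ) (hu0 0) with hy0def
      have hz : ((0:ℕ):ℝ) * δ = 0 := by norm_num
      have hderiv0 : ∀ t' > (0:ℝ),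
          HasDerivAt (fun s => y0 s) ((L t') (seg τ y0 t')) t' := by
        intro t' ht'
        exact hw2 _ (hu0 0) t' (by rw [hz]; exact ht')
      have hbd := hst 0 le_rfl y0 hderiv0 t htpos.le
      have hseg0 : seg τ y0 0 = seg τ x 0 :=
        seg_eq_of_eqOn (fun r hr => hw1 _ (hu0 0) r (by rw [hz]; exact hr))
      rw [hseg0, sub_zero] at hbd
      exact hbd
    calc ‖x t‖ = ‖F 0 + (x t - F 0)‖ := by rw [add_sub_cancel]
      _ ≤ ‖F 0‖ + ‖x t - F 0‖ := norm_add_le _ _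
      _ ≤ k * Real.exp (-γ * t) * ‖seg τ x 0‖ + 6 * k * K / γ := add_le_add hx0 hx1
  -- conclusion via the limit of the exponential term
  have htend : Filter.Tendsto (fun t : ℝ => k * Real.exp (-γ * t) * ‖seg τ x 0‖)
      Filter.atTop (𝓝 0) := by
    have h1 : Filter.Tendsto (fun t : ℝ => γ * t) Filter.atTop Filter.atTop :=
      Filter.Tendsto.const_mul_atTop hγ Filter.tendsto_id
    have h2 : Filter.Tendsto (fun t : ℝ => Real.exp (-(γ * t))) Filter.atTop (𝓝 0) :=
      Real.tendsto_exp_neg_atTop_nhds_zero.comp h1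
    have h3 : (fun t : ℝ => k * Real.exp (-γ * t) * ‖seg τ x 0‖) =
        fun t : ℝ => k * Real.exp (-(γ * t)) * ‖seg τ x 0‖ := by
      funext t; ring_nf
    rw [h3]
    simpa using (h2.const_mul k).mul_const ‖seg τ x 0‖
  have hev1 : ∀ᶠ t in Filter.atTop, k * Real.exp (-γ * t) * ‖seg τ x 0‖ < 1 :=
    htend.eventually_lt_const one_pos
  filter_upwards [hev1, Filter.eventually_gt_atTop 0] with t h1 h2
  have h3 := hmain t h2
  linarith
end

section
/- Consider system (N) with each L_ij(t) nonnegative, and assume hypotheses (H1), (H3), (H4) and (H5*). Assume further: (i) either L_ij(t)φ = a_ij(t)·φ(0) with a_ij(t) ≥ 0 for all i, j, t ≥ 0 (no delays in the linear part), or each a_ij(t) = ‖L_ij(t)‖ is bounded on [0,∞); (ii) liminf_{t→∞} β_i(t) > 0 and liminf_{x→∞} h_i⁻(x) > 0 for every i = 1,…,n, where β_i and h_i⁻ are as in (H4). Then system (N) is uniformly persistent: there exists m > 0 such that every admissible solution x of (N) on [−τ,∞) satisfies, for some T depending on the solution, x_i(t) ≥ m for all t ≥ T and all i = 1,…,n.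 -/
open scoped Topology

set_option maxHeartbeats 4000000

open Set Filter

section aux

lemma deriv_nonpos_left {g : ℝ → ℝ} {g' a b : ℝ} (hba : b < a)
    (hd : HasDerivAt g g' a) (hge : ∀ s ∈ Set.Ico b a, g a ≤ g s) : g' ≤ 0 := by
  have h1 : Tendsto (slope g a) (𝓝[<] a) (𝓝 g') :=
    (hasDerivAt_iff_tendsto_slope.1 hd).mono_left
      (nhdsWithin_mono _ (fun s hs => ne_of_lt hs))
  refine le_of_tendsto h1 ?_
  filter_upwards [Ioo_mem_nhdsLT_of_mem (⟨hba, le_refl a⟩ : a ∈ Set.Ioc b a)] with s hs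
  have hnum : 0 ≤ g s - g a := sub_nonneg.2 (hge s ⟨hs.1.le, hs.2⟩)
  have hden : s - a ≤ 0 := by linarith [hs.2]
  rw [slope_def_field]
  exact div_nonpos_of_nonneg_of_nonpos hnum hden

lemma barrier_lemma (n : ℕ) (z F : Fin n → ℝ → ℝ)
    (hzc : ∀ k, Continuous (z k))
    (T₀ τ ρ c cap : ℝ) (hτ : 0 ≤ τ) (hρ : 0 ≤ ρ)
    (hder : ∀ k, ∀ t ≥ T₀, HasDerivAt (z k) (F k t) t)
    (hinit : ∀ k, ∀ s ∈ Set.Icc (T₀ - τ) T₀, c + ρ * (s - T₀) < z k s)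
    (hkey : ∀ t ≥ T₀, ∀ k, z k t = c + ρ * (t - T₀) → c + ρ * (t - T₀) ≤ cap →
      (∀ j, ∀ s ∈ Set.Icc (t - τ) t, c + ρ * (s - T₀) ≤ z j s) → ρ < F k t) :
    ∀ t ≥ T₀ - τ, ∀ k, c + ρ * (t - T₀) ≤ cap → c + ρ * (t - T₀) < z k t := by
  set ψ : ℝ → ℝ := fun s => c + ρ * (s - T₀) with hψ
  have hψmono : Monotone ψ := by
    intro a b hab
    simp only [hψ]
    nlinarith
  have hψcont : Continuous ψ := by fun_prop
  by_contra hcon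
  push_neg at hcon
  obtain ⟨t₁, ht₁, k₁, hcap₁, hle₁⟩ := hcon
  have ht₁T₀ : T₀ < t₁ := by
    by_contra hh
    push_neg at hh
    exact absurd (hinit k₁ t₁ ⟨ht₁, hh⟩) (not_lt.2 hle₁)
  set S : Set ℝ := {t | T₀ ≤ t ∧ ψ t ≤ cap ∧ ∃ k, z k t ≤ ψ t} with hS
  have hSne : S.Nonempty := ⟨t₁, ht₁T₀.le, hcap₁, k₁, hle₁⟩
  have hSbdd : BddBelow S := ⟨T₀, fun t ht => ht.1⟩
  have hSclosed : IsClosed S := by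
    have : S = (Set.Ici T₀ ∩ {t | ψ t ≤ cap}) ∩ (⋃ k, {t | z k t ≤ ψ t}) := by
      ext t
      simp only [hS, Set.mem_setOf_eq, Set.mem_inter_iff, Set.mem_Ici, Set.mem_iUnion]
      tauto
    rw [this]
    exact ((isClosed_Ici.inter (isClosed_le hψcont continuous_const)).inter
      (isClosed_iUnion_of_finite fun k => isClosed_le (hzc k) hψcont))
  set t' := sInf S with ht'
  have ht'S : t' ∈ S := hSclosed.csInf_mem hSne hSbdd
  obtain ⟨ht'T₀, ht'cap, k, hkle⟩ := ht'S
  have ht'gt : T₀ < t' := by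
    rcases lt_or_eq_of_le ht'T₀ with h | h
    · exact h
    · exact absurd (hinit k t' ⟨by linarith, h.symm.le⟩) (not_lt.2 hkle)
  have hbefore : ∀ s, T₀ - τ ≤ s → s < t' → ∀ j, ψ s < z j s := by
    intro s hs1 hs2 j
    rcases le_or_gt s T₀ with h | h
    · exact hinit j s ⟨hs1, h⟩
    · by_contra hh
      push_neg at hh
      have hmem : s ∈ S := ⟨h.le, le_trans (hψmono hs2.le) ht'cap, j, hh⟩
      exact absurd (csInf_le hSbdd hmem) (not_le.2 hs2)
  have hat : ∀ j, ψ t' ≤ z j t' := by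
    intro j
    have hne : (𝓝[Set.Ico T₀ t'] t').NeBot := by
      rw [mem_closure_iff_nhdsWithin_neBot.symm, closure_Ico (ne_of_lt ht'gt)]
      exact ⟨ht'T₀, le_refl _⟩
    have htend : Tendsto (fun s => z j s - ψ s) (𝓝[Set.Ico T₀ t'] t')
        (𝓝 (z j t' - ψ t')) :=
      (((hzc j).sub hψcont).tendsto t').mono_left nhdsWithin_le_nhds
    have hev : ∀ᶠ s in 𝓝[Set.Ico T₀ t'] t', 0 ≤ z j s - ψ s := by
      filter_upwards [self_mem_nhdsWithin] with s hs
      exact (sub_nonneg.2 (hbefore s (by linarith [hs.1]) hs.2 j).le)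
    linarith [ge_of_tendsto htend hev]
  have hkeq : z k t' = ψ t' := le_antisymm hkle (hat k)
  have hwin : ∀ j, ∀ s ∈ Set.Icc (t' - τ) t', ψ s ≤ z j s := by
    intro j s hs
    rcases lt_or_eq_of_le hs.2 with h | h
    · exact (hbefore s (by linarith [hs.1]) h j).le
    · rw [h]; exact hat j
  have hF : ρ < F k t' := hkey t' ht'T₀ k hkeq ht'cap hwin
  have hgd : HasDerivAt (fun s => z k s - ψ s) (F k t' - ρ) t' := by
    have h2 : HasDerivAt ψ ρ t' := by
      have : HasDerivAt (fun s : ℝ => c + ρ * (s - T₀)) (ρ * 1) t' :=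
        (((hasDerivAt_id t').sub_const T₀).const_mul ρ).const_add c
      rw [mul_one] at this; exact this
    exact (hder k t' ht'T₀).sub h2
  have hnonpos : F k t' - ρ ≤ 0 := by
    refine deriv_nonpos_left (b := T₀ - τ) (by linarith) hgd ?_
    intro s hs
    have h1 := hbefore s hs.1 hs.2 k
    simp only [hkeq]
    linarith
  linarith

lemma Lpos {K : Type*} [TopologicalSpace K] [CompactSpace K]
    (L : C(K, ℝ) →L[ℝ] ℝ) (hL : ∀ φ : C(K, ℝ), (∀ θ, 0 ≤ φ θ) → 0 ≤ L φ)
    {c : ℝ} (hc : 0 ≤ c) (φ : C(K, ℝ)) (hφ : ∀ θ, c ≤ φ θ) : c * ‖L‖ ≤ L φ := by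
  set e : C(K, ℝ) := ContinuousMap.const K 1 with he
  have h1 : 0 ≤ L e := hL _ (fun θ => by simp [he])
  have hb : ‖L‖ ≤ L e := by
    refine L.opNorm_le_bound h1 ?_
    intro ψ
    rw [Real.norm_eq_abs, abs_le]
    constructor
    · have h2 := hL (‖ψ‖ • e + ψ) (fun θ => by
        have h3 := ψ.norm_coe_le_norm θ
        have h4 : |ψ θ| ≤ ‖ψ‖ := by simpa [Real.norm_eq_abs] using h3
        simp only [ContinuousMap.add_apply, ContinuousMap.smul_apply, he,
          ContinuousMap.const_apply, smul_eq_mul, mul_one]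
        cases abs_le.1 h4; linarith)
      rw [map_add, map_smul, smul_eq_mul] at h2
      linarith
    · have h2 := hL (‖ψ‖ • e - ψ) (fun θ => by
        have h3 := ψ.norm_coe_le_norm θ
        have h4 : |ψ θ| ≤ ‖ψ‖ := by simpa [Real.norm_eq_abs] using h3
        simp only [ContinuousMap.sub_apply, ContinuousMap.smul_apply, he,
          ContinuousMap.const_apply, smul_eq_mul, mul_one, sub_nonneg]
        cases abs_le.1 h4; linarith)
      rw [map_sub, map_smul, smul_eq_mul] at h2
      linarith
  have h5 : 0 ≤ L (φ - c • e) := hL _ (fun θ => by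
    have := hφ θ
    simp only [ContinuousMap.sub_apply, ContinuousMap.smul_apply, he,
      ContinuousMap.const_apply, smul_eq_mul, mul_one, sub_nonneg]
    linarith)
  rw [map_sub, map_smul, smul_eq_mul] at h5
  nlinarith [mul_le_mul_of_nonneg_left hb hc]

end aux

/-- `0 ∈ [-τ,0]` as an element of the subtype, for `τ ≥ 0`. -/
def zeroPt (τ : ℝ) (hτ : 0 ≤ τ) : Set.Icc (-τ) (0 : ℝ) :=
  ⟨0, Set.mem_Icc.mpr ⟨neg_nonpos.mpr hτ, le_refl 0⟩⟩

/-- An admissible solution of system (N):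
`x_i'(t) = -d_i(t) x_i(t) + ∑_j L_ij(t) (x_j)_t + f_i(t, (x_i)_t)`, with nonnegative
initial segment, positive components at `t = 0`, and componentwise nonnegative values
for all `t ≥ 0`. -/
def IsAdmissibleN (n : ℕ) (τ : ℝ) (d : Fin n → ℝ → ℝ)
    (L : Fin n → Fin n → ℝ → (C(Set.Icc (-τ) (0 : ℝ), ℝ) →L[ℝ] ℝ))
    (f : Fin n → ℝ → C(Set.Icc (-τ) (0 : ℝ), ℝ) → ℝ)
    (x : C(ℝ, Fin n → ℝ)) : Prop :=
  (∀ i, ∀ t > (0 : ℝ), HasDerivAt (fun s => x s i)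
      (-(d i t) * x t i + (∑ j, L i j t (seg τ (proj x j) t))
        + f i t (seg τ (proj x i) t)) t)
  ∧ (∀ s ∈ Set.Icc (-τ) (0 : ℝ), ∀ i, 0 ≤ x s i)
  ∧ (∀ i, 0 < x 0 i)
  ∧ (∀ t ≥ (0 : ℝ), ∀ i, 0 ≤ x t i)

/-- Uniform persistence of system (N) under (H1), (H3), (H4), (H5*) and assumptions
(i)-(ii) (Theorem 2.7 of the paper). -/
theorem uniform_persistence_N
    (n : ℕ) (hn : 1 ≤ n) (τ : ℝ) (hτ : 0 ≤ τ)
    (d : Fin n → ℝ → ℝ)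
    (L : Fin n → Fin n → ℝ → (C(Set.Icc (-τ) (0 : ℝ), ℝ) →L[ℝ] ℝ))
    (f : Fin n → ℝ → C(Set.Icc (-τ) (0 : ℝ), ℝ) → ℝ)
    -- (H1): continuity of the data
    (hd_pos : ∀ i, ∀ t ≥ (0 : ℝ), 0 < d i t)
    (hd_cont : ∀ i, ContinuousOn (d i) (Set.Ici 0))
    (hL_cont : ∀ i j, ContinuousOn (L i j) (Set.Ici (0 : ℝ)))
    -- each L_ij(t) is a nonnegative functional
    (hL_nonneg : ∀ i j, ∀ t ≥ (0 : ℝ), ∀ φ : C(Set.Icc (-τ) (0 : ℝ), ℝ),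
      (∀ θ, 0 ≤ φ θ) → 0 ≤ L i j t φ)
    -- f_i maps into [0,∞)
    (hf_nonneg : ∀ i, ∀ t ≥ (0 : ℝ), ∀ φ : C(Set.Icc (-τ) (0 : ℝ), ℝ),
      (∀ θ, 0 ≤ φ θ) → 0 ≤ f i t φ)
    -- (H3): f_i continuous, completely continuous, locally Lipschitz in the 2nd variable
    (hf_cont : ∀ i, ContinuousOn (fun p : ℝ × C(Set.Icc (-τ) (0 : ℝ), ℝ) => f i p.1 p.2)
      (Set.Ici (0 : ℝ) ×ˢ {φ | ∀ θ, 0 ≤ φ θ}))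
    (hf_bdd : ∀ i, ∀ r : ℝ, ∃ K, ∀ t ≥ (0 : ℝ), ∀ φ : C(Set.Icc (-τ) (0 : ℝ), ℝ),
      (∀ θ, 0 ≤ φ θ) → ‖φ‖ ≤ r → f i t φ ≤ K)
    (hf_lip : ∀ i, ∀ t ≥ (0 : ℝ), ∀ φ : C(Set.Icc (-τ) (0 : ℝ), ℝ), (∀ θ, 0 ≤ φ θ) →
      ∃ ε > (0 : ℝ), ∃ Λ ≥ (0 : ℝ), ∀ ψ χ : C(Set.Icc (-τ) (0 : ℝ), ℝ),
        (∀ θ, 0 ≤ ψ θ) → (∀ θ, 0 ≤ χ θ) → ‖ψ - φ‖ < ε → ‖χ - φ‖ < ε →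
        |f i t ψ - f i t χ| ≤ Λ * ‖ψ - χ‖)
    -- (H4): data β_i > 0 continuous, h_i⁻ continuous, h_i⁻(0)=0, h_i⁻ > 0 on (0,∞),
    -- (h_i⁻)'(0⁺) = 1, and f_i(t,φ) ≥ β_i(t) h_i⁻(min φ) for t large
    (β : Fin n → ℝ → ℝ) (hβ_cont : ∀ i, ContinuousOn (β i) (Set.Ici 0))
    (hβ_pos : ∀ i, ∀ t ≥ (0 : ℝ), 0 < β i t)
    (h : Fin n → ℝ → ℝ) (hh_cont : ∀ i, ContinuousOn (h i) (Set.Ici 0))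
    (hh0 : ∀ i, h i 0 = 0) (hh_pos : ∀ i, ∀ x > (0 : ℝ), 0 < h i x)
    (hh_deriv : ∀ i, HasDerivWithinAt (h i) 1 (Set.Ici 0) 0)
    (hH4 : ∃ T ≥ (0 : ℝ), ∀ i, ∀ t ≥ T, ∀ φ : C(Set.Icc (-τ) (0 : ℝ), ℝ),
      (∀ θ, 0 ≤ φ θ) → β i t * h i (⨅ θ : Set.Icc (-τ) (0 : ℝ), φ θ) ≤ f i t φ)
    -- (i): either no delays in the linear part, or all a_ij bounded on [0,∞)
    (hi : (∀ i j, ∀ t ≥ (0 : ℝ), ∀ φ : C(Set.Icc (-τ) (0 : ℝ), ℝ),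
        L i j t φ = ‖L i j t‖ * φ (zeroPt τ hτ))
      ∨ (∀ i j, ∃ K, ∀ t ≥ (0 : ℝ), ‖L i j t‖ ≤ K))
    -- (H5*)
    (hH5star : ∃ v : Fin n → ℝ, (∀ i, 0 < v i) ∧ ∃ α > (1 : ℝ), ∃ T ≥ (0 : ℝ),
      ∀ t ≥ T, ∀ i, α * (d i t * v i - ∑ j, ‖L i j t‖ * v j) ≤ β i t * v i)
    -- (ii): liminf_{t→∞} β_i(t) > 0 and liminf_{x→∞} h_i⁻(x) > 0 for every i
    (hβ_liminf : ∀ i, ∃ c > (0 : ℝ), ∀ᶠ t in Filter.atTop, c ≤ β i t)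
    (hh_liminf : ∀ i, ∃ c > (0 : ℝ), ∃ R, ∀ x ≥ R, c ≤ h i x) :
    -- conclusion: uniform persistence
    ∃ m > (0 : ℝ), ∀ x : C(ℝ, Fin n → ℝ),
      IsAdmissibleN n τ d L f x →
      ∃ T', ∀ t ≥ T', ∀ i, m ≤ x t i := by
  have hne : (Finset.univ : Finset (Fin n)).Nonempty := ⟨⟨0, hn⟩, Finset.mem_univ _⟩
  haveI hKne : Nonempty (Set.Icc (-τ) (0 : ℝ)) := ⟨zeroPt τ hτ⟩
  obtain ⟨v, hv, α, hα, T5, hT50, hH5⟩ := hH5star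
  obtain ⟨T4, hT40, hH4'⟩ := hH4
  have hαpos : (0 : ℝ) < α := by linarith
  have hβlb : ∀ i, ∃ ci, 0 < ci ∧ ∃ Ti, ∀ t ≥ Ti, ci ≤ β i t := by
    intro i
    obtain ⟨ci, hci, hev⟩ := hβ_liminf i
    exact ⟨ci, hci, Filter.eventually_atTop.mp hev⟩
  choose c hc Tb hTb using hβlb
  set θ₀ : ℝ := (1 + 1 / α) / 2 with hθ₀def
  have hθ₀pos : 0 < θ₀ := by
    have : 0 < 1 / α := by positivity
    simp only [hθ₀def]; linarith
  have hια : 1 / α < 1 := by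
    rw [div_lt_one hαpos]; linarith
  have hθ₀lt : θ₀ < 1 := by simp only [hθ₀def]; linarith
  have hκpos : 0 < θ₀ - 1 / α := by simp only [hθ₀def]; linarith
  set κ : ℝ := θ₀ - 1 / α with hκdef
  clear_value κ
  -- linearization of h near 0
  have hδex : ∀ i, ∃ δi, 0 < δi ∧ ∀ s, 0 ≤ s → s ≤ δi → θ₀ * s ≤ h i s := by
    intro i
    have h1 : Tendsto (slope (h i) 0) (𝓝[(Set.Ici 0) \ {0}] 0) (𝓝 1) :=
      hasDerivWithinAt_iff_tendsto_slope.1 (hh_deriv i)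
    have h2 : ∀ᶠ s in 𝓝[(Set.Ici 0) \ {0}] (0:ℝ), θ₀ < slope (h i) 0 s :=
      h1.eventually (eventually_gt_nhds hθ₀lt)
    rw [eventually_nhdsWithin_iff, Metric.eventually_nhds_iff] at h2
    obtain ⟨ε, hε, hh2⟩ := h2
    refine ⟨ε / 2, by positivity, ?_⟩
    intro s hs0 hsε
    rcases eq_or_lt_of_le hs0 with hs0' | hs0'
    · rw [← hs0', hh0 i]; simp
    · have hd : dist s 0 < ε := by
        rw [Real.dist_eq, sub_zero, abs_of_pos hs0']; linarith
      have h3 := hh2 hd ⟨hs0, ne_of_gt hs0'⟩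
      rw [slope_def_field, hh0 i, sub_zero, sub_zero] at h3
      have h4 := (lt_div_iff₀ hs0').1 h3
      linarith
  choose δf hδfpos hδf using hδex
  set δ : ℝ := Finset.inf' Finset.univ hne δf with hδdef
  have hδpos : 0 < δ := by
    rw [hδdef, Finset.lt_inf'_iff]
    exact fun i _ => hδfpos i
  have hδle : ∀ i, δ ≤ δf i := fun i => Finset.inf'_le _ (Finset.mem_univ i)
  clear_value δ
  -- upper bounds for β
  have hBex : ∀ i, ∃ Bi, c i ≤ Bi ∧ ∀ t ≥ T4, β i t ≤ Bi := by
    intro i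
    obtain ⟨K, hK⟩ := hf_bdd i 1
    have h1pos : 0 < h i 1 := hh_pos i 1 one_pos
    refine ⟨max (K / h i 1) (c i), le_max_right _ _, ?_⟩
    intro t ht
    have hφ : ∀ θ : Set.Icc (-τ) (0:ℝ), (0:ℝ) ≤ (ContinuousMap.const (Set.Icc (-τ) (0:ℝ)) (1:ℝ)) θ :=
      fun θ => by simp
    have hnorm : ‖(ContinuousMap.const (Set.Icc (-τ) (0:ℝ)) (1:ℝ))‖ ≤ 1 := by
      rw [ContinuousMap.norm_le _ zero_le_one]
      intro θ; simp
    have hfK := hK t (le_trans hT40 ht) _ hφ hnorm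
    have hH := hH4' i t ht _ hφ
    have hinf : (⨅ θ : Set.Icc (-τ) (0:ℝ), (ContinuousMap.const (Set.Icc (-τ) (0:ℝ)) (1:ℝ)) θ) = 1 := by
      simp [ciInf_const]
    rw [hinf] at hH
    have h2 : β i t * h i 1 ≤ K := le_trans hH hfK
    have h3 : β i t ≤ K / h i 1 := (le_div_iff₀ h1pos).2 h2
    exact le_trans h3 (le_max_left _ _)
  choose B hcB hB using hBex
  set Vmax : ℝ := Finset.sup' Finset.univ hne v with hVmaxdef
  set Vmin : ℝ := Finset.inf' Finset.univ hne v with hVmindef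
  have hVmax : ∀ i, v i ≤ Vmax := fun i => Finset.le_sup' _ (Finset.mem_univ i)
  have hVmin : ∀ i, Vmin ≤ v i := fun i => Finset.inf'_le _ (Finset.mem_univ i)
  have hVminpos : 0 < Vmin := by
    rw [hVmindef, Finset.lt_inf'_iff]; exact fun i _ => hv i
  have hVmaxpos : 0 < Vmax := lt_of_lt_of_le (hv ⟨0, hn⟩) (hVmax _)
  clear_value Vmax Vmin
  set mstar : ℝ := δ / Vmax with hmstardef
  have hmstarpos : 0 < mstar := by rw [hmstardef]; positivity
  have hmsV : mstar * Vmax = δ := by rw [hmstardef]; field_simp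
  clear_value mstar
  set Tstar : ℝ := max (max T4 T5) (Finset.sup' Finset.univ hne Tb) + τ + 1 with hTstardef
  have hTstarT4 : T4 ≤ Tstar := by
    have := le_max_left T4 T5
    have := le_max_left (max T4 T5) (Finset.sup' Finset.univ hne Tb)
    simp only [hTstardef]; linarith
  have hTstarT5 : T5 ≤ Tstar := by
    have := le_max_right T4 T5
    have := le_max_left (max T4 T5) (Finset.sup' Finset.univ hne Tb)
    simp only [hTstardef]; linarith
  have hTstarTb : ∀ i, Tb i ≤ Tstar := by
    intro i
    have h1 : Tb i ≤ Finset.sup' Finset.univ hne Tb := Finset.le_sup' _ (Finset.mem_univ i)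
    have := le_max_right (max T4 T5) (Finset.sup' Finset.univ hne Tb)
    simp only [hTstardef]; linarith
  have hTstarτ : τ + 1 ≤ Tstar := by
    have h1 : (0:ℝ) ≤ max T4 T5 := le_trans hT40 (le_max_left _ _)
    have := le_max_left (max T4 T5) (Finset.sup' Finset.univ hne Tb)
    simp only [hTstardef]; linarith
  have hTstarpos : 0 < Tstar := by linarith
  clear_value Tstar
  -- THE KEY DERIVATIVE BOUND
  have hkeyex : ∃ Γ : Fin n → ℝ, (∀ k, 0 ≤ Γ k) ∧ ∀ x : C(ℝ, Fin n → ℝ),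
      ∀ t, Tstar ≤ t → ∀ k (μ lam : ℝ), 0 < lam → lam ≤ μ → μ * Vmax ≤ δ →
      x t k = v k * μ → (∀ j, v j * μ ≤ x t j) →
      (∀ j, ∀ s ∈ Set.Icc (t - τ) t, v j * lam ≤ x s j) →
      v k * (c k * κ * lam - Γ k * (μ - lam)) ≤
        -(d k t) * x t k + (∑ j, L k j t (seg τ (proj x j) t)) + f k t (seg τ (proj x k) t) := by
    have hsegapp : ∀ (y : C(ℝ, Fin n → ℝ)) (j : Fin n) (t : ℝ) (θ : Set.Icc (-τ) (0:ℝ)),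
        (seg τ (proj y j) t) θ = y (t + θ.1) j := fun _ _ _ _ => rfl
    have hseg0 : ∀ (y : C(ℝ, Fin n → ℝ)) (j : Fin n) (t : ℝ),
        (seg τ (proj y j) t) (zeroPt τ hτ) = y t j := by
      intro y j t
      rw [hsegapp]
      norm_num [zeroPt]
    -- lower bound for the nonlinear term
    have hfb : ∀ (y : C(ℝ, Fin n → ℝ)) (t : ℝ), Tstar ≤ t → ∀ k (μ lam : ℝ), 0 < lam →
        lam ≤ μ → μ * Vmax ≤ δ → y t k = v k * μ →
        (∀ s ∈ Set.Icc (t - τ) t, v k * lam ≤ y s k) →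
        β k t * (θ₀ * (v k * lam)) ≤ f k t (seg τ (proj y k) t) := by
      intro y t ht k μ lam hlam hlamμ hμV hytk hwin
      have ht0 : (0:ℝ) ≤ t := by linarith [hTstarpos]
      have hlow : ∀ θ : Set.Icc (-τ) (0:ℝ), v k * lam ≤ (seg τ (proj y k) t) θ := by
        intro θ
        rw [hsegapp]
        exact hwin _ ⟨by linarith [θ.2.1], by linarith [θ.2.2]⟩
      have hvknn : 0 < v k * lam := mul_pos (hv k) hlam
      have hnonneg : ∀ θ, (0:ℝ) ≤ (seg τ (proj y k) t) θ := fun θ => le_trans hvknn.le (hlow θ)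
      have hH := hH4' k t (le_trans hTstarT4 ht) _ hnonneg
      set w : ℝ := ⨅ θ : Set.Icc (-τ) (0:ℝ), (seg τ (proj y k) t) θ with hwdef
      have hbdd : BddBelow (Set.range fun θ : Set.Icc (-τ) (0:ℝ) => (seg τ (proj y k) t) θ) :=
        ⟨v k * lam, by rintro r ⟨θ, rfl⟩; exact hlow θ⟩
      have hwge : v k * lam ≤ w := le_ciInf hlow
      have hwle : w ≤ v k * μ := by
        have h1 : w ≤ (seg τ (proj y k) t) (zeroPt τ hτ) := ciInf_le hbdd _
        rw [hseg0, hytk] at h1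
        exact h1
      have hμ0 : 0 < μ := lt_of_lt_of_le hlam hlamμ
      have hwδ : w ≤ δ := by
        have h2 : v k * μ ≤ Vmax * μ := mul_le_mul_of_nonneg_right (hVmax k) hμ0.le
        nlinarith [hμV]
      have hw0 : 0 ≤ w := le_trans hvknn.le hwge
      have hlin : θ₀ * w ≤ h k w := hδf k w hw0 (le_trans hwδ (hδle k))
      have hβnn : 0 < β k t := hβ_pos k t ht0
      have hchain : θ₀ * (v k * lam) ≤ h k w :=
        le_trans (mul_le_mul_of_nonneg_left hwge hθ₀pos.le) hlin
      calc β k t * (θ₀ * (v k * lam)) ≤ β k t * h k w :=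
            mul_le_mul_of_nonneg_left hchain hβnn.le
        _ ≤ f k t (seg τ (proj y k) t) := hH
    -- lower bound for nonnegative functionals via windows
    have hLlow : ∀ (y : C(ℝ, Fin n → ℝ)) (t : ℝ), 0 ≤ t → ∀ k j (lam : ℝ), 0 ≤ lam →
        (∀ s ∈ Set.Icc (t - τ) t, v j * lam ≤ y s j) →
        ‖L k j t‖ * (v j * lam) ≤ L k j t (seg τ (proj y j) t) := by
      intro y t ht k j lam hlam hwin
      have := Lpos (L k j t) (hL_nonneg k j t ht) (c := v j * lam)
        (mul_nonneg (hv j).le hlam) (seg τ (proj y j) t)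
        (fun θ => by
          rw [hsegapp]
          exact hwin _ ⟨by linarith [θ.2.1], by linarith [θ.2.2]⟩)
      linarith [this]
    have hα0 : α ≠ 0 := ne_of_gt hαpos
    rcases hi with hia | hib
    · -- case (i)a : no delays in the linear terms
      refine ⟨fun k => B k / α, fun k => by
        have := lt_of_lt_of_le (hc k) (hcB k); positivity, ?_⟩
      intro x t ht k μ lam hlam hlamμ hμV hxtk hextra hwin
      have ht0 : (0:ℝ) ≤ t := le_trans hTstarpos.le ht
      have hμ0 : 0 < μ := lt_of_lt_of_le hlam hlamμ
      have hf1 := hfb x t ht k μ lam hlam hlamμ hμV hxtk (hwin k)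
      have hβc : c k ≤ β k t := hTb k t (le_trans (hTstarTb k) ht)
      have hβB : β k t ≤ B k := hB k t (le_trans hTstarT4 ht)
      have hSum : (∑ j, ‖L k j t‖ * v j) * μ ≤ ∑ j, L k j t (seg τ (proj x j) t) := by
        rw [Finset.sum_mul]
        apply Finset.sum_le_sum
        intro j _
        rw [hia k j t ht0, hseg0]
        calc ‖L k j t‖ * v j * μ = ‖L k j t‖ * (v j * μ) := by ring
          _ ≤ ‖L k j t‖ * x t j := mul_le_mul_of_nonneg_left (hextra j) (ContinuousLinearMap.opNorm_nonneg _)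
      have hH5t := hH5 t (le_trans hTstarT5 ht) k
      have h8 : d k t * v k - (∑ j, ‖L k j t‖ * v j) ≤ β k t * v k / α := by
        rw [le_div_iff₀ hαpos]
        linarith [hH5t]
      have h9 : μ * (d k t * v k - (∑ j, ‖L k j t‖ * v j)) ≤ μ * (β k t * v k / α) :=
        mul_le_mul_of_nonneg_left h8 hμ0.le
      have e1 : c k * (κ * lam) ≤ β k t * (κ * lam) :=
        mul_le_mul_of_nonneg_right hβc (mul_nonneg hκpos.le hlam.le)
      have e2 : β k t * (μ - lam) ≤ B k * (μ - lam) :=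
        mul_le_mul_of_nonneg_right hβB (by linarith)
      have hidt : v k * (β k t * κ * lam - β k t / α * (μ - lam)) =
          β k t * (θ₀ * (v k * lam)) - μ * (β k t * v k / α) := by
        rw [hκdef]
        field_simp
        ring
      have hstep : v k * (c k * κ * lam - B k / α * (μ - lam)) ≤
          v k * (β k t * κ * lam - β k t / α * (μ - lam)) := by
        apply mul_le_mul_of_nonneg_left _ (hv k).le
        have e2' : β k t / α * (μ - lam) ≤ B k / α * (μ - lam) := by
          rw [div_mul_eq_mul_div, div_mul_eq_mul_div, div_le_div_iff₀ hαpos hαpos]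
          nlinarith [e2]
        nlinarith [e1]
      rw [hxtk]
      nlinarith [hstep, hidt, h9, hSum, hf1]
    · -- case (i)b : bounded norms
      choose Ka hKa using hib
      have hKa0 : ∀ k j, 0 ≤ Ka k j := fun k j =>
        le_trans (norm_nonneg (L k j 0)) (hKa k j 0 le_rfl)
      refine ⟨fun k => B k / α + (∑ j, Ka k j * v j) / v k, fun k => by
        have h1 := lt_of_lt_of_le (hc k) (hcB k)
        have h2 : 0 ≤ ∑ j, Ka k j * v j :=
          Finset.sum_nonneg fun j _ => mul_nonneg (hKa0 k j) (hv j).le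
        have h3 := hv k
        positivity, ?_⟩
      intro x t ht k μ lam hlam hlamμ hμV hxtk hextra hwin
      have ht0 : (0:ℝ) ≤ t := le_trans hTstarpos.le ht
      have hμ0 : 0 < μ := lt_of_lt_of_le hlam hlamμ
      have hf1 := hfb x t ht k μ lam hlam hlamμ hμV hxtk (hwin k)
      have hβc : c k ≤ β k t := hTb k t (le_trans (hTstarTb k) ht)
      have hβB : β k t ≤ B k := hB k t (le_trans hTstarT4 ht)
      have hH5t := hH5 t (le_trans hTstarT5 ht) k
      have hPK : (∑ j, ‖L k j t‖ * v j) ≤ ∑ j, Ka k j * v j :=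
        Finset.sum_le_sum fun j _ => mul_le_mul_of_nonneg_right (hKa k j t ht0) (hv j).le
      have hdΓ : d k t ≤ B k / α + (∑ j, Ka k j * v j) / v k := by
        have h8 : d k t * v k - (∑ j, ‖L k j t‖ * v j) ≤ β k t * v k / α := by
          rw [le_div_iff₀ hαpos]
          linarith [hH5t]
        have h10 : (B k / α + (∑ j, Ka k j * v j) / v k) * v k =
            B k / α * v k + (∑ j, Ka k j * v j) := by
          field_simp [(hv k).ne']
        have h11 : d k t * v k ≤ (B k / α + (∑ j, Ka k j * v j) / v k) * v k := by
          rw [h10]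
          have h12 : β k t * v k / α ≤ B k / α * v k := by
            rw [div_mul_eq_mul_div, div_le_div_iff₀ hαpos hαpos]
            nlinarith [mul_le_mul_of_nonneg_right hβB (hv k).le]
          linarith [h8, hPK]
        exact le_of_mul_le_mul_right h11 (hv k)
      have hSum : (∑ j, ‖L k j t‖ * v j) * lam ≤ ∑ j, L k j t (seg τ (proj x j) t) := by
        rw [Finset.sum_mul]
        apply Finset.sum_le_sum
        intro j _
        calc ‖L k j t‖ * v j * lam = ‖L k j t‖ * (v j * lam) := by ring
          _ ≤ L k j t (seg τ (proj x j) t) := hLlow x t ht0 k j lam hlam.le (hwin j)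
      have h8 : d k t * v k - (∑ j, ‖L k j t‖ * v j) ≤ β k t * v k / α := by
        rw [le_div_iff₀ hαpos]
        linarith [hH5t]
      have h9 : lam * (d k t * v k - (∑ j, ‖L k j t‖ * v j)) ≤ lam * (β k t * v k / α) :=
        mul_le_mul_of_nonneg_left h8 hlam.le
      have e1 : c k * (κ * lam) ≤ β k t * (κ * lam) :=
        mul_le_mul_of_nonneg_right hβc (mul_nonneg hκpos.le hlam.le)
      have e3 : d k t * (v k * (μ - lam)) ≤ (B k / α + (∑ j, Ka k j * v j) / v k) *
          (v k * (μ - lam)) :=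
        mul_le_mul_of_nonneg_right hdΓ (mul_nonneg (hv k).le (by linarith))
      have hidt : v k * (β k t * κ * lam) =
          β k t * (θ₀ * (v k * lam)) - lam * (β k t * v k / α) := by
        rw [hκdef]
        field_simp
      rw [hxtk]
      nlinarith [hSum, hf1, h9, e1, e3, hidt, mul_le_mul_of_nonneg_left e1 (hv k).le]
  obtain ⟨Γ, hΓ0, hkey⟩ := hkeyex
  refine ⟨Vmin * (mstar / 2), by positivity, ?_⟩
  intro x hadm
  obtain ⟨hode, hinit0, hpos0, hnn⟩ := hadm
  -- nonnegativity of segments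
  have hsegnn : ∀ j, ∀ t, 0 ≤ t → ∀ θ : Set.Icc (-τ) (0 : ℝ), 0 ≤ (seg τ (proj x j) t) θ := by
    intro j t ht θ
    show 0 ≤ x (t + θ.1) j
    rcases le_or_gt 0 (t + θ.1) with hcase | hcase
    · exact hnn _ hcase j
    · exact hinit0 _ ⟨by linarith [θ.2.1], hcase.le⟩ j
  -- positivity up to time Tstar
  have hpos : ∀ k, ∀ t, 0 ≤ t → t ≤ Tstar → 0 < x t k := by
    intro k
    obtain ⟨C, hC⟩ := (isCompact_Icc (a := (0:ℝ)) (b := Tstar)).exists_bound_of_continuousOn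
      ((hd_cont k).mono Set.Icc_subset_Ici_self)
    have hmono : MonotoneOn (fun s => x s k * Real.exp (C * s)) (Set.Icc 0 Tstar) := by
      apply monotoneOn_of_deriv_nonneg (convex_Icc _ _)
      · exact (((continuous_apply k).comp x.continuous).mul (by fun_prop)).continuousOn
      · intro t htint
        rw [interior_Icc] at htint
        have hexpd : HasDerivAt (fun s : ℝ => Real.exp (C * s)) (Real.exp (C * t) * C) t := by
          simpa using ((hasDerivAt_id t).const_mul C).exp
        exact ((hode k t htint.1).mul hexpd).differentiableAt.differentiableWithinAt
      · intro t htint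
        rw [interior_Icc] at htint
        have hexpd : HasDerivAt (fun s : ℝ => Real.exp (C * s)) (Real.exp (C * t) * C) t := by
          simpa using ((hasDerivAt_id t).const_mul C).exp
        have hg := (hode k t htint.1).mul hexpd
        rw [show (fun s => x s k * Real.exp (C * s)) = ((fun s => x s k) * fun s => Real.exp (C * s)) from rfl, hg.deriv]
        have hS : 0 ≤ ∑ j, L k j t (seg τ (proj x j) t) :=
          Finset.sum_nonneg fun j _ => hL_nonneg k j t htint.1.le _ (hsegnn j t htint.1.le)
        have hf0 : 0 ≤ f k t (seg τ (proj x k) t) :=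
          hf_nonneg k t htint.1.le _ (hsegnn k t htint.1.le)
        have hdC : d k t ≤ C := le_trans (le_abs_self _)
          (by simpa [Real.norm_eq_abs] using hC t ⟨htint.1.le, htint.2.le⟩)
        have hx0 : 0 ≤ x t k := hnn t htint.1.le k
        have hexp : 0 < Real.exp (C * t) := Real.exp_pos _
        nlinarith [mul_nonneg (mul_nonneg (sub_nonneg.2 hdC) hx0) hexp.le,
          mul_nonneg hS hexp.le, mul_nonneg hf0 hexp.le]
    intro t ht0 htT
    have hg0 : x 0 k * Real.exp (C * 0) ≤ x t k * Real.exp (C * t) :=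
      hmono ⟨le_refl 0, hTstarpos.le⟩ ⟨ht0, htT⟩ ht0
    have h0 : 0 < x 0 k := hpos0 k
    have hexp : 0 < Real.exp (C * t) := Real.exp_pos _
    have hexp0 : Real.exp (C * 0) = 1 := by rw [mul_zero, Real.exp_zero]
    rw [hexp0, mul_one] at hg0
    by_contra hcon
    push_neg at hcon
    have : x t k * Real.exp (C * t) ≤ 0 := mul_nonpos_iff.2 (Or.inr ⟨hcon, hexp.le⟩)
    linarith
  -- initial window bound
  have hm0 : ∀ k, ∃ mk, 0 < mk ∧ ∀ s ∈ Set.Icc (Tstar - τ) Tstar, mk ≤ x s k / v k := by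
    intro k
    obtain ⟨s0, hs0mem, hs0min⟩ := isCompact_Icc.exists_isMinOn
      (Set.nonempty_Icc.2 (by linarith)) (Continuous.continuousOn
        (((continuous_apply k).comp x.continuous).div_const (v k)) :
        ContinuousOn (fun s => x s k / v k) (Set.Icc (Tstar - τ) Tstar))
    exact ⟨x s0 k / v k, div_pos (hpos k s0 (by linarith [hs0mem.1]) hs0mem.2) (hv k),
      fun s hs => hs0min hs⟩
  choose m0 hm0pos hm0le using hm0
  set lam0 : ℝ := min (Finset.inf' Finset.univ hne m0 / 2) (mstar / 2) with hlam0def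
  have hm0inf : 0 < Finset.inf' Finset.univ hne m0 := by
    rw [Finset.lt_inf'_iff]; exact fun i _ => hm0pos i
  have hlam0pos : 0 < lam0 := by
    rw [hlam0def]; exact lt_min (by linarith) (by linarith)
  have hlam0m : lam0 ≤ mstar / 2 := min_le_right _ _
  have hlam0win : ∀ k, ∀ s ∈ Set.Icc (Tstar - τ) Tstar, lam0 < x s k / v k := by
    intro k s hs
    have h1 : lam0 ≤ Finset.inf' Finset.univ hne m0 / 2 := min_le_left _ _
    have h2 : Finset.inf' Finset.univ hne m0 ≤ m0 k := Finset.inf'_le _ (Finset.mem_univ k)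
    have := hm0le k s hs
    linarith
  clear_value lam0
  set ρ : ℝ := min (Finset.inf' Finset.univ hne
      (fun k => c k * κ * lam0 / (4 * (1 + Γ k * τ)))) (lam0 / (2 * (τ + 1))) with hρdef
  have hρpos : 0 < ρ := by
    rw [hρdef]
    apply lt_min
    · rw [Finset.lt_inf'_iff]
      intro i _
      have h1 : 0 < 1 + Γ i * τ := by nlinarith [hΓ0 i]
      have := hc i
      positivity
    · positivity
  have hρτ : ρ * τ ≤ lam0 / 2 := by
    have h1 : ρ ≤ lam0 / (2 * (τ + 1)) := min_le_right _ _
    have h2 : ρ * τ ≤ lam0 / (2 * (τ + 1)) * τ := mul_le_mul_of_nonneg_right h1 hτ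
    have h3 : lam0 / (2 * (τ + 1)) * τ ≤ lam0 / 2 := by
      rw [div_mul_eq_mul_div, div_le_div_iff₀ (by positivity) (by norm_num)]
      nlinarith
    linarith
  have hρk : ∀ k, ρ * (1 + Γ k * τ) ≤ c k * κ * lam0 / 4 := by
    intro k
    have h1 : ρ ≤ c k * κ * lam0 / (4 * (1 + Γ k * τ)) :=
      le_trans (min_le_left _ _) (Finset.inf'_le _ (Finset.mem_univ k))
    have h2 : 0 < 1 + Γ k * τ := by nlinarith [hΓ0 k]
    calc ρ * (1 + Γ k * τ) ≤ c k * κ * lam0 / (4 * (1 + Γ k * τ)) * (1 + Γ k * τ) :=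
          mul_le_mul_of_nonneg_right h1 h2.le
      _ = c k * κ * lam0 / 4 := by
          rw [div_mul_eq_mul_div, mul_div_mul_right _ _ (ne_of_gt h2)]
  clear_value ρ
  set z : Fin n → ℝ → ℝ := fun k t => x t k / v k with hzdef
  set F : Fin n → ℝ → ℝ := fun k t => (-(d k t) * x t k + (∑ j, L k j t (seg τ (proj x j) t))
      + f k t (seg τ (proj x k) t)) / v k with hFdef
  have hzc : ∀ k, Continuous (z k) := fun k => ((continuous_apply k).comp x.continuous).div_const _
  have hderiv : ∀ k, ∀ t, Tstar ≤ t → HasDerivAt (z k) (F k t) t := by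
    intro k t ht
    exact (hode k t (by linarith)).div_const (v k)
  -- conversion from barrier statements to key applications
  have happ : ∀ t, Tstar ≤ t → ∀ k (μ lam : ℝ), 0 < lam → lam ≤ μ → μ ≤ mstar →
      z k t = μ → (∀ j, μ ≤ z j t) → (∀ j, ∀ s ∈ Set.Icc (t - τ) t, lam ≤ z j s) →
      c k * κ * lam - Γ k * (μ - lam) ≤ F k t := by
    intro t ht k μ lam hlam hlamμ hμm hzk hwt hwin
    have hxtk : x t k = v k * μ := by
      simp only [hzdef] at hzk
      rw [div_eq_iff (ne_of_gt (hv k))] at hzk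
      rw [hzk]; ring
    have hwinx : ∀ j, ∀ s ∈ Set.Icc (t - τ) t, v j * lam ≤ x s j := by
      intro j s hs
      have h1 := hwin j s hs
      simp only [hzdef] at h1
      rw [le_div_iff₀ (hv j)] at h1
      linarith
    have hextra : ∀ j, v j * μ ≤ x t j := by
      intro j
      have h1 := hwt j
      simp only [hzdef] at h1
      rw [le_div_iff₀ (hv j)] at h1
      linarith
    have hμV : μ * Vmax ≤ δ := by
      have : μ * Vmax ≤ mstar * Vmax := mul_le_mul_of_nonneg_right hμm hVmaxpos.le
      linarith [hmsV]
    have hmain := hkey x t ht k μ lam hlam hlamμ hμV hxtk hextra hwinx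
    rw [hFdef]
    rw [le_div_iff₀ (hv k)]
    linarith [hmain]
  -- PHASE M : the moving barrier
  have hkeyM : ∀ t ≥ Tstar, ∀ k, z k t = lam0 + ρ * (t - Tstar) →
      lam0 + ρ * (t - Tstar) ≤ mstar →
      (∀ j, ∀ s ∈ Set.Icc (t - τ) t, lam0 + ρ * (s - Tstar) ≤ z j s) → ρ < F k t := by
    intro t ht k hzk hcap hwin
    set μ : ℝ := lam0 + ρ * (t - Tstar) with hμdef
    have hμlam0 : lam0 ≤ μ := by
      have : 0 ≤ ρ * (t - Tstar) := mul_nonneg hρpos.le (by linarith)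
      rw [hμdef]; linarith
    have hρτ' : 0 ≤ ρ * τ := mul_nonneg hρpos.le hτ
    have hlampos : 0 < μ - ρ * τ := by linarith [hρτ]
    have hwin' : ∀ j, ∀ s ∈ Set.Icc (t - τ) t, μ - ρ * τ ≤ z j s := by
      intro j s hs
      have h1 := hwin j s hs
      have h2 : ρ * (t - τ - Tstar) ≤ ρ * (s - Tstar) :=
        mul_le_mul_of_nonneg_left (by linarith [hs.1]) hρpos.le
      have h3 : μ - ρ * τ ≤ lam0 + ρ * (s - Tstar) := by
        rw [hμdef]; nlinarith [h2]
      linarith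
    have hwt : ∀ j, μ ≤ z j t := fun j => hwin j t ⟨by linarith, le_refl t⟩
    have happ' := happ t ht k μ (μ - ρ * τ) hlampos (by linarith) hcap hzk hwt hwin'
    have hq : ρ < c k * κ * (μ - ρ * τ) - Γ k * (μ - (μ - ρ * τ)) := by
      have h5 := hρk k
      have hck : 0 < c k * κ := mul_pos (hc k) hκpos
      have h6 : c k * κ * (lam0 / 2) ≤ c k * κ * (μ - ρ * τ) := by
        apply mul_le_mul_of_nonneg_left _ hck.le
        linarith [hρτ]
      nlinarith [h5, h6, mul_pos hck hlam0pos]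
    linarith
  have hM := barrier_lemma n z F hzc Tstar τ ρ lam0 mstar hτ hρpos.le
    (fun k t ht => hderiv k t ht)
    (fun k s hs => by
      have h1 := hlam0win k s hs
      have h2 : ρ * (s - Tstar) ≤ 0 :=
        mul_nonpos_iff.2 (Or.inl ⟨hρpos.le, by linarith [hs.2]⟩)
      simp only [hzdef]
      linarith)
    hkeyM
  -- switch time
  set T₁ : ℝ := Tstar + (mstar - lam0) / ρ with hT₁def
  have hT₁ge : Tstar ≤ T₁ := by
    have : 0 ≤ (mstar - lam0) / ρ := div_nonneg (by linarith) hρpos.le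
    rw [hT₁def]; linarith
  have hψT₁ : ρ * (T₁ - Tstar) = mstar - lam0 := by
    rw [hT₁def]
    field_simp
    ring
  -- PHASE C : the constant barrier at mstar/2
  have hinitC : ∀ k, ∀ s ∈ Set.Icc (T₁ - τ) T₁, mstar / 2 + 0 * (s - T₁) < z k s := by
    intro k s hs
    have hle1 : ρ * (s - Tstar) ≤ ρ * (T₁ - Tstar) :=
      mul_le_mul_of_nonneg_left (by linarith [hs.2]) hρpos.le
    have h1 : lam0 + ρ * (s - Tstar) ≤ mstar := by linarith [hψT₁]
    have h2 := hM s (by linarith [hs.1]) k h1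
    have hge1 : ρ * (T₁ - τ - Tstar) ≤ ρ * (s - Tstar) :=
      mul_le_mul_of_nonneg_left (by linarith [hs.1]) hρpos.le
    have h4 : ρ * (T₁ - τ - Tstar) = ρ * (T₁ - Tstar) - ρ * τ := by ring
    have h3 : mstar / 2 < lam0 + ρ * (s - Tstar) := by
      have := hρτ
      linarith [hψT₁, hlam0m, hmstarpos]
    linarith
  have hkeyC : ∀ t ≥ T₁, ∀ k, z k t = mstar / 2 + 0 * (t - T₁) →
      mstar / 2 + 0 * (t - T₁) ≤ mstar →
      (∀ j, ∀ s ∈ Set.Icc (t - τ) t, mstar / 2 + 0 * (s - T₁) ≤ z j s) → (0:ℝ) < F k t := by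
    intro t ht k hzk hcap hwin
    rw [zero_mul, add_zero] at hzk
    have hwin' : ∀ j, ∀ s ∈ Set.Icc (t - τ) t, mstar / 2 ≤ z j s := by
      intro j s hs
      have := hwin j s hs
      rw [zero_mul, add_zero] at this
      exact this
    have hwt : ∀ j, mstar / 2 ≤ z j t := fun j => hwin' j t ⟨by linarith, le_refl t⟩
    have happ' := happ t (le_trans hT₁ge ht) k (mstar / 2) (mstar / 2) (by linarith)
      le_rfl (by linarith) hzk hwt hwin'
    have hck : 0 < c k * κ * (mstar / 2) := by
      have := mul_pos (hc k) hκpos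
      positivity
    nlinarith [happ']
  have hC := barrier_lemma n z F hzc T₁ τ 0 (mstar / 2) mstar hτ le_rfl
    (fun k t ht => hderiv k t (le_trans hT₁ge ht)) hinitC hkeyC
  refine ⟨T₁, fun t ht i => ?_⟩
  have h1 := hC t (by linarith) i (by rw [zero_mul, add_zero]; linarith)
  rw [zero_mul, add_zero] at h1
  simp only [hzdef] at h1
  rw [lt_div_iff₀ (hv i)] at h1
  nlinarith [mul_le_mul_of_nonneg_left (hVmin i) (show (0:ℝ) ≤ mstar / 2 by linarith), h1]
end

section
/- Let μ > 0, τ̄ > 0 and C > τ̄, and let τ : [0,∞) → (0,τ̄] be continuous. Define a(t) := μ·(t − τ(t) + C)·(t + C + 1)/τ(t) and d(t) := 1/((t + C)(t + 1 + C)) + a(t)·(t − τ(t) + C + 1)·(t + C)/((t − τ(t) + C)·(t + C + 1)) for t ≥ 0. Then: (a) the function φ(t) = 1 + 1/(t + C), defined for t ≥ −τ̄, satisfies the scalar linear delay equation φ'(t) = −d(t)·φ(t) + a(t)·φ(t − τ(t)) for all t > 0; and (b) d(t) − a(t) ≥ μ for all t ≥ 0. In particular, the equation admits a positive solution converging to 1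 (so it is not asymptotically stable) even though the condition d(t) − a(t) ≥ μ > 0 (hypothesis (H2) in the scalar case) holds for all t ≥ 0. -/
/-- Counter-example (Example 3.3 / Győri–Horváth): for the scalar linear delay equation
`y'(t) = -d(t) y(t) + a(t) y(t - τ(t))` with the indicated unbounded coefficient `a(t)`,
the function `φ(t) = 1 + 1/(t+C)` is a positive solution converging to `1` (so the
equation is not asymptotically stable), although `d(t) - a(t) ≥ μ > 0` (scalar (H2)). -/
theorem GH_counterexample
    (μ τb C : ℝ) (hμ : 0 < μ) (hτb : 0 < τb) (hC : τb < C)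
    (τf : ℝ → ℝ) (hτf_cont : ContinuousOn τf (Set.Ici 0))
    (hτf_mem : ∀ t ≥ (0 : ℝ), 0 < τf t ∧ τf t ≤ τb)
    (a d : ℝ → ℝ)
    (ha_def : ∀ t, a t = μ * ((t - τf t + C) * (t + C + 1)) / τf t)
    (hd_def : ∀ t, d t = 1 / ((t + C) * (t + 1 + C))
      + a t * ((t - τf t + C + 1) * (t + C)) / ((t - τf t + C) * (t + C + 1))) :
    -- (a): φ(t) = 1 + 1/(t+C) solves the delay equation for t > 0
    (∀ t > (0 : ℝ), HasDerivAt (fun s => 1 + 1 / (s + C))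
      (-(d t) * (1 + 1 / (t + C)) + a t * (1 + 1 / (t - τf t + C))) t)
    -- (b): d(t) - a(t) ≥ μ for all t ≥ 0
    ∧ (∀ t ≥ (0 : ℝ), μ ≤ d t - a t)
    -- the solution is positive and converges to 1
    ∧ (∀ t ≥ -τb, 0 < 1 + 1 / (t + C))
    ∧ Filter.Tendsto (fun t : ℝ => 1 + 1 / (t + C)) Filter.atTop (nhds 1) := by
  have hC0 : 0 < C := hτb.trans hC
  refine ⟨?_, ?_, ?_, ?_⟩
  · intro t ht
    obtain ⟨hτ0, hτle⟩ := hτf_mem t ht.le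
    have hu : 0 < t + C := by linarith
    have hv : 0 < t - τf t + C := by linarith
    have hu1 : (0:ℝ) < t + C + 1 := by linarith
    have hderiv : HasDerivAt (fun s => 1 + 1 / (s + C)) (-1 / (t + C) ^ 2) t := by
      have h1 : HasDerivAt (fun s : ℝ => s + C) 1 t := (hasDerivAt_id t).add_const C
      have h2 := h1.inv hu.ne'
      have h3 := h2.const_add (1 : ℝ)
      simpa [one_div] using h3
    convert hderiv using 1
    rw [hd_def]
    field_simp
    ring
  · intro t ht
    obtain ⟨hτ0, hτle⟩ := hτf_mem t ht
    have hu : 0 < t + C := by linarith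
    have hv : 0 < t - τf t + C := by linarith
    have hu1 : (0:ℝ) < t + C + 1 := by linarith
    have hu1' : (0:ℝ) < t + 1 + C := by linarith
    have key : d t - a t = μ + 1 / ((t + C) * (t + 1 + C)) := by
      rw [hd_def, ha_def]
      field_simp
      ring
    have hpos : 0 < 1 / ((t + C) * (t + 1 + C)) := by positivity
    linarith
  · intro t ht
    have hu : 0 < t + C := by linarith
    positivity
  · have h1 : Filter.Tendsto (fun t : ℝ => t + C) Filter.atTop Filter.atTop :=
      Filter.tendsto_atTop_add_const_right _ C Filter.tendsto_id
    have h2 : Filter.Tendsto (fun t : ℝ => 1 / (t + C)) Filter.atTop (nhds 0) := by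
      simpa [one_div, Function.comp_def] using tendsto_inv_atTop_zero.comp h1
    simpa using Filter.Tendsto.const_add (1 : ℝ) h2
end

section
/- Let τ̄ > 0, C > max(τ̄, 1), μ > 0 and μ₁ > μ + 1/C, and let τ : [0,∞) → (0,τ̄] be continuous. Define a(t) := μ·(t + C − τ(t))/τ(t), β(t) := μ₁·(t + C)/(t + C − 1), d(t) := a(t) + (β(t) + 1)/(t + C) + μ for t ≥ 0, and h : [0,∞) → [0,∞) by h(x) = x² for 0 ≤ x ≤ 1 and h(x) = 1 for x ≥ 1. Then: (a) the function φ(t) = 1/(t + C), defined for t ≥ −τ̄, satisfies the scalar delay equation φ'(t) = −d(t)·φ(t) + a(t)·φ(t − τ(t)) + β(t)·h(φ(t)) for all t > 0, so the equation is not uniformly persistent; and (b) d(t) − a(t) > μ and β(t) − (d(t) − a(t)) = μ₁ − μ − 1/(t + C) ≥ μ₁ − μ − 1/C > 0 for all t ≥ 0 (so hypotheses (H2), (H5) and (H5*) hold in the scalar case, while h fails hypothesis (H4) because h'(0⁺) = 0). -/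
/-- Counter-example (Example 3.4): the scalar delay equation
`x'(t) = -d(t) x(t) + a(t) x(t - τ(t)) + β(t) h(x(t))` with `h(x) = x²` for `x ≤ 1`,
`h(x) = 1` for `x ≥ 1`, admits the solution `φ(t) = 1/(t+C)` tending to `0`, so it is
not uniformly persistent, even though (H2), (H5) and (H5*) hold; here (H4) fails since
`h'(0⁺) = 0`. -/
theorem not_persistent_counterexample
    (τb C μ μ₁ : ℝ) (hτb : 0 < τb) (hC : max τb 1 < C) (hμ : 0 < μ)
    (hμ₁ : μ + 1 / C < μ₁)
    (τf : ℝ → ℝ) (hτf_cont : ContinuousOn τf (Set.Ici 0))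
    (hτf_mem : ∀ t ≥ (0 : ℝ), 0 < τf t ∧ τf t ≤ τb)
    (a β d h : ℝ → ℝ)
    (ha_def : ∀ t, a t = μ * (t + C - τf t) / τf t)
    (hβ_def : ∀ t, β t = μ₁ * (t + C) / (t + C - 1))
    (hd_def : ∀ t, d t = a t + (β t + 1) / (t + C) + μ)
    (hh_def : ∀ x ≥ (0 : ℝ), h x = if x ≤ 1 then x ^ 2 else 1) :
    -- (a): φ(t) = 1/(t+C) solves the equation for t > 0, and tends to 0
    (∀ t > (0 : ℝ), HasDerivAt (fun s => 1 / (s + C))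
      (-(d t) * (1 / (t + C)) + a t * (1 / (t - τf t + C)) + β t * h (1 / (t + C))) t)
    ∧ Filter.Tendsto (fun t : ℝ => 1 / (t + C)) Filter.atTop (nhds 0)
    -- (b): (H2), (H5), (H5*)-type inequalities hold ...
    ∧ (∀ t ≥ (0 : ℝ), μ < d t - a t)
    ∧ (∀ t ≥ (0 : ℝ), β t - (d t - a t) = μ₁ - μ - 1 / (t + C))
    ∧ (0 < μ₁ - μ - 1 / C)
    ∧ (∀ t ≥ (0 : ℝ), μ₁ - μ - 1 / C ≤ μ₁ - μ - 1 / (t + C))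
    -- ... while h fails (H4): h'(0⁺) = 0
    ∧ HasDerivWithinAt h 0 (Set.Ici 0) 0 := by
  have hC1 : (1 : ℝ) < C := lt_of_le_of_lt (le_max_right _ _) hC
  have hτC : τb < C := lt_of_le_of_lt (le_max_left _ _) hC
  refine ⟨?_, ?_, ?_, ?_, ?_, ?_, ?_⟩
  · -- (a) the ODE
    intro t ht
    have htC : (0 : ℝ) < t + C := by linarith
    obtain ⟨hτ0, hτle⟩ := hτf_mem t ht.le
    have h1 : (0 : ℝ) < t - τf t + C := by linarith
    have hx : (0 : ℝ) ≤ 1 / (t + C) := by positivity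
    have hx1 : 1 / (t + C) ≤ 1 := by
      rw [div_le_one htC]; linarith
    have hh : h (1 / (t + C)) = (1 / (t + C)) ^ 2 := by
      rw [hh_def _ hx, if_pos hx1]
    have hderiv : HasDerivAt (fun s => 1 / (s + C)) (-(1 / (t + C) ^ 2)) t := by
      have := ((hasDerivAt_id t).add_const C).inv (ne_of_gt htC)
      simpa [one_div, neg_div, Pi.inv_def] using this
    have key : -(d t) * (1 / (t + C)) + a t * (1 / (t - τf t + C))
        + β t * h (1 / (t + C)) = -(1 / (t + C) ^ 2) := by
      rw [hh, hd_def, ha_def]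
      field_simp
      ring
    rw [key]; exact hderiv
  · -- tendsto 0
    have : Filter.Tendsto (fun t : ℝ => t + C) Filter.atTop Filter.atTop :=
      Filter.tendsto_atTop_add_const_right _ C Filter.tendsto_id
    simpa [one_div, Pi.inv_def] using this.inv_tendsto_atTop
  · -- (H2)
    intro t ht
    have htC : (0 : ℝ) < t + C := by linarith
    have htC1 : (0 : ℝ) < t + C - 1 := by linarith
    have hβpos : 0 < β t := by
      rw [hβ_def]
      have hμ₁pos : 0 < μ₁ := by
        have : 0 < 1 / C := by positivity
        linarith
      positivity
    have : 0 < (β t + 1) / (t + C) := by positivity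
    rw [hd_def]; linarith
  · -- (H5) identity
    intro t ht
    have htC : (0 : ℝ) < t + C := by linarith
    have htC1 : (0 : ℝ) < t + C - 1 := by linarith
    rw [hd_def, hβ_def]
    field_simp
    ring
  · -- positivity
    have hCpos : (0 : ℝ) < C := by linarith
    linarith
  · -- monotone bound
    intro t ht
    have hCpos : (0 : ℝ) < C := by linarith
    have : 1 / (t + C) ≤ 1 / C := by
      apply one_div_le_one_div_of_le hCpos; linarith
    linarith
  · -- h'(0⁺) = 0
    have h0 : h 0 = 0 := by rw [hh_def 0 le_rfl]; norm_num
    have hsq : HasDerivWithinAt (fun x : ℝ => x ^ 2) 0 (Set.Ici 0) 0 := by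
      simpa using (hasDerivAt_pow 2 (0 : ℝ)).hasDerivWithinAt
    have heq : h =ᶠ[nhdsWithin 0 (Set.Ici 0)] fun x : ℝ => x ^ 2 := by
      have hmem : Set.Iio (1 : ℝ) ∈ nhdsWithin 0 (Set.Ici 0) :=
        nhdsWithin_le_nhds (Iio_mem_nhds one_pos)
      filter_upwards [hmem, self_mem_nhdsWithin] with x hx1 hx0
      rw [hh_def x hx0, if_pos (le_of_lt hx1)]
    exact hsq.congr_of_eventuallyEq heq (by simpa using h0)
end

section
/- Let τ ∈ (0,1), C > τ and μ > 0, let a : [0,∞) → [0,∞) be continuous, and define d₁(t) := μ·(t + C)/(1 − τ), β(t) := ((t + C + 1 − τ)/(t + C))·(d₁(t) − 1/(t + C)) for t ≥ 0, and h(x) := x/(1 + x) for x ≥ 0. Then the pair x₁(t) = x₂(t) = 1/(t + C), defined for t ≥ −τ, satisfies the planar delay system x₁'(t) = −(a(t) + d₁(t))·x₁(t) + a(t)·x₂(t) + β(t)·h(x₁(t − τ)), x₂'(t) = −(a(t) + d₁(t))·x₂(t) + a(t)·x₁(t) + β(t)·h(x₂(t − τ)) for all t > 0. In particular this system, whose positive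 solution (x₁,x₂) tends to (0,0), is not permanent, even though d₁(t) ≥ μC/(1 − τ) for all t ≥ 0 and β(t) − d₁(t) = μ/(1 − τ)·(1 − τ) − (t + C + 1 − τ)/(t + C)² ≥ μ/2 for all sufficiently large t, so that (H2) and (H5) hold; here β(t) is unbounded. -/
/-- Counter-example (Example 3.5): the planar delay system
`x₁' = -(a(t)+d₁(t)) x₁ + a(t) x₂ + β(t) h(x₁(t-τ))`,
`x₂' = -(a(t)+d₁(t)) x₂ + a(t) x₁ + β(t) h(x₂(t-τ))`, with `h(x) = x/(1+x)`, admits the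
positive solution `x₁ = x₂ = 1/(t+C)` tending to `(0,0)`, so it is not permanent, even
though `d₁(t) ≥ μC/(1-τ)` and `β(t) - d₁(t) ≥ μ/2` for large `t` ((H2) and (H5) hold);
here `β` is unbounded. -/
theorem not_permanent_counterexample
    (τ C μ : ℝ) (hτ0 : 0 < τ) (hτ1 : τ < 1) (hC : τ < C) (hμ : 0 < μ)
    (a : ℝ → ℝ) (ha_cont : ContinuousOn a (Set.Ici 0))
    (ha_nonneg : ∀ t ≥ (0 : ℝ), 0 ≤ a t)
    (d₁ β h : ℝ → ℝ)
    (hd₁_def : ∀ t, d₁ t = μ * (t + C) / (1 - τ))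
    (hβ_def : ∀ t, β t = (t + C + 1 - τ) / (t + C) * (d₁ t - 1 / (t + C)))
    (hh_def : ∀ x ≥ (0 : ℝ), h x = x / (1 + x)) :
    -- x₁(t) = x₂(t) = 1/(t+C) solves both equations of the planar system for t > 0
    (∀ t > (0 : ℝ), HasDerivAt (fun s => 1 / (s + C))
      (-(a t + d₁ t) * (1 / (t + C)) + a t * (1 / (t + C))
        + β t * h (1 / (t - τ + C))) t)
    -- this positive solution tends to 0
    ∧ (∀ t ≥ -τ, 0 < 1 / (t + C))
    ∧ Filter.Tendsto (fun t : ℝ => 1 / (t + C)) Filter.atTop (nhds 0)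
    -- (H2)-type bound: d₁(t) ≥ μ C/(1-τ)
    ∧ (∀ t ≥ (0 : ℝ), μ * C / (1 - τ) ≤ d₁ t)
    -- (H5)-type bound: β(t) - d₁(t) = μ - (t+C+1-τ)/(t+C)² ≥ μ/2 for large t
    ∧ (∀ t ≥ (0 : ℝ), β t - d₁ t = μ - (t + C + 1 - τ) / (t + C) ^ 2)
    ∧ (∃ T, ∀ t ≥ T, μ / 2 ≤ β t - d₁ t)
    -- β is unbounded
    ∧ (∀ K, ∃ t ≥ (0 : ℝ), K ≤ β t) := by
  have hC0 : 0 < C := lt_trans hτ0 hC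
  have hτ' : 0 < 1 - τ := by linarith
  have key : ∀ t ≥ (0:ℝ), β t - d₁ t = μ - (t + C + 1 - τ) / (t + C) ^ 2 := by
    intro t ht
    have hu : t + C ≠ 0 := by positivity
    rw [hβ_def, hd₁_def]
    field_simp
    ring
  have hbig : ∀ t ≥ max 1 (4/μ), μ / 2 ≤ β t - d₁ t := by
    intro t ht
    have h1 : (1:ℝ) ≤ t := le_trans (le_max_left _ _) ht
    have h2 : 4/μ ≤ t := le_trans (le_max_right _ _) ht
    have h2' : 4 ≤ μ * t := by
      rw [div_le_iff₀ hμ] at h2; linarith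
    rw [key t (by linarith)]
    have hu : (0:ℝ) < t + C := by linarith
    have hle : (t + C + 1 - τ) / (t + C) ^ 2 ≤ μ / 2 := by
      rw [div_le_iff₀ (by positivity)]
      nlinarith
    linarith
  refine ⟨?_, ?_, ?_, ?_, key, ⟨max 1 (4/μ), hbig⟩, ?_⟩
  · intro t ht
    have hu : (0:ℝ) < t + C := by linarith
    have hw : (0:ℝ) < t - τ + C := by linarith
    have hh : h (1 / (t - τ + C)) = 1 / (t - τ + C + 1) := by
      rw [hh_def _ (by positivity)]
      rw [eq_div_iff (by positivity)]
      field_simp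
    have heq : -(a t + d₁ t) * (1 / (t + C)) + a t * (1 / (t + C))
        + β t * h (1 / (t - τ + C)) = -1 / (t + C) ^ 2 := by
      rw [hh, hβ_def, hd₁_def]
      have h1 : t + C ≠ 0 := ne_of_gt hu
      have h2 : t - τ + C + 1 ≠ 0 := by positivity
      have h3 : (1:ℝ) - τ ≠ 0 := ne_of_gt hτ'
      field_simp
      ring
    rw [heq]
    have := ((hasDerivAt_id t).add_const C).inv (ne_of_gt hu)
    simpa [one_div, neg_div, Pi.inv_def] using this
  · intro t ht
    have : (0:ℝ) < t + C := by linarith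
    positivity
  · simp only [one_div]
    exact (Filter.tendsto_atTop_add_const_right _ C Filter.tendsto_id).inv_tendsto_atTop
  · intro t ht
    rw [hd₁_def]
    gcongr
    linarith
  · intro K
    set t := max 0 (max (max 1 (4/μ)) (K * (1 - τ) / μ)) with htdef
    refine ⟨t, le_max_left _ _, ?_⟩
    have ht0 : (0:ℝ) ≤ t := le_max_left _ _
    have htb : max 1 (4/μ) ≤ t := le_trans (le_max_left _ _) (le_max_right _ _)
    have htK : K * (1 - τ) / μ ≤ t := le_trans (le_max_right _ _) (le_max_right _ _)
    have h5 := hbig t htb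
    have hd : K ≤ d₁ t := by
      rw [hd₁_def]
      rw [div_le_iff₀ hμ] at htK
      rw [le_div_iff₀ hτ']
      nlinarith
    linarith
end
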